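/- arXiv:2501.08067 — 3 statements merged into one kernel-verified Lean document; each statement's English description precedes it below -/
import Mathlib

section
/- Under unconfoundedness in the source domain ((Y(1),Y(0)) ⟂ A | X, G=1), overlap (0 < P(A=1|X,G=1) < 1), and transportability ((Y(1),Y(0)) ⟂ G | X with 0 < P(G=1|X) < 1), the conditional average treatment effect in the target domain τ(X) = E[Y(1) − Y(0) | X, G=0] equals μ₁(X) − μ₀(X), where μₐ(X) = E[Y | X, A=a, G=1] and Y = AY(1) + (1−A)Y(0). -/
open MeasureTheory Filter Topology

section CateAux

variable {Ω : Type*} [mΩ : MeasurableSpace Ω] {ℙ : Measure Ω} [IsProbabilityMeasure ℙ]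
  {𝓧 : Type*} [m𝓧 : MeasurableSpace 𝓧] {X : Ω → 𝓧}

/-- Bounded a.e.-strongly-measurable functions are integrable on a finite measure space. -/
lemma cate_ibd {f : Ω → ℝ} (hf : AEStronglyMeasurable f ℙ) (C : ℝ) (h : ∀ ω, |f ω| ≤ C) :
    Integrable f ℙ :=
  (integrable_const C).mono' hf (Eventually.of_forall fun ω => by
    simpa [Real.norm_eq_abs] using h ω)

/-- If two integrable functions have the same integral on every `X`-preimage set, then
so do their products with a bounded measurable function of `X`. -/
lemma cate_pull (hX : Measurable X) {u v : Ω → ℝ} (hu : Integrable u ℙ) (hv : Integrable v ℙ)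
    (h : ∀ B : Set 𝓧, MeasurableSet B → ∫ ω in X ⁻¹' B, u ω ∂ℙ = ∫ ω in X ⁻¹' B, v ω ∂ℙ)
    {g : 𝓧 → ℝ} (hg : Measurable g) {C : ℝ} (hgC : ∀ x, |g x| ≤ C) :
    ∀ B : Set 𝓧, MeasurableSet B →
      ∫ ω in X ⁻¹' B, g (X ω) * u ω ∂ℙ = ∫ ω in X ⁻¹' B, g (X ω) * v ω ∂ℙ := by
  intro B hB
  have hm : MeasurableSpace.comap X m𝓧 ≤ mΩ := hX.comap_le
  have hXm : Measurable[MeasurableSpace.comap X m𝓧] X := Measurable.of_comap_le le_rfl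
  have hgXm : StronglyMeasurable[MeasurableSpace.comap X m𝓧] fun ω => g (X ω) :=
    (hg.comp hXm).stronglyMeasurable
  have hgX : Measurable fun ω => g (X ω) := hg.comp hX
  have hgXb : AEStronglyMeasurable (fun ω => g (X ω)) ℙ := hgX.aestronglyMeasurable
  have hbd : ∃ C', ∀ ω, ‖g (X ω)‖ ≤ C' :=
    ⟨C, fun ω => by simpa [Real.norm_eq_abs] using hgC (X ω)⟩
  have hw : Integrable (fun ω => u ω - v ω) ℙ := hu.sub hv
  have hzero : (0 : Ω → ℝ) =ᵐ[ℙ] ℙ[fun ω => u ω - v ω|MeasurableSpace.comap X m𝓧] := by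
    refine ae_eq_condExp_of_forall_setIntegral_eq hm hw
      (fun s _ _ => (integrable_zero _ _ _).integrableOn) (fun s hs _ => ?_)
      (StronglyMeasurable.aestronglyMeasurable stronglyMeasurable_const)
    obtain ⟨B', hB', rfl⟩ := hs
    simp only [Pi.zero_apply, integral_zero]
    rw [integral_sub hu.integrableOn hv.integrableOn, h B' hB', sub_self]
  have hgw : Integrable (fun ω => g (X ω) * (u ω - v ω)) ℙ := hw.bdd_mul hgXb (Eventually.of_forall hbd.choose_spec)
  have hmul : ℙ[(fun ω => g (X ω)) * fun ω => u ω - v ω|MeasurableSpace.comap X m𝓧]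
      =ᵐ[ℙ] (fun ω => g (X ω)) * ℙ[fun ω => u ω - v ω|MeasurableSpace.comap X m𝓧] :=
    condExp_stronglyMeasurable_mul_of_bound hm hgXm hw C
      (Eventually.of_forall fun ω => by simpa [Real.norm_eq_abs] using hgC (X ω))
  have hBm : MeasurableSet[MeasurableSpace.comap X m𝓧] (X ⁻¹' B) := ⟨B, hB, rfl⟩
  have key : ∫ ω in X ⁻¹' B, g (X ω) * (u ω - v ω) ∂ℙ = 0 := by
    have h1 : ∫ ω in X ⁻¹' B, g (X ω) * (u ω - v ω) ∂ℙ
        = ∫ ω in X ⁻¹' B,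
            (ℙ[(fun ω => g (X ω)) * fun ω => u ω - v ω|MeasurableSpace.comap X m𝓧]) ω ∂ℙ :=
      (setIntegral_condExp hm hgw hBm).symm
    rw [h1]
    have h2 : ℙ[(fun ω => g (X ω)) * fun ω => u ω - v ω|MeasurableSpace.comap X m𝓧]
        =ᵐ[ℙ] 0 := by
      refine hmul.trans ?_
      filter_upwards [hzero.symm] with ω hω
      simp [Pi.mul_apply, hω, Pi.zero_apply]
    rw [setIntegral_congr_ae (hm _ hBm) (h2.mono fun ω hω _ => hω)]
    simp
  have hsub : ∫ ω in X ⁻¹' B, g (X ω) * (u ω - v ω) ∂ℙ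
      = (∫ ω in X ⁻¹' B, g (X ω) * u ω ∂ℙ) - ∫ ω in X ⁻¹' B, g (X ω) * v ω ∂ℙ := by
    rw [← integral_sub (hu.bdd_mul hgXb (Eventually.of_forall hbd.choose_spec)).integrableOn
      (hv.bdd_mul hgXb (Eventually.of_forall hbd.choose_spec)).integrableOn]
    congr 1; funext ω; ring
  rw [hsub] at key
  linarith

/-- Truncation extension: an identity valid for all bounded measurable `f (Y1, Y0)` extends
to integrable `φ (Y1, Y0)`. -/
lemma cate_trunc {Y1 Y0 ρ σ' : Ω → ℝ}
    (hY1m : AEMeasurable Y1 ℙ) (hY0m : AEMeasurable Y0 ℙ)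
    (hρ : Measurable ρ) (hσ : Measurable σ')
    (hρb : ∀ ω, |ρ ω| ≤ 1) (hσb : ∀ ω, |σ' ω| ≤ 1)
    (H : ∀ f : ℝ × ℝ → ℝ, Measurable f → (∃ C, ∀ p, |f p| ≤ C) →
      ∀ B : Set 𝓧, MeasurableSet B →
        ∫ ω in X ⁻¹' B, ρ ω * f (Y1 ω, Y0 ω) ∂ℙ = ∫ ω in X ⁻¹' B, σ' ω * f (Y1 ω, Y0 ω) ∂ℙ)
    {φ : ℝ × ℝ → ℝ} (hφ : Measurable φ)
    (hint : Integrable (fun ω => φ (Y1 ω, Y0 ω)) ℙ) :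
    ∀ B : Set 𝓧, MeasurableSet B →
      ∫ ω in X ⁻¹' B, ρ ω * φ (Y1 ω, Y0 ω) ∂ℙ = ∫ ω in X ⁻¹' B, σ' ω * φ (Y1 ω, Y0 ω) ∂ℙ := by
  intro B hB
  set fk : ℕ → ℝ × ℝ → ℝ := fun k p => max (-(k : ℝ)) (min (φ p) k) with hfk
  have hfkm : ∀ k, Measurable (fk k) := fun k =>
    measurable_const.max ((hφ.min measurable_const))
  have hfkb : ∀ k, ∀ p, |fk k p| ≤ (k : ℝ) := by
    intro k p
    rw [abs_le]
    constructor
    · exact le_max_left _ _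
    · exact max_le (le_trans (neg_nonpos.mpr (Nat.cast_nonneg _)) (Nat.cast_nonneg _))
        (min_le_right _ _)
  have hfkd : ∀ k p, |fk k p| ≤ |φ p| := by
    intro k p
    rw [abs_le]
    constructor
    · exact le_max_of_le_right
        (le_min (neg_abs_le _) ((neg_nonpos.mpr (abs_nonneg _)).trans (Nat.cast_nonneg _)))
    · exact max_le (le_trans (neg_nonpos.mpr (Nat.cast_nonneg _)) (abs_nonneg _))
        (le_trans (min_le_left _ _) (le_abs_self _))
  have hfkt : ∀ p : ℝ × ℝ, Tendsto (fun k => fk k p) atTop (𝓝 (φ p)) := by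
    intro p
    refine tendsto_atTop_of_eventually_const (i₀ := ⌈|φ p|⌉₊) fun k hk => ?_
    have hk' : |φ p| ≤ (k : ℝ) := le_trans (Nat.le_ceil _) (by exact_mod_cast hk)
    rw [hfk]
    simp only
    rw [min_eq_left (le_trans (le_abs_self _) hk'),
      max_eq_right (le_trans (neg_le_neg hk') (neg_abs_le _))]
  have hYY : AEMeasurable (fun ω => (Y1 ω, Y0 ω)) ℙ := hY1m.prodMk hY0m
  have hdom : ∀ ξ : Ω → ℝ, Measurable ξ → (∀ ω, |ξ ω| ≤ 1) →
      Tendsto (fun k => ∫ ω in X ⁻¹' B, ξ ω * fk k (Y1 ω, Y0 ω) ∂ℙ) atTop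
        (𝓝 (∫ ω in X ⁻¹' B, ξ ω * φ (Y1 ω, Y0 ω) ∂ℙ)) := by
    intro ξ hξ hξb
    refine tendsto_integral_of_dominated_convergence (fun ω => |φ (Y1 ω, Y0 ω)|)
      (fun k => ?_) hint.abs.restrict (fun k => ?_) ?_
    · exact (hξ.aemeasurable.mul ((hfkm k).comp_aemeasurable hYY)).aestronglyMeasurable.restrict
    · refine Eventually.of_forall fun ω => ?_
      rw [Real.norm_eq_abs, abs_mul]
      calc |ξ ω| * |fk k (Y1 ω, Y0 ω)| ≤ 1 * |φ (Y1 ω, Y0 ω)| :=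
            mul_le_mul (hξb ω) (hfkd k _) (abs_nonneg _) zero_le_one
        _ = |φ (Y1 ω, Y0 ω)| := one_mul _
    · exact Eventually.of_forall fun ω => (hfkt _).const_mul _
  have heq : (fun k => ∫ ω in X ⁻¹' B, ρ ω * fk k (Y1 ω, Y0 ω) ∂ℙ)
      = fun k => ∫ ω in X ⁻¹' B, σ' ω * fk k (Y1 ω, Y0 ω) ∂ℙ := by
    funext k
    exact H (fk k) (hfkm k) ⟨k, hfkb k⟩ B hB
  have t1 := hdom ρ hρ hρb
  have t2 := hdom σ' hσ hσb
  rw [heq] at t1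
  exact tendsto_nhds_unique t1 t2

/-- A function of `X` whose integral vanishes on every `X`-preimage set vanishes a.e. -/
lemma cate_zero (hX : Measurable X) {φ : 𝓧 → ℝ} (hφ : Measurable φ)
    (hint : Integrable (fun ω => φ (X ω)) ℙ)
    (h : ∀ B : Set 𝓧, MeasurableSet B → ∫ ω in X ⁻¹' B, φ (X ω) ∂ℙ = 0) :
    ∀ᵐ ω ∂ℙ, φ (X ω) = 0 := by
  have hν : Integrable φ (ℙ.map X) :=
    (integrable_map_measure hφ.aestronglyMeasurable hX.aemeasurable).mpr hint
  have hz : φ =ᵐ[ℙ.map X] 0 := by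
    refine hν.ae_eq_zero_of_forall_setIntegral_eq_zero fun s hs _ => ?_
    rw [setIntegral_map hs hφ.aestronglyMeasurable hX.aemeasurable]
    exact h s hs
  have hz' : ∀ᵐ x ∂ℙ.map X, φ x = 0 := hz
  exact (ae_map_iff hX.aemeasurable (hφ (measurableSet_singleton (0 : ℝ)))).mp hz'

end CateAux

/-- Under unconfoundedness, overlap and transportability, the target-domain
CATE `τ(X) = E[Y(1) − Y(0) | X, G=0]` equals `μ₁(X) − μ₀(X)` almost surely, where
`μₐ(X) = E[Y | X, A=a, G=1]`. -/
theorem cate_transportability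
    {Ω : Type*} [MeasurableSpace Ω] (ℙ : Measure Ω) [IsProbabilityMeasure ℙ]
    {𝓧 : Type*} [MeasurableSpace 𝓧]
    (X : Ω → 𝓧) (A G Y1 Y0 : Ω → ℝ)
    (hX : Measurable X) (hA : Measurable A) (hG : Measurable G)
    (hY1 : Integrable Y1 ℙ) (hY0 : Integrable Y0 ℙ)
    (hAbin : ∀ ω, A ω = 0 ∨ A ω = 1) (hGbin : ∀ ω, G ω = 0 ∨ G ω = 1)
    -- consistency: observed outcome
    (Y : Ω → ℝ) (hYdef : ∀ ω, Y ω = A ω * Y1 ω + (1 - A ω) * Y0 ω)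
    (q : ℝ) (hq : q = ∫ ω, G ω ∂ℙ) (hq0 : 0 < q) (hq1 : q < 1)
    (e1 s μ1 μ0 : 𝓧 → ℝ)
    (he1meas : Measurable e1) (hsmeas : Measurable s)
    (hμ1meas : Measurable μ1) (hμ0meas : Measurable μ0)
    -- overlap: 0 < e₁(X) < 1
    (hover : ∀ x, 0 < e1 x ∧ e1 x < 1)
    -- positivity of the sampling score: 0 < s(X) < 1
    (hspos : ∀ x, 0 < s x ∧ s x < 1)
    -- e₁ is a version of P(A=1 | X, G=1)
    (he1ver : ∀ B : Set 𝓧, MeasurableSet B →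
      ∫ ω in X ⁻¹' B, G ω * A ω ∂ℙ = ∫ ω in X ⁻¹' B, G ω * e1 (X ω) ∂ℙ)
    -- s is a version of P(G=1 | X)
    (hsver : ∀ B : Set 𝓧, MeasurableSet B →
      ∫ ω in X ⁻¹' B, G ω ∂ℙ = ∫ ω in X ⁻¹' B, s (X ω) ∂ℙ)
    -- μ₁ is a version of E[Y | X, A=1, G=1]
    (hμ1ver : ∀ B : Set 𝓧, MeasurableSet B →
      ∫ ω in X ⁻¹' B, G ω * A ω * Y ω ∂ℙ = ∫ ω in X ⁻¹' B, G ω * A ω * μ1 (X ω) ∂ℙ)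
    -- μ₀ is a version of E[Y | X, A=0, G=1]
    (hμ0ver : ∀ B : Set 𝓧, MeasurableSet B →
      ∫ ω in X ⁻¹' B, G ω * (1 - A ω) * Y ω ∂ℙ
        = ∫ ω in X ⁻¹' B, G ω * (1 - A ω) * μ0 (X ω) ∂ℙ)
    -- unconfoundedness: (Y(1), Y(0)) ⟂ A | X, G=1
    (hunconf : ∀ f : ℝ × ℝ → ℝ, Measurable f → (∃ C, ∀ p, |f p| ≤ C) →
      ∀ B : Set 𝓧, MeasurableSet B →
      ∫ ω in X ⁻¹' B, G ω * A ω * f (Y1 ω, Y0 ω) ∂ℙ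
        = ∫ ω in X ⁻¹' B, G ω * e1 (X ω) * f (Y1 ω, Y0 ω) ∂ℙ)
    -- transportability: (Y(1), Y(0)) ⟂ G | X
    (htrans : ∀ f : ℝ × ℝ → ℝ, Measurable f → (∃ C, ∀ p, |f p| ≤ C) →
      ∀ B : Set 𝓧, MeasurableSet B →
      ∫ ω in X ⁻¹' B, G ω * f (Y1 ω, Y0 ω) ∂ℙ
        = ∫ ω in X ⁻¹' B, s (X ω) * f (Y1 ω, Y0 ω) ∂ℙ)
    -- τ is a version of E[Y(1) − Y(0) | X, G=0]
    (τ : 𝓧 → ℝ) (hτmeas : Measurable τ)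
    (hτver : ∀ B : Set 𝓧, MeasurableSet B →
      ∫ ω in X ⁻¹' B, (1 - G ω) * (Y1 ω - Y0 ω) ∂ℙ
        = ∫ ω in X ⁻¹' B, (1 - G ω) * τ (X ω) ∂ℙ) :
    ∀ᵐ ω ∂ℙ, τ (X ω) = μ1 (X ω) - μ0 (X ω) := by
  classical
  -- pointwise bounds
  have hGb : ∀ ω, |G ω| ≤ 1 := fun ω => by rcases hGbin ω with h | h <;> simp [h]
  have hAb : ∀ ω, |A ω| ≤ 1 := fun ω => by rcases hAbin ω with h | h <;> simp [h]
  have h1Ab : ∀ ω, |1 - A ω| ≤ 1 := fun ω => by rcases hAbin ω with h | h <;> simp [h]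
  have h1Gb : ∀ ω, |1 - G ω| ≤ 1 := fun ω => by rcases hGbin ω with h | h <;> simp [h]
  have he1b : ∀ x, |e1 x| ≤ 1 := fun x =>
    abs_le.mpr ⟨by linarith [(hover x).1], (hover x).2.le⟩
  have h1e1b : ∀ x, |1 - e1 x| ≤ 1 := fun x =>
    abs_le.mpr ⟨by linarith [(hover x).2], by linarith [(hover x).1]⟩
  have hsb : ∀ x, |s x| ≤ 1 := fun x =>
    abs_le.mpr ⟨by linarith [(hspos x).1], (hspos x).2.le⟩
  have h1sb : ∀ x, |1 - s x| ≤ 1 := fun x =>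
    abs_le.mpr ⟨by linarith [(hspos x).2], by linarith [(hspos x).1]⟩
  have hmul1 : ∀ {a b C : ℝ}, |a| ≤ 1 → |b| ≤ C → |a * b| ≤ C := by
    intro a b C ha hb
    rw [abs_mul]
    nlinarith [abs_nonneg a, abs_nonneg b]
  have ibm : ∀ {b f : Ω → ℝ}, Measurable b → (∀ ω, |b ω| ≤ 1) → Integrable f ℙ →
      Integrable (fun ω => b ω * f ω) ℙ := by
    intro b f hb hC hf
    exact hf.bdd_mul hb.aestronglyMeasurable (Eventually.of_forall fun ω => by
      simpa [Real.norm_eq_abs] using hC ω)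
  have icongr : ∀ {f g : Ω → ℝ} {S : Set Ω}, (∀ ω, f ω = g ω) →
      ∫ ω in S, f ω ∂ℙ = ∫ ω in S, g ω ∂ℙ := fun h =>
    integral_congr_ae (Eventually.of_forall fun ω => h ω)
  -- measurable compositions
  have he1X : Measurable fun ω => e1 (X ω) := he1meas.comp hX
  have hsX : Measurable fun ω => s (X ω) := hsmeas.comp hX
  have hμ1X : Measurable fun ω => μ1 (X ω) := hμ1meas.comp hX
  have hμ0X : Measurable fun ω => μ0 (X ω) := hμ0meas.comp hX
  have hτX : Measurable fun ω => τ (X ω) := hτmeas.comp hX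
  -- consistency pointwise
  have hGAY : ∀ ω, G ω * A ω * Y ω = G ω * A ω * Y1 ω := fun ω => by
    rcases hAbin ω with h | h <;> simp [hYdef ω, h]
  have hGA0Y : ∀ ω, G ω * (1 - A ω) * Y ω = G ω * (1 - A ω) * Y0 ω := fun ω => by
    rcases hAbin ω with h | h <;> simp [hYdef ω, h]
  -- basic integrabilities
  have iGA : Integrable (fun ω => G ω * A ω) ℙ :=
    cate_ibd (hG.mul hA).aestronglyMeasurable 1 fun ω => hmul1 (hGb ω) (hAb ω)
  have iG : Integrable G ℙ := cate_ibd hG.aestronglyMeasurable 1 hGb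
  have iGe1 : Integrable (fun ω => G ω * e1 (X ω)) ℙ :=
    cate_ibd (hG.mul he1X).aestronglyMeasurable 1 fun ω => hmul1 (hGb ω) (he1b (X ω))
  have isX : Integrable (fun ω => s (X ω)) ℙ :=
    cate_ibd hsX.aestronglyMeasurable 1 fun ω => hsb (X ω)
  have iGAY1 : Integrable (fun ω => G ω * A ω * Y1 ω) ℙ :=
    ibm (hG.mul hA) (fun ω => hmul1 (hGb ω) (hAb ω)) hY1
  have iGe1Y1 : Integrable (fun ω => G ω * e1 (X ω) * Y1 ω) ℙ :=
    ibm (hG.mul he1X) (fun ω => hmul1 (hGb ω) (he1b (X ω))) hY1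
  have iGAY0 : Integrable (fun ω => G ω * A ω * Y0 ω) ℙ :=
    ibm (hG.mul hA) (fun ω => hmul1 (hGb ω) (hAb ω)) hY0
  have iGe1Y0 : Integrable (fun ω => G ω * e1 (X ω) * Y0 ω) ℙ :=
    ibm (hG.mul he1X) (fun ω => hmul1 (hGb ω) (he1b (X ω))) hY0
  have iGY0 : Integrable (fun ω => G ω * Y0 ω) ℙ := ibm hG hGb hY0
  have iY10 : Integrable (fun ω => Y1 ω - Y0 ω) ℙ := hY1.sub hY0
  have iGY10 : Integrable (fun ω => G ω * (Y1 ω - Y0 ω)) ℙ := ibm hG hGb iY10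
  have isY10 : Integrable (fun ω => s (X ω) * (Y1 ω - Y0 ω)) ℙ :=
    ibm hsX (fun ω => hsb (X ω)) iY10
  have iGA0 : Integrable (fun ω => G ω * (1 - A ω)) ℙ :=
    cate_ibd (hG.mul (measurable_const.sub hA)).aestronglyMeasurable 1
      fun ω => hmul1 (hGb ω) (h1Ab ω)
  have iG1e1 : Integrable (fun ω => G ω * (1 - e1 (X ω))) ℙ :=
    cate_ibd (hG.mul (measurable_const.sub he1X)).aestronglyMeasurable 1
      fun ω => hmul1 (hGb ω) (h1e1b (X ω))
  have iGA0Y0 : Integrable (fun ω => G ω * (1 - A ω) * Y0 ω) ℙ :=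
    ibm (hG.mul (measurable_const.sub hA)) (fun ω => hmul1 (hGb ω) (h1Ab ω)) hY0
  have iG1e1Y0 : Integrable (fun ω => G ω * (1 - e1 (X ω)) * Y0 ω) ℙ :=
    ibm (hG.mul (measurable_const.sub he1X)) (fun ω => hmul1 (hGb ω) (h1e1b (X ω))) hY0
  -- truncation consequences
  have R2 : ∀ B : Set 𝓧, MeasurableSet B → ∫ ω in X ⁻¹' B, G ω * A ω * Y1 ω ∂ℙ
      = ∫ ω in X ⁻¹' B, G ω * e1 (X ω) * Y1 ω ∂ℙ := by
    have := cate_trunc (X := X) hY1.aemeasurable hY0.aemeasurable (hG.mul hA) (hG.mul he1X)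
      (fun ω => hmul1 (hGb ω) (hAb ω)) (fun ω => hmul1 (hGb ω) (he1b (X ω))) hunconf
      (φ := Prod.fst) measurable_fst hY1
    exact this
  have R2b : ∀ B : Set 𝓧, MeasurableSet B → ∫ ω in X ⁻¹' B, G ω * A ω * Y0 ω ∂ℙ
      = ∫ ω in X ⁻¹' B, G ω * e1 (X ω) * Y0 ω ∂ℙ := by
    have := cate_trunc (X := X) hY1.aemeasurable hY0.aemeasurable (hG.mul hA) (hG.mul he1X)
      (fun ω => hmul1 (hGb ω) (hAb ω)) (fun ω => hmul1 (hGb ω) (he1b (X ω))) hunconf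
      (φ := Prod.snd) measurable_snd hY0
    exact this
  have R4 : ∀ B : Set 𝓧, MeasurableSet B → ∫ ω in X ⁻¹' B, G ω * (Y1 ω - Y0 ω) ∂ℙ
      = ∫ ω in X ⁻¹' B, s (X ω) * (Y1 ω - Y0 ω) ∂ℙ := by
    have := cate_trunc (X := X) hY1.aemeasurable hY0.aemeasurable hG hsX
      hGb (fun ω => hsb (X ω)) htrans
      (φ := fun p => p.1 - p.2) (measurable_fst.sub measurable_snd) iY10
    exact this
  -- derived relation for arm 0
  have RA : ∀ B : Set 𝓧, MeasurableSet B → ∫ ω in X ⁻¹' B, G ω * (1 - A ω) ∂ℙ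
      = ∫ ω in X ⁻¹' B, G ω * (1 - e1 (X ω)) ∂ℙ := by
    intro B hB
    calc ∫ ω in X ⁻¹' B, G ω * (1 - A ω) ∂ℙ
        = ∫ ω in X ⁻¹' B, (G ω - G ω * A ω) ∂ℙ := icongr fun ω => by ring
      _ = (∫ ω in X ⁻¹' B, G ω ∂ℙ) - ∫ ω in X ⁻¹' B, G ω * A ω ∂ℙ :=
          integral_sub iG.integrableOn iGA.integrableOn
      _ = (∫ ω in X ⁻¹' B, G ω ∂ℙ) - ∫ ω in X ⁻¹' B, G ω * e1 (X ω) ∂ℙ := by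
          rw [he1ver B hB]
      _ = ∫ ω in X ⁻¹' B, (G ω - G ω * e1 (X ω)) ∂ℙ :=
          (integral_sub iG.integrableOn iGe1.integrableOn).symm
      _ = ∫ ω in X ⁻¹' B, G ω * (1 - e1 (X ω)) ∂ℙ := icongr fun ω => by ring
  have R2b' : ∀ B : Set 𝓧, MeasurableSet B → ∫ ω in X ⁻¹' B, G ω * (1 - A ω) * Y0 ω ∂ℙ
      = ∫ ω in X ⁻¹' B, G ω * (1 - e1 (X ω)) * Y0 ω ∂ℙ := by
    intro B hB
    calc ∫ ω in X ⁻¹' B, G ω * (1 - A ω) * Y0 ω ∂ℙ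
        = ∫ ω in X ⁻¹' B, (G ω * Y0 ω - G ω * A ω * Y0 ω) ∂ℙ := icongr fun ω => by ring
      _ = (∫ ω in X ⁻¹' B, G ω * Y0 ω ∂ℙ) - ∫ ω in X ⁻¹' B, G ω * A ω * Y0 ω ∂ℙ :=
          integral_sub iGY0.integrableOn iGAY0.integrableOn
      _ = (∫ ω in X ⁻¹' B, G ω * Y0 ω ∂ℙ) - ∫ ω in X ⁻¹' B, G ω * e1 (X ω) * Y0 ω ∂ℙ := by
          rw [R2b B hB]
      _ = ∫ ω in X ⁻¹' B, (G ω * Y0 ω - G ω * e1 (X ω) * Y0 ω) ∂ℙ :=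
          (integral_sub iGY0.integrableOn iGe1Y0.integrableOn).symm
      _ = ∫ ω in X ⁻¹' B, G ω * (1 - e1 (X ω)) * Y0 ω ∂ℙ := icongr fun ω => by ring
  -- the localized argument
  have key : ∀ n : ℕ, ∀ᵐ ω ∂ℙ,
      (|τ (X ω)| ≤ (n : ℝ) + 1 ∧ |μ1 (X ω)| ≤ (n : ℝ) + 1 ∧ |μ0 (X ω)| ≤ (n : ℝ) + 1 ∧
        ((n : ℝ) + 1)⁻¹ ≤ e1 (X ω) ∧ e1 (X ω) ≤ 1 - ((n : ℝ) + 1)⁻¹ ∧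
        ((n : ℝ) + 1)⁻¹ ≤ s (X ω)) →
      τ (X ω) = μ1 (X ω) - μ0 (X ω) := by
    intro n
    set c : ℝ := (n : ℝ) + 1 with hcdef
    have hc : 0 < c := by positivity
    set T : Set 𝓧 := {x | |τ x| ≤ c ∧ |μ1 x| ≤ c ∧ |μ0 x| ≤ c ∧ c⁻¹ ≤ e1 x ∧
      e1 x ≤ 1 - c⁻¹ ∧ c⁻¹ ≤ s x} with hTdef
    have hT : MeasurableSet T := by
      rw [hTdef]
      simp only [Set.setOf_and]
      exact (measurableSet_le hτmeas.abs measurable_const).inter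
        ((measurableSet_le hμ1meas.abs measurable_const).inter
          ((measurableSet_le hμ0meas.abs measurable_const).inter
            ((measurableSet_le measurable_const he1meas).inter
              ((measurableSet_le he1meas measurable_const).inter
                (measurableSet_le measurable_const hsmeas)))))
    set χ : 𝓧 → ℝ := T.indicator 1 with hχdef
    have hχm : Measurable χ := measurable_const.indicator hT
    have hχX : Measurable fun ω => χ (X ω) := hχm.comp hX
    have hχ1 : ∀ x, x ∈ T → χ x = 1 := fun x hx => by
      rw [hχdef]; simp [Set.indicator_of_mem hx]
    have hχ0 : ∀ x, x ∉ T → χ x = 0 := fun x hx => by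
      rw [hχdef]; simp [Set.indicator_of_notMem hx]
    have hχb : ∀ x, |χ x| ≤ 1 := fun x => by
      by_cases hx : x ∈ T
      · simp [hχ1 x hx]
      · simp [hχ0 x hx]
    have hχXb : ∀ ω, |χ (X ω)| ≤ 1 := fun ω => hχb (X ω)
    -- bound helpers
    have hbd : ∀ (f : 𝓧 → ℝ) (Cf : ℝ), 0 ≤ Cf → (∀ x, x ∈ T → |f x| ≤ Cf) →
        ∀ x, |χ x * f x| ≤ Cf := by
      intro f Cf h0 hf x
      by_cases hx : x ∈ T
      · rw [hχ1 x hx, one_mul]; exact hf x hx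
      · rw [hχ0 x hx, zero_mul, abs_zero]; exact h0
    have hbdω : ∀ (u : Ω → ℝ) (Cf : ℝ), 0 ≤ Cf → (∀ ω, X ω ∈ T → |u ω| ≤ Cf) →
        ∀ ω, |χ (X ω) * u ω| ≤ Cf := by
      intro u Cf h0 hu ω
      by_cases hx : X ω ∈ T
      · rw [hχ1 _ hx, one_mul]; exact hu ω hx
      · rw [hχ0 _ hx, zero_mul, abs_zero]; exact h0
    -- indicator sandwich
    have ind : ∀ (B : Set 𝓧) (f : Ω → ℝ),
        ∫ ω in X ⁻¹' (B ∩ T), f ω ∂ℙ = ∫ ω in X ⁻¹' B, χ (X ω) * f ω ∂ℙ := by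
      intro B f
      rw [Set.preimage_inter, ← setIntegral_indicator (hX hT)]
      refine icongr fun ω => ?_
      by_cases hx : X ω ∈ T
      · simp [Set.indicator_of_mem, hx, hχ1 (X ω) hx]
      · simp [Set.indicator_of_notMem, hx, hχ0 (X ω) hx]
    -- bounds on T
    have hτT : ∀ x, x ∈ T → |τ x| ≤ c := fun x hx => hx.1
    have hμ1T : ∀ x, x ∈ T → |μ1 x| ≤ c := fun x hx => hx.2.1
    have hμ0T : ∀ x, x ∈ T → |μ0 x| ≤ c := fun x hx => hx.2.2.1
    have hμ10T : ∀ x, x ∈ T → |μ1 x - μ0 x| ≤ c + c := by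
      intro x hx
      have h1 := abs_le.mp (hμ1T x hx)
      have h2 := abs_le.mp (hμ0T x hx)
      exact abs_le.mpr ⟨by linarith, by linarith⟩
    have hψT : ∀ x, x ∈ T → |τ x - (μ1 x - μ0 x)| ≤ c + (c + c) := by
      intro x hx
      have h1 := abs_le.mp (hτT x hx)
      have h2 := abs_le.mp (hμ1T x hx)
      have h3 := abs_le.mp (hμ0T x hx)
      exact abs_le.mpr ⟨by linarith, by linarith⟩
    have he1invT : ∀ x, x ∈ T → |(e1 x)⁻¹| ≤ c := by
      intro x hx
      have h2 : (e1 x)⁻¹ ≤ (c⁻¹)⁻¹ := inv_anti₀ (by positivity) hx.2.2.2.1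
      rw [inv_inv] at h2
      rw [abs_of_nonneg (inv_nonneg.mpr (hover x).1.le)]
      exact h2
    have h1e1invT : ∀ x, x ∈ T → |(1 - e1 x)⁻¹| ≤ c := by
      intro x hx
      have h2 : (1 - e1 x)⁻¹ ≤ (c⁻¹)⁻¹ := inv_anti₀ (by positivity)
        (by linarith [hx.2.2.2.2.1] : c⁻¹ ≤ 1 - e1 x)
      rw [inv_inv] at h2
      have hp : (0:ℝ) < 1 - e1 x := by linarith [(hover x).2]
      rw [abs_of_nonneg (inv_nonneg.mpr hp.le)]
      exact h2
    have hsinvT : ∀ x, x ∈ T → |(s x)⁻¹| ≤ c := by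
      intro x hx
      have h2 : (s x)⁻¹ ≤ (c⁻¹)⁻¹ := inv_anti₀ (by positivity) hx.2.2.2.2.2
      rw [inv_inv] at h2
      rw [abs_of_nonneg (inv_nonneg.mpr (hspos x).1.le)]
      exact h2
    -- more integrabilities
    have iχGe1Y1 : Integrable (fun ω => χ (X ω) * (G ω * e1 (X ω) * Y1 ω)) ℙ :=
      ibm hχX hχXb iGe1Y1
    have iχGe1μ1 : Integrable (fun ω => χ (X ω) * (G ω * e1 (X ω) * μ1 (X ω))) ℙ :=
      cate_ibd (hχX.mul ((hG.mul he1X).mul hμ1X)).aestronglyMeasurable c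
        (hbdω _ c hc.le fun ω hx => hmul1 (hmul1 (hGb ω) (he1b (X ω))) (hμ1T _ hx))
    have iχG1e1Y0 : Integrable (fun ω => χ (X ω) * (G ω * (1 - e1 (X ω)) * Y0 ω)) ℙ :=
      ibm hχX hχXb iG1e1Y0
    have iχG1e1μ0 : Integrable (fun ω => χ (X ω) * (G ω * (1 - e1 (X ω)) * μ0 (X ω))) ℙ :=
      cate_ibd (hχX.mul ((hG.mul (measurable_const.sub he1X)).mul hμ0X)).aestronglyMeasurable c
        (hbdω _ c hc.le fun ω hx => hmul1 (hmul1 (hGb ω) (h1e1b (X ω))) (hμ0T _ hx))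
    have iχGY1 : Integrable (fun ω => χ (X ω) * (G ω * Y1 ω)) ℙ :=
      ibm hχX hχXb (ibm hG hGb hY1)
    have iχGY0 : Integrable (fun ω => χ (X ω) * (G ω * Y0 ω)) ℙ :=
      ibm hχX hχXb (ibm hG hGb hY0)
    have iχGμ1 : Integrable (fun ω => χ (X ω) * (G ω * μ1 (X ω))) ℙ :=
      cate_ibd (hχX.mul (hG.mul hμ1X)).aestronglyMeasurable c
        (hbdω _ c hc.le fun ω hx => hmul1 (hGb ω) (hμ1T _ hx))
    have iχGμ0 : Integrable (fun ω => χ (X ω) * (G ω * μ0 (X ω))) ℙ :=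
      cate_ibd (hχX.mul (hG.mul hμ0X)).aestronglyMeasurable c
        (hbdω _ c hc.le fun ω hx => hmul1 (hGb ω) (hμ0T _ hx))
    have iχsY10 : Integrable (fun ω => χ (X ω) * (s (X ω) * (Y1 ω - Y0 ω))) ℙ :=
      ibm hχX hχXb isY10
    have iχsμ10 : Integrable (fun ω => χ (X ω) * (s (X ω) * (μ1 (X ω) - μ0 (X ω)))) ℙ :=
      cate_ibd (hχX.mul (hsX.mul (hμ1X.sub hμ0X))).aestronglyMeasurable (c + c)
        (hbdω _ (c + c) (by positivity) fun ω hx => hmul1 (hsb (X ω)) (hμ10T _ hx))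
    have iχY10 : Integrable (fun ω => χ (X ω) * (Y1 ω - Y0 ω)) ℙ := ibm hχX hχXb iY10
    have iχμ10 : Integrable (fun ω => χ (X ω) * (μ1 (X ω) - μ0 (X ω))) ℙ :=
      cate_ibd (hχX.mul (hμ1X.sub hμ0X)).aestronglyMeasurable (c + c)
        (hbdω _ (c + c) (by positivity) fun ω hx => hμ10T _ hx)
    have iχGY10 : Integrable (fun ω => χ (X ω) * (G ω * (Y1 ω - Y0 ω))) ℙ :=
      ibm hχX hχXb iGY10
    have iχGμ10 : Integrable (fun ω => χ (X ω) * (G ω * (μ1 (X ω) - μ0 (X ω)))) ℙ :=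
      cate_ibd (hχX.mul (hG.mul (hμ1X.sub hμ0X))).aestronglyMeasurable (c + c)
        (hbdω _ (c + c) (by positivity) fun ω hx => hmul1 (hGb ω) (hμ10T _ hx))
    have iψ : Integrable (fun ω => χ (X ω) * (τ (X ω) - (μ1 (X ω) - μ0 (X ω)))) ℙ :=
      cate_ibd (hχX.mul (hτX.sub (hμ1X.sub hμ0X))).aestronglyMeasurable (c + (c + c))
        (hbdω _ (c + (c + c)) (by positivity) fun ω hx => hψT _ hx)
    have iψs : Integrable (fun ω => χ (X ω) * (τ (X ω) - (μ1 (X ω) - μ0 (X ω))) * s (X ω)) ℙ :=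
      cate_ibd ((hχX.mul (hτX.sub (hμ1X.sub hμ0X))).mul hsX).aestronglyMeasurable (c + (c + c))
        (fun ω => by
          have h := hmul1 (hsb (X ω)) (hbdω (fun ω => τ (X ω) - (μ1 (X ω) - μ0 (X ω)))
            (c + (c + c)) (by positivity) (fun ω hx => hψT _ hx) ω)
          calc |χ (X ω) * (τ (X ω) - (μ1 (X ω) - μ0 (X ω))) * s (X ω)|
              = |s (X ω) * (χ (X ω) * (τ (X ω) - (μ1 (X ω) - μ0 (X ω))))| := by congr 1; ring
            _ ≤ c + (c + c) := h)
    have iψG : Integrable (fun ω => χ (X ω) * (τ (X ω) - (μ1 (X ω) - μ0 (X ω))) * G ω) ℙ :=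
      cate_ibd ((hχX.mul (hτX.sub (hμ1X.sub hμ0X))).mul hG).aestronglyMeasurable (c + (c + c))
        (fun ω => by
          have h := hmul1 (hGb ω) (hbdω (fun ω => τ (X ω) - (μ1 (X ω) - μ0 (X ω)))
            (c + (c + c)) (by positivity) (fun ω hx => hψT _ hx) ω)
          calc |χ (X ω) * (τ (X ω) - (μ1 (X ω) - μ0 (X ω))) * G ω|
              = |G ω * (χ (X ω) * (τ (X ω) - (μ1 (X ω) - μ0 (X ω))))| := by congr 1; ring
            _ ≤ c + (c + c) := h)
    have iχ1Gτ : Integrable (fun ω => χ (X ω) * ((1 - G ω) * τ (X ω))) ℙ :=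
      cate_ibd (hχX.mul ((measurable_const.sub hG).mul hτX)).aestronglyMeasurable c
        (hbdω _ c hc.le fun ω hx => hmul1 (h1Gb ω) (hτT _ hx))
    have iχ1Gμ10 : Integrable (fun ω => χ (X ω) * ((1 - G ω) * (μ1 (X ω) - μ0 (X ω)))) ℙ :=
      cate_ibd (hχX.mul ((measurable_const.sub hG).mul (hμ1X.sub hμ0X))).aestronglyMeasurable
        (c + c) (hbdω _ (c + c) (by positivity) fun ω hx => hmul1 (h1Gb ω) (hμ10T _ hx))
    -- arm 1 : conditional mean identification
    have K1 : ∀ B : Set 𝓧, MeasurableSet B →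
        ∫ ω in X ⁻¹' B, χ (X ω) * (G ω * e1 (X ω) * Y1 ω) ∂ℙ
          = ∫ ω in X ⁻¹' B, χ (X ω) * (G ω * e1 (X ω) * μ1 (X ω)) ∂ℙ := by
      intro B hB
      calc ∫ ω in X ⁻¹' B, χ (X ω) * (G ω * e1 (X ω) * Y1 ω) ∂ℙ
          = ∫ ω in X ⁻¹' B, χ (X ω) * (G ω * A ω * Y1 ω) ∂ℙ :=
            (cate_pull hX iGAY1 iGe1Y1 R2 hχm hχb B hB).symm
        _ = ∫ ω in X ⁻¹' B, χ (X ω) * (G ω * A ω * Y ω) ∂ℙ :=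
            icongr fun ω => by rw [hGAY ω]
        _ = ∫ ω in X ⁻¹' (B ∩ T), G ω * A ω * Y ω ∂ℙ := (ind B _).symm
        _ = ∫ ω in X ⁻¹' (B ∩ T), G ω * A ω * μ1 (X ω) ∂ℙ := hμ1ver _ (hB.inter hT)
        _ = ∫ ω in X ⁻¹' B, χ (X ω) * (G ω * A ω * μ1 (X ω)) ∂ℙ := ind B _
        _ = ∫ ω in X ⁻¹' B, (fun x => χ x * μ1 x) (X ω) * (G ω * A ω) ∂ℙ :=
            icongr fun ω => by ring
        _ = ∫ ω in X ⁻¹' B, (fun x => χ x * μ1 x) (X ω) * (G ω * e1 (X ω)) ∂ℙ :=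
            cate_pull hX iGA iGe1 he1ver (hχm.mul hμ1meas)
              (hbd μ1 c hc.le hμ1T) B hB
        _ = ∫ ω in X ⁻¹' B, χ (X ω) * (G ω * e1 (X ω) * μ1 (X ω)) ∂ℙ :=
            icongr fun ω => by ring
    have K2 : ∀ B : Set 𝓧, MeasurableSet B →
        ∫ ω in X ⁻¹' B, χ (X ω) * (G ω * Y1 ω) ∂ℙ
          = ∫ ω in X ⁻¹' B, χ (X ω) * (G ω * μ1 (X ω)) ∂ℙ := by
      intro B hB
      calc ∫ ω in X ⁻¹' B, χ (X ω) * (G ω * Y1 ω) ∂ℙ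
          = ∫ ω in X ⁻¹' B, (fun x => χ x * (e1 x)⁻¹) (X ω)
              * (χ (X ω) * (G ω * e1 (X ω) * Y1 ω)) ∂ℙ := by
            refine icongr fun ω => ?_
            by_cases hx : X ω ∈ T
            · simp only [hχ1 _ hx]
              have h0 : e1 (X ω) ≠ 0 := ne_of_gt (hover (X ω)).1
              field_simp
            · simp only [hχ0 _ hx]; ring
        _ = ∫ ω in X ⁻¹' B, (fun x => χ x * (e1 x)⁻¹) (X ω)
              * (χ (X ω) * (G ω * e1 (X ω) * μ1 (X ω))) ∂ℙ :=
            cate_pull hX iχGe1Y1 iχGe1μ1 K1 (hχm.mul he1meas.inv)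
              (hbd _ c hc.le he1invT) B hB
        _ = ∫ ω in X ⁻¹' B, χ (X ω) * (G ω * μ1 (X ω)) ∂ℙ := by
            refine icongr fun ω => ?_
            by_cases hx : X ω ∈ T
            · simp only [hχ1 _ hx]
              have h0 : e1 (X ω) ≠ 0 := ne_of_gt (hover (X ω)).1
              field_simp
            · simp only [hχ0 _ hx]; ring
    -- arm 0 : conditional mean identification
    have K1' : ∀ B : Set 𝓧, MeasurableSet B →
        ∫ ω in X ⁻¹' B, χ (X ω) * (G ω * (1 - e1 (X ω)) * Y0 ω) ∂ℙ
          = ∫ ω in X ⁻¹' B, χ (X ω) * (G ω * (1 - e1 (X ω)) * μ0 (X ω)) ∂ℙ := by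
      intro B hB
      calc ∫ ω in X ⁻¹' B, χ (X ω) * (G ω * (1 - e1 (X ω)) * Y0 ω) ∂ℙ
          = ∫ ω in X ⁻¹' B, χ (X ω) * (G ω * (1 - A ω) * Y0 ω) ∂ℙ :=
            (cate_pull hX iGA0Y0 iG1e1Y0 R2b' hχm hχb B hB).symm
        _ = ∫ ω in X ⁻¹' B, χ (X ω) * (G ω * (1 - A ω) * Y ω) ∂ℙ :=
            icongr fun ω => by rw [hGA0Y ω]
        _ = ∫ ω in X ⁻¹' (B ∩ T), G ω * (1 - A ω) * Y ω ∂ℙ := (ind B _).symm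
        _ = ∫ ω in X ⁻¹' (B ∩ T), G ω * (1 - A ω) * μ0 (X ω) ∂ℙ := hμ0ver _ (hB.inter hT)
        _ = ∫ ω in X ⁻¹' B, χ (X ω) * (G ω * (1 - A ω) * μ0 (X ω)) ∂ℙ := ind B _
        _ = ∫ ω in X ⁻¹' B, (fun x => χ x * μ0 x) (X ω) * (G ω * (1 - A ω)) ∂ℙ :=
            icongr fun ω => by ring
        _ = ∫ ω in X ⁻¹' B, (fun x => χ x * μ0 x) (X ω) * (G ω * (1 - e1 (X ω))) ∂ℙ :=
            cate_pull hX iGA0 iG1e1 RA (hχm.mul hμ0meas) (hbd μ0 c hc.le hμ0T) B hB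
        _ = ∫ ω in X ⁻¹' B, χ (X ω) * (G ω * (1 - e1 (X ω)) * μ0 (X ω)) ∂ℙ :=
            icongr fun ω => by ring
    have K2' : ∀ B : Set 𝓧, MeasurableSet B →
        ∫ ω in X ⁻¹' B, χ (X ω) * (G ω * Y0 ω) ∂ℙ
          = ∫ ω in X ⁻¹' B, χ (X ω) * (G ω * μ0 (X ω)) ∂ℙ := by
      intro B hB
      calc ∫ ω in X ⁻¹' B, χ (X ω) * (G ω * Y0 ω) ∂ℙ
          = ∫ ω in X ⁻¹' B, (fun x => χ x * (1 - e1 x)⁻¹) (X ω)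
              * (χ (X ω) * (G ω * (1 - e1 (X ω)) * Y0 ω)) ∂ℙ := by
            refine icongr fun ω => ?_
            by_cases hx : X ω ∈ T
            · simp only [hχ1 _ hx]
              have h0 : 1 - e1 (X ω) ≠ 0 := by
                have := (hover (X ω)).2; intro hcon; linarith
              field_simp
            · simp only [hχ0 _ hx]; ring
        _ = ∫ ω in X ⁻¹' B, (fun x => χ x * (1 - e1 x)⁻¹) (X ω)
              * (χ (X ω) * (G ω * (1 - e1 (X ω)) * μ0 (X ω))) ∂ℙ :=
            cate_pull hX iχG1e1Y0 iχG1e1μ0 K1'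
              (hχm.mul (measurable_const.sub he1meas).inv) (hbd _ c hc.le h1e1invT) B hB
        _ = ∫ ω in X ⁻¹' B, χ (X ω) * (G ω * μ0 (X ω)) ∂ℙ := by
            refine icongr fun ω => ?_
            by_cases hx : X ω ∈ T
            · simp only [hχ1 _ hx]
              have h0 : 1 - e1 (X ω) ≠ 0 := by
                have := (hover (X ω)).2; intro hcon; linarith
              field_simp
            · simp only [hχ0 _ hx]; ring
    -- difference
    have K3 : ∀ B : Set 𝓧, MeasurableSet B →
        ∫ ω in X ⁻¹' B, χ (X ω) * (G ω * (Y1 ω - Y0 ω)) ∂ℙ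
          = ∫ ω in X ⁻¹' B, χ (X ω) * (G ω * (μ1 (X ω) - μ0 (X ω))) ∂ℙ := by
      intro B hB
      calc ∫ ω in X ⁻¹' B, χ (X ω) * (G ω * (Y1 ω - Y0 ω)) ∂ℙ
          = ∫ ω in X ⁻¹' B, (χ (X ω) * (G ω * Y1 ω) - χ (X ω) * (G ω * Y0 ω)) ∂ℙ :=
            icongr fun ω => by ring
        _ = (∫ ω in X ⁻¹' B, χ (X ω) * (G ω * Y1 ω) ∂ℙ)
              - ∫ ω in X ⁻¹' B, χ (X ω) * (G ω * Y0 ω) ∂ℙ :=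
            integral_sub iχGY1.integrableOn iχGY0.integrableOn
        _ = (∫ ω in X ⁻¹' B, χ (X ω) * (G ω * μ1 (X ω)) ∂ℙ)
              - ∫ ω in X ⁻¹' B, χ (X ω) * (G ω * μ0 (X ω)) ∂ℙ := by
            rw [K2 B hB, K2' B hB]
        _ = ∫ ω in X ⁻¹' B, (χ (X ω) * (G ω * μ1 (X ω)) - χ (X ω) * (G ω * μ0 (X ω))) ∂ℙ :=
            (integral_sub iχGμ1.integrableOn iχGμ0.integrableOn).symm
        _ = ∫ ω in X ⁻¹' B, χ (X ω) * (G ω * (μ1 (X ω) - μ0 (X ω))) ∂ℙ :=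
            icongr fun ω => by ring
    -- transport
    have K4 : ∀ B : Set 𝓧, MeasurableSet B →
        ∫ ω in X ⁻¹' B, χ (X ω) * (s (X ω) * (Y1 ω - Y0 ω)) ∂ℙ
          = ∫ ω in X ⁻¹' B, χ (X ω) * (s (X ω) * (μ1 (X ω) - μ0 (X ω))) ∂ℙ := by
      intro B hB
      calc ∫ ω in X ⁻¹' B, χ (X ω) * (s (X ω) * (Y1 ω - Y0 ω)) ∂ℙ
          = ∫ ω in X ⁻¹' B, χ (X ω) * (G ω * (Y1 ω - Y0 ω)) ∂ℙ :=
            (cate_pull hX iGY10 isY10 R4 hχm hχb B hB).symm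
        _ = ∫ ω in X ⁻¹' B, χ (X ω) * (G ω * (μ1 (X ω) - μ0 (X ω))) ∂ℙ := K3 B hB
        _ = ∫ ω in X ⁻¹' B, (fun x => χ x * (μ1 x - μ0 x)) (X ω) * G ω ∂ℙ :=
            icongr fun ω => by ring
        _ = ∫ ω in X ⁻¹' B, (fun x => χ x * (μ1 x - μ0 x)) (X ω) * s (X ω) ∂ℙ :=
            cate_pull hX iG isX hsver (hχm.mul (hμ1meas.sub hμ0meas))
              (hbd _ (c + c) (by positivity) hμ10T) B hB
        _ = ∫ ω in X ⁻¹' B, χ (X ω) * (s (X ω) * (μ1 (X ω) - μ0 (X ω))) ∂ℙ :=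
            icongr fun ω => by ring
    have K5 : ∀ B : Set 𝓧, MeasurableSet B →
        ∫ ω in X ⁻¹' B, χ (X ω) * (Y1 ω - Y0 ω) ∂ℙ
          = ∫ ω in X ⁻¹' B, χ (X ω) * (μ1 (X ω) - μ0 (X ω)) ∂ℙ := by
      intro B hB
      calc ∫ ω in X ⁻¹' B, χ (X ω) * (Y1 ω - Y0 ω) ∂ℙ
          = ∫ ω in X ⁻¹' B, (fun x => χ x * (s x)⁻¹) (X ω)
              * (χ (X ω) * (s (X ω) * (Y1 ω - Y0 ω))) ∂ℙ := by
            refine icongr fun ω => ?_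
            by_cases hx : X ω ∈ T
            · simp only [hχ1 _ hx]
              have h0 : s (X ω) ≠ 0 := ne_of_gt (hspos (X ω)).1
              field_simp
            · simp only [hχ0 _ hx]; ring
        _ = ∫ ω in X ⁻¹' B, (fun x => χ x * (s x)⁻¹) (X ω)
              * (χ (X ω) * (s (X ω) * (μ1 (X ω) - μ0 (X ω)))) ∂ℙ :=
            cate_pull hX iχsY10 iχsμ10 K4 (hχm.mul hsmeas.inv) (hbd _ c hc.le hsinvT) B hB
        _ = ∫ ω in X ⁻¹' B, χ (X ω) * (μ1 (X ω) - μ0 (X ω)) ∂ℙ := by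
            refine icongr fun ω => ?_
            by_cases hx : X ω ∈ T
            · simp only [hχ1 _ hx]
              have h0 : s (X ω) ≠ 0 := ne_of_gt (hspos (X ω)).1
              field_simp
            · simp only [hχ0 _ hx]; ring
    have K6 : ∀ B : Set 𝓧, MeasurableSet B →
        ∫ ω in X ⁻¹' B, χ (X ω) * ((1 - G ω) * (Y1 ω - Y0 ω)) ∂ℙ
          = ∫ ω in X ⁻¹' B, χ (X ω) * ((1 - G ω) * (μ1 (X ω) - μ0 (X ω))) ∂ℙ := by
      intro B hB
      calc ∫ ω in X ⁻¹' B, χ (X ω) * ((1 - G ω) * (Y1 ω - Y0 ω)) ∂ℙ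
          = ∫ ω in X ⁻¹' B, (χ (X ω) * (Y1 ω - Y0 ω) - χ (X ω) * (G ω * (Y1 ω - Y0 ω))) ∂ℙ :=
            icongr fun ω => by ring
        _ = (∫ ω in X ⁻¹' B, χ (X ω) * (Y1 ω - Y0 ω) ∂ℙ)
              - ∫ ω in X ⁻¹' B, χ (X ω) * (G ω * (Y1 ω - Y0 ω)) ∂ℙ :=
            integral_sub iχY10.integrableOn iχGY10.integrableOn
        _ = (∫ ω in X ⁻¹' B, χ (X ω) * (μ1 (X ω) - μ0 (X ω)) ∂ℙ)
              - ∫ ω in X ⁻¹' B, χ (X ω) * (G ω * (μ1 (X ω) - μ0 (X ω))) ∂ℙ := by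
            rw [K5 B hB, K3 B hB]
        _ = ∫ ω in X ⁻¹' B, (χ (X ω) * (μ1 (X ω) - μ0 (X ω))
              - χ (X ω) * (G ω * (μ1 (X ω) - μ0 (X ω)))) ∂ℙ :=
            (integral_sub iχμ10.integrableOn iχGμ10.integrableOn).symm
        _ = ∫ ω in X ⁻¹' B, χ (X ω) * ((1 - G ω) * (μ1 (X ω) - μ0 (X ω))) ∂ℙ :=
            icongr fun ω => by ring
    have K7 : ∀ B : Set 𝓧, MeasurableSet B →
        ∫ ω in X ⁻¹' B, χ (X ω) * ((1 - G ω) * (Y1 ω - Y0 ω)) ∂ℙ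
          = ∫ ω in X ⁻¹' B, χ (X ω) * ((1 - G ω) * τ (X ω)) ∂ℙ := by
      intro B hB
      calc ∫ ω in X ⁻¹' B, χ (X ω) * ((1 - G ω) * (Y1 ω - Y0 ω)) ∂ℙ
          = ∫ ω in X ⁻¹' (B ∩ T), (1 - G ω) * (Y1 ω - Y0 ω) ∂ℙ := (ind B _).symm
        _ = ∫ ω in X ⁻¹' (B ∩ T), (1 - G ω) * τ (X ω) ∂ℙ := hτver _ (hB.inter hT)
        _ = ∫ ω in X ⁻¹' B, χ (X ω) * ((1 - G ω) * τ (X ω)) ∂ℙ := ind B _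
    have K8 : ∀ B : Set 𝓧, MeasurableSet B →
        ∫ ω in X ⁻¹' B, χ (X ω) * (τ (X ω) - (μ1 (X ω) - μ0 (X ω))) * G ω ∂ℙ
          = ∫ ω in X ⁻¹' B, χ (X ω) * (τ (X ω) - (μ1 (X ω) - μ0 (X ω))) * s (X ω) ∂ℙ := by
      have := cate_pull hX iG isX hsver
        (g := fun x => χ x * (τ x - (μ1 x - μ0 x)))
        (hχm.mul (hτmeas.sub (hμ1meas.sub hμ0meas)))
        (hbd _ (c + (c + c)) (by positivity) hψT)
      exact this
    -- conclusion of the localized argument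
    have main : ∀ B : Set 𝓧, MeasurableSet B →
        ∫ ω in X ⁻¹' B, χ (X ω) * ((1 - s (X ω)) * (τ (X ω) - (μ1 (X ω) - μ0 (X ω)))) ∂ℙ
          = 0 := by
      intro B hB
      have n1 : ∫ ω in X ⁻¹' B, χ (X ω) * ((1 - s (X ω)) * (τ (X ω) - (μ1 (X ω) - μ0 (X ω)))) ∂ℙ
          = (∫ ω in X ⁻¹' B, χ (X ω) * (τ (X ω) - (μ1 (X ω) - μ0 (X ω))) ∂ℙ)
            - ∫ ω in X ⁻¹' B, χ (X ω) * (τ (X ω) - (μ1 (X ω) - μ0 (X ω))) * s (X ω) ∂ℙ := by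
        rw [← integral_sub iψ.integrableOn iψs.integrableOn]
        exact icongr fun ω => by ring
      have n2 : ∫ ω in X ⁻¹' B, (χ (X ω) * (τ (X ω) - (μ1 (X ω) - μ0 (X ω)))
            - χ (X ω) * (τ (X ω) - (μ1 (X ω) - μ0 (X ω))) * G ω) ∂ℙ
          = (∫ ω in X ⁻¹' B, χ (X ω) * (τ (X ω) - (μ1 (X ω) - μ0 (X ω))) ∂ℙ)
            - ∫ ω in X ⁻¹' B, χ (X ω) * (τ (X ω) - (μ1 (X ω) - μ0 (X ω))) * G ω ∂ℙ :=
        integral_sub iψ.integrableOn iψG.integrableOn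
      have n3 : ∫ ω in X ⁻¹' B, (χ (X ω) * (τ (X ω) - (μ1 (X ω) - μ0 (X ω)))
            - χ (X ω) * (τ (X ω) - (μ1 (X ω) - μ0 (X ω))) * G ω) ∂ℙ
          = ∫ ω in X ⁻¹' B, (χ (X ω) * ((1 - G ω) * τ (X ω))
            - χ (X ω) * ((1 - G ω) * (μ1 (X ω) - μ0 (X ω)))) ∂ℙ :=
        icongr fun ω => by ring
      have n4 : ∫ ω in X ⁻¹' B, (χ (X ω) * ((1 - G ω) * τ (X ω))
            - χ (X ω) * ((1 - G ω) * (μ1 (X ω) - μ0 (X ω)))) ∂ℙ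
          = (∫ ω in X ⁻¹' B, χ (X ω) * ((1 - G ω) * τ (X ω)) ∂ℙ)
            - ∫ ω in X ⁻¹' B, χ (X ω) * ((1 - G ω) * (μ1 (X ω) - μ0 (X ω))) ∂ℙ :=
        integral_sub iχ1Gτ.integrableOn iχ1Gμ10.integrableOn
      have k6 := K6 B hB
      have k7 := K7 B hB
      have k8 := K8 B hB
      linarith
    have hFm : Measurable fun x => χ x * ((1 - s x) * (τ x - (μ1 x - μ0 x))) :=
      hχm.mul ((measurable_const.sub hsmeas).mul (hτmeas.sub (hμ1meas.sub hμ0meas)))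
    have hFi : Integrable
        (fun ω => χ (X ω) * ((1 - s (X ω)) * (τ (X ω) - (μ1 (X ω) - μ0 (X ω))))) ℙ :=
      cate_ibd (hχX.mul ((measurable_const.sub hsX).mul
          (hτX.sub (hμ1X.sub hμ0X)))).aestronglyMeasurable (c + (c + c))
        (hbdω _ (c + (c + c)) (by positivity) fun ω hx =>
          hmul1 (h1sb (X ω)) (hψT _ hx))
    have hae := cate_zero hX hFm hFi main
    filter_upwards [hae] with ω h0 hmem
    have hxT : X ω ∈ T := hmem
    have h0' : χ (X ω) * ((1 - s (X ω)) * (τ (X ω) - (μ1 (X ω) - μ0 (X ω)))) = 0 := h0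
    rw [hχ1 _ hxT, one_mul] at h0'
    rcases mul_eq_zero.mp h0' with h | h
    · exfalso; have := (hspos (X ω)).2; linarith
    · linarith
  -- combine over n
  filter_upwards [ae_all_iff.mpr key] with ω hω
  obtain ⟨n, hn⟩ := exists_nat_ge (max |τ (X ω)| (max |μ1 (X ω)| (max |μ0 (X ω)|
    (max (e1 (X ω))⁻¹ (max (1 - e1 (X ω))⁻¹ (s (X ω))⁻¹)))))
  have hn1 : max |τ (X ω)| (max |μ1 (X ω)| (max |μ0 (X ω)|
      (max (e1 (X ω))⁻¹ (max (1 - e1 (X ω))⁻¹ (s (X ω))⁻¹)))) ≤ (n : ℝ) + 1 := by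
    linarith
  have h1 : |τ (X ω)| ≤ (n : ℝ) + 1 := le_trans (le_max_left _ _) hn1
  have h2 : |μ1 (X ω)| ≤ (n : ℝ) + 1 :=
    le_trans (le_trans (le_max_left _ _) (le_max_right _ _)) hn1
  have h3 : |μ0 (X ω)| ≤ (n : ℝ) + 1 :=
    le_trans (le_trans (le_trans (le_max_left _ _) (le_max_right _ _)) (le_max_right _ _)) hn1
  have h4' : (e1 (X ω))⁻¹ ≤ (n : ℝ) + 1 :=
    le_trans (le_trans (le_trans (le_trans (le_max_left _ _) (le_max_right _ _))
      (le_max_right _ _)) (le_max_right _ _)) hn1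
  have h5' : (1 - e1 (X ω))⁻¹ ≤ (n : ℝ) + 1 :=
    le_trans (le_trans (le_trans (le_trans (le_trans (le_max_left _ _) (le_max_right _ _))
      (le_max_right _ _)) (le_max_right _ _)) (le_max_right _ _)) hn1
  have h6' : (s (X ω))⁻¹ ≤ (n : ℝ) + 1 :=
    le_trans (le_trans (le_trans (le_trans (le_trans (le_max_right _ _) (le_max_right _ _))
      (le_max_right _ _)) (le_max_right _ _)) (le_max_right _ _)) hn1
  have he1p : 0 < e1 (X ω) := (hover (X ω)).1
  have h1e1p : 0 < 1 - e1 (X ω) := by linarith [(hover (X ω)).2]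
  have hsp : 0 < s (X ω) := (hspos (X ω)).1
  have h4 : ((n : ℝ) + 1)⁻¹ ≤ e1 (X ω) := by
    have := inv_anti₀ (by positivity : (0:ℝ) < (e1 (X ω))⁻¹) h4'
    rwa [inv_inv] at this
  have h5 : e1 (X ω) ≤ 1 - ((n : ℝ) + 1)⁻¹ := by
    have := inv_anti₀ (by positivity : (0:ℝ) < (1 - e1 (X ω))⁻¹) h5'
    rw [inv_inv] at this
    linarith
  have h6 : ((n : ℝ) + 1)⁻¹ ≤ s (X ω) := by
    have := inv_anti₀ (by positivity : (0:ℝ) < (s (X ω))⁻¹) h6'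
    rwa [inv_inv] at this
  exact hω n ⟨h1, h2, h3, h4, h5, h6⟩
end

section
/- Under unconfoundedness, overlap, and transportability, the target-domain reward R(π) = E[π(X)Y(1) + (1−π(X))Y(0) | G=0] is identified as R(π) = E[(1−G)/(1−q) · {π(X)μ₁(X) + (1−π(X))μ₀(X)}], where q = P(G=1) and μₐ(X) = E[Y | X, A=a, G=1]. -/
open MeasureTheory ENNReal

section Aux

variable {Ω : Type*} {𝓧 : Type*} [MeasurableSpace Ω] [MeasurableSpace 𝓧]
variable {ℙ : Measure Ω} [IsProbabilityMeasure ℙ] {X : Ω → 𝓧}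

lemma aem_ofReal {μ : Measure Ω} {f : Ω → ℝ} (hf : AEMeasurable f μ) :
    AEMeasurable (fun ω => ENNReal.ofReal (f ω)) μ :=
  ENNReal.measurable_ofReal.comp_aemeasurable hf

lemma ofReal_mul_max (c z : ℝ) (hc : 0 ≤ c) :
    ENNReal.ofReal (c * z) = ENNReal.ofReal (c * max z 0) := by
  rcases le_total 0 z with h | h
  · rw [max_eq_left h]
  · rw [max_eq_right h, mul_zero, ENNReal.ofReal_zero, ENNReal.ofReal_eq_zero]
    exact mul_nonpos_iff.2 (Or.inl ⟨hc, h⟩)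

lemma lin_fin {f : Ω → ℝ} (hf : Integrable f ℙ) : ∫⁻ ω, ENNReal.ofReal (f ω) ∂ℙ < ⊤ :=
  lt_of_le_of_lt (lintegral_mono fun ω => by
    rw [Real.enorm_eq_ofReal_abs]
    exact ENNReal.ofReal_le_ofReal (le_abs_self _)) hf.2

lemma enn_cross {a b c d : ℝ≥0∞} (ha : a ≠ ⊤) (hb : b ≠ ⊤) (hc : c ≠ ⊤) (hd : d ≠ ⊤)
    (h : a.toReal - b.toReal = c.toReal - d.toReal) : a + d = b + c := by
  rw [← ENNReal.toReal_eq_toReal_iff' (by finiteness) (by finiteness),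
    ENNReal.toReal_add ha hd, ENNReal.toReal_add hb hc]
  linarith

lemma weight_transfer (hX : Measurable X) {g₁ g₂ : Ω → ℝ≥0∞}
    (hg₁ : AEMeasurable g₁ ℙ) (hg₂ : AEMeasurable g₂ ℙ)
    (h : ∀ B : Set 𝓧, MeasurableSet B →
      ∫⁻ ω in X ⁻¹' B, g₁ ω ∂ℙ = ∫⁻ ω in X ⁻¹' B, g₂ ω ∂ℙ)
    {h' : 𝓧 → ℝ≥0∞} (hh' : Measurable h') :
    ∫⁻ ω, h' (X ω) * g₁ ω ∂ℙ = ∫⁻ ω, h' (X ω) * g₂ ω ∂ℙ := by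
  have key : (ℙ.withDensity g₁).map X = (ℙ.withDensity g₂).map X := by
    ext B hB
    rw [Measure.map_apply hX hB, Measure.map_apply hX hB,
      withDensity_apply _ (hX hB), withDensity_apply _ (hX hB)]
    exact h B hB
  have e1 : ∀ g : Ω → ℝ≥0∞, AEMeasurable g ℙ →
      ∫⁻ x, h' x ∂((ℙ.withDensity g).map X) = ∫⁻ ω, h' (X ω) * g ω ∂ℙ := by
    intro g hg
    rw [lintegral_map hh' hX,
      lintegral_withDensity_eq_lintegral_mul₀ (g := fun ω => h' (X ω)) hg
        ((hh'.comp hX).aemeasurable)]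
    exact lintegral_congr fun ω => mul_comm _ _
  rw [← e1 g₁ hg₁, ← e1 g₂ hg₂, key]

lemma boch_lin {u : Ω → ℝ} {S : Set Ω} (hu : Integrable u (ℙ.restrict S))
    (hu0 : ∀ ω, 0 ≤ u ω) :
    ∫⁻ ω in S, ENNReal.ofReal (u ω) ∂ℙ = ENNReal.ofReal (∫ ω in S, u ω ∂ℙ) :=
  (ofReal_integral_eq_lintegral_ofReal hu (ae_of_all _ hu0)).symm

lemma bdd_int {f : Ω → ℝ} (hf : AEMeasurable f ℙ) {C : ℝ} (hC : ∀ ω, |f ω| ≤ C)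
    (S : Set Ω) : Integrable f (ℙ.restrict S) :=
  ⟨hf.restrict.aestronglyMeasurable,
    HasFiniteIntegral.of_bounded (C := C) (ae_of_all _ fun ω => by
      simpa [Real.norm_eq_abs] using hC ω)⟩

lemma signed_transfer (hX : Measurable X) {u v : Ω → ℝ}
    (hu : Integrable u ℙ) (hv : Integrable v ℙ)
    (heq : ∀ B : Set 𝓧, MeasurableSet B →
      ∫ ω in X ⁻¹' B, u ω ∂ℙ = ∫ ω in X ⁻¹' B, v ω ∂ℙ)
    {h' : 𝓧 → ℝ≥0∞} (hh' : Measurable h') :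
    ∫⁻ ω, h' (X ω) * ENNReal.ofReal (u ω) ∂ℙ + ∫⁻ ω, h' (X ω) * ENNReal.ofReal (-v ω) ∂ℙ
      = ∫⁻ ω, h' (X ω) * ENNReal.ofReal (-u ω) ∂ℙ
        + ∫⁻ ω, h' (X ω) * ENNReal.ofReal (v ω) ∂ℙ := by
  have hum : AEMeasurable u ℙ := hu.aemeasurable
  have hvm : AEMeasurable v ℙ := hv.aemeasurable
  have aeu : AEMeasurable (fun ω => ENNReal.ofReal (u ω)) ℙ :=
    ENNReal.measurable_ofReal.comp_aemeasurable hum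
  have aeu' : AEMeasurable (fun ω => ENNReal.ofReal (-u ω)) ℙ :=
    ENNReal.measurable_ofReal.comp_aemeasurable hum.neg
  have aev : AEMeasurable (fun ω => ENNReal.ofReal (v ω)) ℙ :=
    ENNReal.measurable_ofReal.comp_aemeasurable hvm
  have aev' : AEMeasurable (fun ω => ENNReal.ofReal (-v ω)) ℙ :=
    ENNReal.measurable_ofReal.comp_aemeasurable hvm.neg
  have key : ∀ B : Set 𝓧, MeasurableSet B →
      ∫⁻ ω in X ⁻¹' B, (ENNReal.ofReal (u ω) + ENNReal.ofReal (-v ω)) ∂ℙ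
        = ∫⁻ ω in X ⁻¹' B, (ENNReal.ofReal (-u ω) + ENNReal.ofReal (v ω)) ∂ℙ := by
    intro B hB
    rw [lintegral_add_left' aeu.restrict, lintegral_add_left' aeu'.restrict]
    have h1 := integral_eq_lintegral_pos_part_sub_lintegral_neg_part hu.restrict
      (μ := ℙ.restrict (X ⁻¹' B))
    have h2 := integral_eq_lintegral_pos_part_sub_lintegral_neg_part hv.restrict
      (μ := ℙ.restrict (X ⁻¹' B))
    have hfin : ∀ {f : Ω → ℝ}, Integrable f ℙ →
        ∫⁻ ω in X ⁻¹' B, ENNReal.ofReal (f ω) ∂ℙ ≠ ⊤ := fun hf =>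
      (lt_of_le_of_lt (setLIntegral_le_lintegral _ _) (lin_fin hf)).ne
    exact enn_cross (hfin hu) (hfin hu.neg) (hfin hv) (hfin hv.neg)
      (by rw [← h1, ← h2]; exact heq B hB)
  have W := weight_transfer hX (aeu.add aev') (aeu'.add aev) key hh'
  have hcm : AEMeasurable (fun ω => h' (X ω)) ℙ := (hh'.comp hX).aemeasurable
  calc ∫⁻ ω, h' (X ω) * ENNReal.ofReal (u ω) ∂ℙ + ∫⁻ ω, h' (X ω) * ENNReal.ofReal (-v ω) ∂ℙ
      = ∫⁻ ω, (h' (X ω) * ENNReal.ofReal (u ω) + h' (X ω) * ENNReal.ofReal (-v ω)) ∂ℙ :=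
        (lintegral_add_left' (hcm.mul aeu) _).symm
    _ = ∫⁻ ω, h' (X ω) * (ENNReal.ofReal (u ω) + ENNReal.ofReal (-v ω)) ∂ℙ :=
        lintegral_congr fun ω => (mul_add _ _ _).symm
    _ = ∫⁻ ω, h' (X ω) * (ENNReal.ofReal (-u ω) + ENNReal.ofReal (v ω)) ∂ℙ := W
    _ = ∫⁻ ω, (h' (X ω) * ENNReal.ofReal (-u ω) + h' (X ω) * ENNReal.ofReal (v ω)) ∂ℙ :=
        lintegral_congr fun ω => (mul_add _ _ _)
    _ = _ := lintegral_add_left' (hcm.mul aeu') _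


lemma trunc_transfer {c c' Z : Ω → ℝ}
    (hc : AEMeasurable c ℙ) (hc' : AEMeasurable c' ℙ) (hZ : AEMeasurable Z ℙ)
    (hc0 : ∀ ω, 0 ≤ c ω) (hc1 : ∀ ω, c ω ≤ 1)
    (hc'0 : ∀ ω, 0 ≤ c' ω) (hc'1 : ∀ ω, c' ω ≤ 1)
    (hZ0 : ∀ ω, 0 ≤ Z ω) {S : Set Ω}
    (heq : ∀ n : ℕ, ∫ ω in S, c ω * min (Z ω) n ∂ℙ = ∫ ω in S, c' ω * min (Z ω) n ∂ℙ) :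
    ∫⁻ ω in S, ENNReal.ofReal (c ω * Z ω) ∂ℙ
      = ∫⁻ ω in S, ENNReal.ofReal (c' ω * Z ω) ∂ℙ := by
  have main : ∀ (c : Ω → ℝ), AEMeasurable c ℙ → (∀ ω, 0 ≤ c ω) → (∀ ω, c ω ≤ 1) →
      ∫⁻ ω in S, ENNReal.ofReal (c ω * Z ω) ∂ℙ
        = ⨆ n : ℕ, ∫⁻ ω in S, ENNReal.ofReal (c ω * min (Z ω) n) ∂ℙ := by
    intro c hc hc0 hc1
    rw [← lintegral_iSup' (fun n => (aem_ofReal (f := fun ω => c ω * min (Z ω) n)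
        ((hc.mul (hZ.min aemeasurable_const)))).restrict)
      (ae_of_all _ (fun ω n m hnm => ENNReal.ofReal_le_ofReal
        (mul_le_mul_of_nonneg_left (min_le_min le_rfl (Nat.cast_le.2 hnm)) (hc0 ω))))]
    refine lintegral_congr fun ω => ?_
    refine le_antisymm ?_ (iSup_le fun n => ENNReal.ofReal_le_ofReal
      (mul_le_mul_of_nonneg_left (min_le_left _ _) (hc0 ω)))
    obtain ⟨n, hn⟩ := exists_nat_ge (Z ω)
    exact le_iSup_of_le n (by rw [min_eq_left hn])
  have conv : ∀ (c : Ω → ℝ), AEMeasurable c ℙ → (∀ ω, 0 ≤ c ω) → (∀ ω, c ω ≤ 1) →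
      ∀ n : ℕ, ∫⁻ ω in S, ENNReal.ofReal (c ω * min (Z ω) n) ∂ℙ
        = ENNReal.ofReal (∫ ω in S, c ω * min (Z ω) n ∂ℙ) := by
    intro c hc hc0 hc1 n
    refine boch_lin (bdd_int (f := fun ω => c ω * min (Z ω) n) (hc.mul (hZ.min aemeasurable_const)) (C := n) (fun ω => ?_) S)
      (fun ω => mul_nonneg (hc0 ω) (le_min (hZ0 ω) (Nat.cast_nonneg n)))
    rw [abs_of_nonneg (mul_nonneg (hc0 ω) (le_min (hZ0 ω) (Nat.cast_nonneg n)))]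
    exact le_trans (mul_le_of_le_one_left (le_min (hZ0 ω) (Nat.cast_nonneg n)) (hc1 ω))
      (min_le_right _ _)
  rw [main c hc hc0 hc1, main c' hc' hc'0 hc'1]
  refine iSup_congr fun n => ?_
  rw [conv c hc hc0 hc1 n, conv c' hc' hc'0 hc'1 n, heq n]

lemma fin_lemma (hX : Measurable X) {c Z : Ω → ℝ} (hcm : Measurable c)
    (hc0 : ∀ ω, 0 ≤ c ω) (hc1 : ∀ ω, c ω ≤ 1) (hZint : Integrable Z ℙ)
    {m : 𝓧 → ℝ} (hm : Measurable m)
    (hver : ∀ B : Set 𝓧, MeasurableSet B →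
      ∫ ω in X ⁻¹' B, c ω * Z ω ∂ℙ = ∫ ω in X ⁻¹' B, c ω * m (X ω) ∂ℙ) :
    ∫⁻ ω, ENNReal.ofReal (c ω * m (X ω)) ∂ℙ < ⊤ := by
  have hu : Integrable (fun ω => c ω * Z ω) ℙ := by
    refine hZint.abs.mono' ((hcm.aemeasurable.mul hZint.aemeasurable)).aestronglyMeasurable
      (ae_of_all _ fun ω => ?_)
    rw [Real.norm_eq_abs, abs_mul]
    exact mul_le_of_le_one_left (abs_nonneg _) (abs_le.2 ⟨by linarith [hc0 ω], hc1 ω⟩)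
  set K : ℝ := ∫ ω, |c ω * Z ω| ∂ℙ with hK
  set B : ℕ → Set 𝓧 := fun n => {x | 0 ≤ m x} ∩ {x | m x ≤ n} with hB
  have hBmeas : ∀ n, MeasurableSet (B n) := fun n =>
    (measurableSet_le measurable_const hm).inter (measurableSet_le hm measurable_const)
  have step1 : ∀ n, ∫⁻ ω in X ⁻¹' (B n), ENNReal.ofReal (c ω * m (X ω)) ∂ℙ
      ≤ ENNReal.ofReal K := by
    intro n
    have hintn : Integrable (fun ω => c ω * m (X ω)) (ℙ.restrict (X ⁻¹' (B n))) := by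
      refine ⟨((hcm.mul (hm.comp hX)).aemeasurable).restrict.aestronglyMeasurable,
        HasFiniteIntegral.of_bounded (C := (n : ℝ)) ?_⟩
      refine (ae_restrict_iff' (hX (hBmeas n))).2 (ae_of_all _ fun ω hω => ?_)
      have h1 : 0 ≤ m (X ω) := hω.1
      have h2 : m (X ω) ≤ n := hω.2
      rw [Real.norm_eq_abs, abs_of_nonneg (mul_nonneg (hc0 ω) h1)]
      exact le_trans (mul_le_of_le_one_left h1 (hc1 ω)) h2
    have hnn : ∀ ω, 0 ≤ c ω * max (m (X ω)) 0 := fun ω =>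
      mul_nonneg (hc0 ω) (le_max_right _ _)
    have e1 : ∫⁻ ω in X ⁻¹' (B n), ENNReal.ofReal (c ω * m (X ω)) ∂ℙ
        = ENNReal.ofReal (∫ ω in X ⁻¹' (B n), c ω * m (X ω) ∂ℙ) := by
      rw [← ofReal_integral_eq_lintegral_ofReal hintn]
      refine (ae_restrict_iff' (hX (hBmeas n))).2 (ae_of_all _ fun ω hω =>
        mul_nonneg (hc0 ω) hω.1)
    rw [e1, ← hver (B n) (hBmeas n)]
    refine ENNReal.ofReal_le_ofReal ?_
    calc ∫ ω in X ⁻¹' (B n), c ω * Z ω ∂ℙ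
        ≤ ∫ ω in X ⁻¹' (B n), |c ω * Z ω| ∂ℙ :=
          integral_mono_ae hu.restrict hu.abs.restrict (ae_of_all _ fun ω => le_abs_self _)
      _ ≤ K := setIntegral_le_integral hu.abs (ae_of_all _ fun ω => abs_nonneg _)
  have step2 : ∫⁻ ω, ENNReal.ofReal (c ω * m (X ω)) ∂ℙ
      = ⨆ n, ∫⁻ ω in X ⁻¹' (B n), ENNReal.ofReal (c ω * m (X ω)) ∂ℙ := by
    have hfm : Measurable (fun ω => ENNReal.ofReal (c ω * m (X ω))) :=
      (hcm.mul (hm.comp hX)).ennreal_ofReal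
    have e2 : ∀ n, ∫⁻ ω in X ⁻¹' (B n), ENNReal.ofReal (c ω * m (X ω)) ∂ℙ
        = ∫⁻ ω, (X ⁻¹' (B n)).indicator (fun ω => ENNReal.ofReal (c ω * m (X ω))) ω ∂ℙ :=
      fun n => (lintegral_indicator (hX (hBmeas n)) _).symm
    simp_rw [e2]
    rw [← lintegral_iSup (fun n => hfm.indicator (hX (hBmeas n)))
      (fun i j hij => Set.indicator_le_indicator_of_subset
        (fun x hx => ⟨hx.1, show m (X x) ≤ (j:ℝ) from le_trans hx.2 (Nat.cast_le.2 hij)⟩) (fun ω => zero_le))]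
    refine lintegral_congr fun ω => ?_
    rcases le_or_gt 0 (m (X ω)) with h0 | h0
    · obtain ⟨n, hn⟩ := exists_nat_ge (m (X ω))
      refine le_antisymm ?_ (iSup_le fun n => Set.indicator_le_self _ _ ω)
      have hmem : ω ∈ X ⁻¹' (B n) := ⟨h0, hn⟩
      exact le_iSup_of_le n (le_of_eq (Set.indicator_of_mem hmem (fun ω => ENNReal.ofReal (c ω * m (X ω)))).symm)
    · have hz : ENNReal.ofReal (c ω * m (X ω)) = 0 :=
        ENNReal.ofReal_eq_zero.2 (mul_nonpos_iff.2 (Or.inl ⟨hc0 ω, h0.le⟩))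
      rw [hz]
      refine le_antisymm zero_le (iSup_le fun n => ?_)
      by_cases hmem : ω ∈ X ⁻¹' (B n)
      · rw [Set.indicator_of_mem hmem]
        exact le_of_eq hz
      · rw [Set.indicator_of_notMem hmem]
  rw [step2]
  exact lt_of_le_of_lt (iSup_le step1) ENNReal.ofReal_lt_top


lemma mul_int {c u : Ω → ℝ} (hu : Integrable u ℙ) (hc : AEMeasurable c ℙ)
    (hb : ∀ ω, |c ω| ≤ 1) : Integrable (fun ω => c ω * u ω) ℙ :=
  hu.abs.mono' (hc.mul hu.aemeasurable).aestronglyMeasurable (ae_of_all _ fun ω => by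
    rw [Real.norm_eq_abs, abs_mul]
    exact mul_le_of_le_one_left (abs_nonneg _) (hb ω))

lemma nnnorm_split (r : ℝ) :
    (‖r‖₊ : ℝ≥0∞) = ENNReal.ofReal r + ENNReal.ofReal (-r) := by
  rw [← enorm_eq_nnnorm, Real.enorm_eq_ofReal_abs]
  rcases le_total 0 r with h | h
  · rw [abs_of_nonneg h, ENNReal.ofReal_of_nonpos (neg_nonpos.2 h), add_zero]
  · rw [abs_of_nonpos h, ENNReal.ofReal_of_nonpos h, zero_add]

lemma arm_core (hX : Measurable X)
    {Gf a Z : Ω → ℝ} (hGm : Measurable Gf) (hGb : ∀ ω, Gf ω = 0 ∨ Gf ω = 1)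
    (ham : Measurable a) (hab : ∀ ω, a ω = 0 ∨ a ω = 1)
    (hZ : Integrable Z ℙ)
    {ebar sbar mubar : 𝓧 → ℝ}
    (hem : Measurable ebar) (hsm : Measurable sbar) (hmum : Measurable mubar)
    (he01 : ∀ x, 0 < ebar x ∧ ebar x < 1) (hs01 : ∀ x, 0 < sbar x ∧ sbar x < 1)
    (hver : ∀ B : Set 𝓧, MeasurableSet B → ∫ ω in X ⁻¹' B, Gf ω * a ω * Z ω ∂ℙ
        = ∫ ω in X ⁻¹' B, Gf ω * a ω * mubar (X ω) ∂ℙ)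
    (hverA : ∀ B : Set 𝓧, MeasurableSet B → ∫ ω in X ⁻¹' B, Gf ω * a ω ∂ℙ
        = ∫ ω in X ⁻¹' B, Gf ω * ebar (X ω) ∂ℙ)
    (hverS : ∀ B : Set 𝓧, MeasurableSet B → ∫ ω in X ⁻¹' B, Gf ω ∂ℙ
        = ∫ ω in X ⁻¹' B, sbar (X ω) ∂ℙ)
    (huncP : ∀ n : ℕ, ∀ B : Set 𝓧, MeasurableSet B →
        ∫ ω in X ⁻¹' B, Gf ω * a ω * min (max (Z ω) 0) n ∂ℙ
          = ∫ ω in X ⁻¹' B, Gf ω * ebar (X ω) * min (max (Z ω) 0) n ∂ℙ)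
    (huncN : ∀ n : ℕ, ∀ B : Set 𝓧, MeasurableSet B →
        ∫ ω in X ⁻¹' B, Gf ω * a ω * min (max (-Z ω) 0) n ∂ℙ
          = ∫ ω in X ⁻¹' B, Gf ω * ebar (X ω) * min (max (-Z ω) 0) n ∂ℙ)
    (htrP : ∀ n : ℕ, ∀ B : Set 𝓧, MeasurableSet B →
        ∫ ω in X ⁻¹' B, Gf ω * min (max (Z ω) 0) n ∂ℙ
          = ∫ ω in X ⁻¹' B, sbar (X ω) * min (max (Z ω) 0) n ∂ℙ)
    (htrN : ∀ n : ℕ, ∀ B : Set 𝓧, MeasurableSet B →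
        ∫ ω in X ⁻¹' B, Gf ω * min (max (-Z ω) 0) n ∂ℙ
          = ∫ ω in X ⁻¹' B, sbar (X ω) * min (max (-Z ω) 0) n ∂ℙ) :
    Integrable (fun ω => (1 - Gf ω) * mubar (X ω)) ℙ ∧
    ∀ p : 𝓧 → ℝ, Measurable p → (∀ x, 0 ≤ p x) → (∀ x, p x ≤ 1) →
      ∫ ω, p (X ω) * ((1 - Gf ω) * Z ω) ∂ℙ
        = ∫ ω, p (X ω) * ((1 - Gf ω) * mubar (X ω)) ∂ℙ := by
  have hG0 : ∀ ω, 0 ≤ Gf ω := fun ω => by rcases hGb ω with h | h <;> simp [h]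
  have hG1 : ∀ ω, Gf ω ≤ 1 := fun ω => by rcases hGb ω with h | h <;> simp [h]
  have ha0 : ∀ ω, 0 ≤ a ω := fun ω => by rcases hab ω with h | h <;> simp [h]
  have ha1 : ∀ ω, a ω ≤ 1 := fun ω => by rcases hab ω with h | h <;> simp [h]
  have hZm : AEMeasurable Z ℙ := hZ.aemeasurable
  have hs0 : ∀ x, (0:ℝ) < sbar x := fun x => (hs01 x).1
  have hs1 : ∀ x, sbar x < 1 := fun x => (hs01 x).2
  have he0 : ∀ x, (0:ℝ) < ebar x := fun x => (he01 x).1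
  have hw0 : ∀ x, 0 ≤ (1 - sbar x) / (sbar x * ebar x) := fun x =>
    div_nonneg (by linarith [hs1 x]) (mul_nonneg (hs0 x).le (he0 x).le)
  have hwm : Measurable fun x => (1 - sbar x) / (sbar x * ebar x) :=
    ((measurable_const.sub hsm)).div (hsm.mul hem)
  -- CHAIN for outcome-side nonnegative parts
  have chain : ∀ V : Ω → ℝ, AEMeasurable V ℙ → (∀ ω, 0 ≤ V ω) →
      (∀ n : ℕ, ∀ B : Set 𝓧, MeasurableSet B →
        ∫ ω in X ⁻¹' B, Gf ω * a ω * min (V ω) n ∂ℙ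
          = ∫ ω in X ⁻¹' B, Gf ω * ebar (X ω) * min (V ω) n ∂ℙ) →
      (∀ n : ℕ, ∀ B : Set 𝓧, MeasurableSet B →
        ∫ ω in X ⁻¹' B, Gf ω * min (V ω) n ∂ℙ
          = ∫ ω in X ⁻¹' B, sbar (X ω) * min (V ω) n ∂ℙ) →
      ∀ h' : 𝓧 → ℝ≥0∞, Measurable h' →
      ∫⁻ ω, h' (X ω) * ENNReal.ofReal ((1 - Gf ω) * V ω) ∂ℙ
        = ∫⁻ ω, (h' (X ω) * ENNReal.ofReal ((1 - sbar (X ω)) / (sbar (X ω) * ebar (X ω))))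
            * ENNReal.ofReal (Gf ω * a ω * V ω) ∂ℙ := by
    intro V hVm hV0 huncV htrV h' hh'
    -- complement version of htrV
    have htrV' : ∀ n : ℕ, ∀ B : Set 𝓧, MeasurableSet B →
        ∫ ω in X ⁻¹' B, (1 - Gf ω) * min (V ω) n ∂ℙ
          = ∫ ω in X ⁻¹' B, (1 - sbar (X ω)) * min (V ω) n ∂ℙ := by
      intro n B hB
      have hm : AEMeasurable (fun ω => min (V ω) (n:ℝ)) ℙ := hVm.min aemeasurable_const
      have hmb : ∀ ω, |min (V ω) (n:ℝ)| ≤ (n:ℝ) := fun ω => by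
        rw [abs_of_nonneg (le_min (hV0 ω) (Nat.cast_nonneg n))]
        exact min_le_right _ _
      have i1 : Integrable (fun ω => min (V ω) (n:ℝ)) (ℙ.restrict (X ⁻¹' B)) :=
        bdd_int hm hmb _
      have i2 : Integrable (fun ω => Gf ω * min (V ω) (n:ℝ)) (ℙ.restrict (X ⁻¹' B)) :=
        bdd_int (f := fun ω => Gf ω * min (V ω) (n:ℝ)) (hGm.aemeasurable.mul hm) (C := (n:ℝ)) (fun ω => by
          rw [abs_mul]
          exact le_trans (mul_le_of_le_one_left (abs_nonneg _)
            (abs_le.2 ⟨by linarith [hG0 ω], hG1 ω⟩)) (hmb ω)) _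
      have i3 : Integrable (fun ω => sbar (X ω) * min (V ω) (n:ℝ)) (ℙ.restrict (X ⁻¹' B)) :=
        bdd_int (f := fun ω => sbar (X ω) * min (V ω) (n:ℝ)) ((hsm.comp hX).aemeasurable.mul hm) (C := (n:ℝ)) (fun ω => by
          rw [abs_mul]
          exact le_trans (mul_le_of_le_one_left (abs_nonneg _)
            (abs_le.2 ⟨by linarith [hs0 (X ω)], (hs1 (X ω)).le⟩)) (hmb ω)) _
      calc ∫ ω in X ⁻¹' B, (1 - Gf ω) * min (V ω) (n:ℝ) ∂ℙ
          = ∫ ω in X ⁻¹' B, (min (V ω) (n:ℝ) - Gf ω * min (V ω) (n:ℝ)) ∂ℙ :=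
            integral_congr_ae (ae_of_all _ fun ω => by ring)
        _ = (∫ ω in X ⁻¹' B, min (V ω) (n:ℝ) ∂ℙ)
              - ∫ ω in X ⁻¹' B, Gf ω * min (V ω) (n:ℝ) ∂ℙ := integral_sub i1 i2
        _ = (∫ ω in X ⁻¹' B, min (V ω) (n:ℝ) ∂ℙ)
              - ∫ ω in X ⁻¹' B, sbar (X ω) * min (V ω) (n:ℝ) ∂ℙ := by rw [htrV n B hB]
        _ = ∫ ω in X ⁻¹' B, (min (V ω) (n:ℝ) - sbar (X ω) * min (V ω) (n:ℝ)) ∂ℙ :=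
            (integral_sub i1 i3).symm
        _ = ∫ ω in X ⁻¹' B, (1 - sbar (X ω)) * min (V ω) (n:ℝ) ∂ℙ :=
            integral_congr_ae (ae_of_all _ fun ω => by ring)
    -- lintegral versions
    have hGa : AEMeasurable (fun ω => Gf ω * a ω) ℙ := (hGm.mul ham).aemeasurable
    have hc1m : Measurable fun ω => 1 - Gf ω := measurable_const.sub hGm
    have hc2m : Measurable fun ω => 1 - sbar (X ω) := measurable_const.sub (hsm.comp hX)
    have W1 := weight_transfer (ℙ := ℙ) hX
      (aem_ofReal ((hc1m.aemeasurable).mul hVm))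
      (aem_ofReal (hc2m.aemeasurable.mul hVm))
      (fun B hB => trunc_transfer (c := fun ω => 1 - Gf ω) (c' := fun ω => 1 - sbar (X ω))
        hc1m.aemeasurable hc2m.aemeasurable hVm
        (fun ω => sub_nonneg.2 (hG1 ω)) (fun ω => sub_le_self 1 (hG0 ω))
        (fun ω => sub_nonneg.2 (hs1 (X ω)).le) (fun ω => sub_le_self 1 (hs0 (X ω)).le)
        hV0 (fun n => htrV' n B hB)) hh'
    have W2 : ∀ g : 𝓧 → ℝ≥0∞, Measurable g →
        ∫⁻ ω, g (X ω) * ENNReal.ofReal (Gf ω * V ω) ∂ℙ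
          = ∫⁻ ω, g (X ω) * ENNReal.ofReal (sbar (X ω) * V ω) ∂ℙ := fun g hg =>
      weight_transfer (ℙ := ℙ) hX (aem_ofReal (hGm.aemeasurable.mul hVm))
        (aem_ofReal ((hsm.comp hX).aemeasurable.mul hVm))
        (fun B hB => trunc_transfer (c := Gf) (c' := fun ω => sbar (X ω))
          hGm.aemeasurable (hsm.comp hX).aemeasurable hVm
          hG0 hG1 (fun ω => (hs0 (X ω)).le) (fun ω => (hs1 (X ω)).le)
          hV0 (fun n => htrV n B hB)) hg
    have W3 : ∀ g : 𝓧 → ℝ≥0∞, Measurable g →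
        ∫⁻ ω, g (X ω) * ENNReal.ofReal (Gf ω * a ω * V ω) ∂ℙ
          = ∫⁻ ω, g (X ω) * ENNReal.ofReal (Gf ω * ebar (X ω) * V ω) ∂ℙ := fun g hg =>
      weight_transfer (ℙ := ℙ) hX (aem_ofReal (hGa.mul hVm))
        (aem_ofReal ((hGm.mul (hem.comp hX)).aemeasurable.mul hVm))
        (fun B hB => trunc_transfer (c := fun ω => Gf ω * a ω)
          (c' := fun ω => Gf ω * ebar (X ω))
          hGa (hGm.mul (hem.comp hX)).aemeasurable hVm
          (fun ω => mul_nonneg (hG0 ω) (ha0 ω))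
          (fun ω => mul_le_one₀ (hG1 ω) (ha0 ω) (ha1 ω))
          (fun ω => mul_nonneg (hG0 ω) (he0 (X ω)).le)
          (fun ω => mul_le_one₀ (hG1 ω) (he0 (X ω)).le (he01 (X ω)).2.le)
          hV0 (fun n => huncV n B hB)) hg
    calc ∫⁻ ω, h' (X ω) * ENNReal.ofReal ((1 - Gf ω) * V ω) ∂ℙ
        = ∫⁻ ω, h' (X ω) * ENNReal.ofReal ((1 - sbar (X ω)) * V ω) ∂ℙ := W1
      _ = ∫⁻ ω, (h' (X ω) * ENNReal.ofReal ((1 - sbar (X ω)) / sbar (X ω)))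
            * ENNReal.ofReal (sbar (X ω) * V ω) ∂ℙ := by
          refine lintegral_congr fun ω => ?_
          have hne : sbar (X ω) ≠ 0 := (hs0 (X ω)).ne'
          rw [mul_assoc, ← ENNReal.ofReal_mul
            (div_nonneg (by linarith [hs1 (X ω)]) (hs0 (X ω)).le)]
          congr 2
          field_simp
      _ = ∫⁻ ω, (h' (X ω) * ENNReal.ofReal ((1 - sbar (X ω)) / sbar (X ω)))
            * ENNReal.ofReal (Gf ω * V ω) ∂ℙ :=
          (W2 (fun x => h' x * ENNReal.ofReal ((1 - sbar x) / sbar x))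
            (hh'.mul ((measurable_const.sub hsm).div hsm).ennreal_ofReal)).symm
      _ = ∫⁻ ω, ((h' (X ω) * ENNReal.ofReal ((1 - sbar (X ω)) / sbar (X ω)))
            * ENNReal.ofReal (1 / ebar (X ω)))
            * ENNReal.ofReal (Gf ω * ebar (X ω) * V ω) ∂ℙ := by
          refine lintegral_congr fun ω => ?_
          have hne : ebar (X ω) ≠ 0 := (he0 (X ω)).ne'
          rw [mul_assoc (h' (X ω) * ENNReal.ofReal ((1 - sbar (X ω)) / sbar (X ω))),
            ← ENNReal.ofReal_mul (one_div_nonneg.2 (he0 (X ω)).le)]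
          congr 2
          field_simp
      _ = ∫⁻ ω, ((h' (X ω) * ENNReal.ofReal ((1 - sbar (X ω)) / sbar (X ω)))
            * ENNReal.ofReal (1 / ebar (X ω)))
            * ENNReal.ofReal (Gf ω * a ω * V ω) ∂ℙ :=
          (W3 (fun x => (h' x * ENNReal.ofReal ((1 - sbar x) / sbar x))
              * ENNReal.ofReal (1 / ebar x))
            ((hh'.mul ((measurable_const.sub hsm).div hsm).ennreal_ofReal).mul
              ((measurable_const.div hem).ennreal_ofReal))).symm
      _ = ∫⁻ ω, (h' (X ω) * ENNReal.ofReal ((1 - sbar (X ω)) / (sbar (X ω) * ebar (X ω))))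
            * ENNReal.ofReal (Gf ω * a ω * V ω) ∂ℙ := by
          refine lintegral_congr fun ω => ?_
          rw [mul_assoc (h' (X ω)), ← ENNReal.ofReal_mul
            (div_nonneg (by linarith [hs1 (X ω)]) (hs0 (X ω)).le),
            div_mul_div_comm, mul_one]
  -- lintegral facts for functions of X
  have hGa : AEMeasurable (fun ω => Gf ω * a ω) ℙ := (hGm.mul ham).aemeasurable
  have hGe : AEMeasurable (fun ω => Gf ω * ebar (X ω)) ℙ := (hGm.mul (hem.comp hX)).aemeasurable
  have habs01 : ∀ {f : Ω → ℝ}, (∀ ω, 0 ≤ f ω) → (∀ ω, f ω ≤ 1) → ∀ ω, |f ω| ≤ 1 :=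
    fun h0 h1 ω => abs_le.2 ⟨by linarith [h0 ω], h1 ω⟩
  have hGa0 : ∀ ω, 0 ≤ Gf ω * a ω := fun ω => mul_nonneg (hG0 ω) (ha0 ω)
  have hGa1 : ∀ ω, Gf ω * a ω ≤ 1 := fun ω => mul_le_one₀ (hG1 ω) (ha0 ω) (ha1 ω)
  have hGe0 : ∀ ω, 0 ≤ Gf ω * ebar (X ω) := fun ω => mul_nonneg (hG0 ω) (he0 (X ω)).le
  have hGe1 : ∀ ω, Gf ω * ebar (X ω) ≤ 1 := fun ω =>
    mul_le_one₀ (hG1 ω) (he0 (X ω)).le (he01 (X ω)).2.le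
  have L4 : ∀ B : Set 𝓧, MeasurableSet B →
      ∫⁻ ω in X ⁻¹' B, ENNReal.ofReal (Gf ω * a ω) ∂ℙ
        = ∫⁻ ω in X ⁻¹' B, ENNReal.ofReal (Gf ω * ebar (X ω)) ∂ℙ := by
    intro B hB
    rw [boch_lin (bdd_int hGa (habs01 hGa0 hGa1) _) hGa0,
      boch_lin (bdd_int hGe (habs01 hGe0 hGe1) _) hGe0, hverA B hB]
  have L5 : ∀ B : Set 𝓧, MeasurableSet B →
      ∫⁻ ω in X ⁻¹' B, ENNReal.ofReal (Gf ω) ∂ℙ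
        = ∫⁻ ω in X ⁻¹' B, ENNReal.ofReal (sbar (X ω)) ∂ℙ := by
    intro B hB
    rw [boch_lin (bdd_int hGm.aemeasurable (habs01 hG0 hG1) _) hG0,
      boch_lin (bdd_int (f := fun ω => sbar (X ω)) (hsm.comp hX).aemeasurable
        (habs01 (fun ω => (hs0 (X ω)).le) (fun ω => (hs1 (X ω)).le)) _)
        (fun ω => (hs0 (X ω)).le), hverS B hB]
  have L5' : ∀ B : Set 𝓧, MeasurableSet B →
      ∫⁻ ω in X ⁻¹' B, ENNReal.ofReal (1 - Gf ω) ∂ℙ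
        = ∫⁻ ω in X ⁻¹' B, ENNReal.ofReal (1 - sbar (X ω)) ∂ℙ := by
    intro B hB
    have i1 : Integrable (fun _ => (1:ℝ)) (ℙ.restrict (X ⁻¹' B)) := integrable_const 1
    have i2 : Integrable Gf (ℙ.restrict (X ⁻¹' B)) :=
      bdd_int hGm.aemeasurable (habs01 hG0 hG1) _
    have i3 : Integrable (fun ω => sbar (X ω)) (ℙ.restrict (X ⁻¹' B)) :=
      bdd_int (f := fun ω => sbar (X ω)) (hsm.comp hX).aemeasurable
        (habs01 (fun ω => (hs0 (X ω)).le) (fun ω => (hs1 (X ω)).le)) _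
    have hb : ∫ ω in X ⁻¹' B, (1 - Gf ω) ∂ℙ = ∫ ω in X ⁻¹' B, (1 - sbar (X ω)) ∂ℙ := by
      rw [integral_sub i1 i2, integral_sub i1 i3, hverS B hB]
    rw [boch_lin (u := fun ω => 1 - Gf ω) (i1.sub i2) (fun ω => sub_nonneg.2 (hG1 ω)),
      boch_lin (u := fun ω => 1 - sbar (X ω)) (i1.sub i3) (fun ω => sub_nonneg.2 (hs1 (X ω)).le), hb]
  have W4 : ∀ g : 𝓧 → ℝ≥0∞, Measurable g →
      ∫⁻ ω, g (X ω) * ENNReal.ofReal (Gf ω * a ω) ∂ℙ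
        = ∫⁻ ω, g (X ω) * ENNReal.ofReal (Gf ω * ebar (X ω)) ∂ℙ := fun g hg =>
    weight_transfer (ℙ := ℙ) hX (aem_ofReal hGa) (aem_ofReal hGe) L4 hg
  have W5 : ∀ g : 𝓧 → ℝ≥0∞, Measurable g →
      ∫⁻ ω, g (X ω) * ENNReal.ofReal (Gf ω) ∂ℙ
        = ∫⁻ ω, g (X ω) * ENNReal.ofReal (sbar (X ω)) ∂ℙ := fun g hg =>
    weight_transfer (ℙ := ℙ) hX (aem_ofReal hGm.aemeasurable)
      (aem_ofReal (hsm.comp hX).aemeasurable) L5 hg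
  have W5' : ∀ g : 𝓧 → ℝ≥0∞, Measurable g →
      ∫⁻ ω, g (X ω) * ENNReal.ofReal (1 - Gf ω) ∂ℙ
        = ∫⁻ ω, g (X ω) * ENNReal.ofReal (1 - sbar (X ω)) ∂ℙ := fun g hg =>
    weight_transfer (ℙ := ℙ) hX (aem_ofReal (measurable_const.sub hGm).aemeasurable)
      (aem_ofReal ((measurable_const.sub (hsm.comp hX)) :
        Measurable fun ω => 1 - sbar (X ω)).aemeasurable) L5' hg
  -- CHAIN for covariate-side nonnegative parts
  have chainμ : ∀ m : 𝓧 → ℝ, Measurable m → (∀ x, 0 ≤ m x) →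
      ∀ h' : 𝓧 → ℝ≥0∞, Measurable h' →
      ∫⁻ ω, h' (X ω) * ENNReal.ofReal ((1 - Gf ω) * m (X ω)) ∂ℙ
        = ∫⁻ ω, (h' (X ω) * ENNReal.ofReal ((1 - sbar (X ω)) / (sbar (X ω) * ebar (X ω))))
            * ENNReal.ofReal (Gf ω * a ω * m (X ω)) ∂ℙ := by
    intro m hm hm0 h' hh'
    have hmE : Measurable fun x => ENNReal.ofReal (m x) := hm.ennreal_ofReal
    calc ∫⁻ ω, h' (X ω) * ENNReal.ofReal ((1 - Gf ω) * m (X ω)) ∂ℙ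
        = ∫⁻ ω, (h' (X ω) * ENNReal.ofReal (m (X ω))) * ENNReal.ofReal (1 - Gf ω) ∂ℙ := by
          refine lintegral_congr fun ω => ?_
          rw [mul_assoc, ← ENNReal.ofReal_mul (hm0 (X ω)),
            mul_comm (1 - Gf ω) (m (X ω))]
      _ = ∫⁻ ω, (h' (X ω) * ENNReal.ofReal (m (X ω)))
            * ENNReal.ofReal (1 - sbar (X ω)) ∂ℙ :=
          W5' (fun x => h' x * ENNReal.ofReal (m x)) (hh'.mul hmE)
      _ = ∫⁻ ω, ((h' (X ω) * ENNReal.ofReal (m (X ω)))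
            * ENNReal.ofReal ((1 - sbar (X ω)) / sbar (X ω)))
            * ENNReal.ofReal (sbar (X ω)) ∂ℙ := by
          refine lintegral_congr fun ω => ?_
          have hne : sbar (X ω) ≠ 0 := (hs0 (X ω)).ne'
          rw [mul_assoc (h' (X ω) * ENNReal.ofReal (m (X ω))), ← ENNReal.ofReal_mul
            (div_nonneg (by linarith [hs1 (X ω)]) (hs0 (X ω)).le)]
          congr 2
          field_simp
      _ = ∫⁻ ω, ((h' (X ω) * ENNReal.ofReal (m (X ω)))
            * ENNReal.ofReal ((1 - sbar (X ω)) / sbar (X ω)))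
            * ENNReal.ofReal (Gf ω) ∂ℙ :=
          (W5 (fun x => (h' x * ENNReal.ofReal (m x))
              * ENNReal.ofReal ((1 - sbar x) / sbar x))
            ((hh'.mul hmE).mul ((measurable_const.sub hsm).div hsm).ennreal_ofReal)).symm
      _ = ∫⁻ ω, (((h' (X ω) * ENNReal.ofReal (m (X ω)))
            * ENNReal.ofReal ((1 - sbar (X ω)) / sbar (X ω)))
            * ENNReal.ofReal (1 / ebar (X ω)))
            * ENNReal.ofReal (Gf ω * ebar (X ω)) ∂ℙ := by
          refine lintegral_congr fun ω => ?_
          have hne : ebar (X ω) ≠ 0 := (he0 (X ω)).ne'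
          rw [mul_assoc ((h' (X ω) * ENNReal.ofReal (m (X ω)))
            * ENNReal.ofReal ((1 - sbar (X ω)) / sbar (X ω))),
            ← ENNReal.ofReal_mul (one_div_nonneg.2 (he0 (X ω)).le)]
          congr 2
          field_simp
      _ = ∫⁻ ω, (((h' (X ω) * ENNReal.ofReal (m (X ω)))
            * ENNReal.ofReal ((1 - sbar (X ω)) / sbar (X ω)))
            * ENNReal.ofReal (1 / ebar (X ω)))
            * ENNReal.ofReal (Gf ω * a ω) ∂ℙ :=
          (W4 (fun x => ((h' x * ENNReal.ofReal (m x))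
              * ENNReal.ofReal ((1 - sbar x) / sbar x)) * ENNReal.ofReal (1 / ebar x))
            (((hh'.mul hmE).mul ((measurable_const.sub hsm).div hsm).ennreal_ofReal).mul
              (measurable_const.div hem).ennreal_ofReal)).symm
      _ = ∫⁻ ω, (h' (X ω) * ENNReal.ofReal ((1 - sbar (X ω)) / (sbar (X ω) * ebar (X ω))))
            * ENNReal.ofReal (Gf ω * a ω * m (X ω)) ∂ℙ := by
          refine lintegral_congr fun ω => ?_
          have e1 : ENNReal.ofReal (Gf ω * a ω * m (X ω))
              = ENNReal.ofReal (Gf ω * a ω) * ENNReal.ofReal (m (X ω)) :=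
            ENNReal.ofReal_mul (hGa0 ω)
          have e2 : ENNReal.ofReal ((1 - sbar (X ω)) / sbar (X ω))
              * ENNReal.ofReal (1 / ebar (X ω))
              = ENNReal.ofReal ((1 - sbar (X ω)) / (sbar (X ω) * ebar (X ω))) := by
            rw [← ENNReal.ofReal_mul (div_nonneg (by linarith [hs1 (X ω)]) (hs0 (X ω)).le),
              div_mul_div_comm, mul_one]
          rw [e1, ← e2]
          ring
  -- integrability of u and v
  have hu : Integrable (fun ω => Gf ω * a ω * Z ω) ℙ := by
    refine hZ.abs.mono' ((hGa.mul hZm)).aestronglyMeasurable (ae_of_all _ fun ω => ?_)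
    rw [Real.norm_eq_abs, abs_mul]
    exact mul_le_of_le_one_left (abs_nonneg _) (habs01 hGa0 hGa1 ω)
  have fin1 : ∫⁻ ω, ENNReal.ofReal (Gf ω * a ω * mubar (X ω)) ∂ℙ < ⊤ :=
    fin_lemma hX (hGm.mul ham) hGa0 hGa1 hZ hmum hver
  have fin2 : ∫⁻ ω, ENNReal.ofReal (-(Gf ω * a ω * mubar (X ω))) ∂ℙ < ⊤ := by
    have hver' : ∀ B : Set 𝓧, MeasurableSet B →
        ∫ ω in X ⁻¹' B, (Gf ω * a ω) * (-Z ω) ∂ℙ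
          = ∫ ω in X ⁻¹' B, (Gf ω * a ω) * (-mubar (X ω)) ∂ℙ := by
      intro B hB
      simp only [mul_neg, integral_neg]
      rw [hver B hB]
    have := fin_lemma hX (hGm.mul ham) hGa0 hGa1 hZ.neg (m := fun x => -mubar x)
      hmum.neg hver'
    refine lt_of_le_of_lt (le_of_eq (lintegral_congr fun ω => ?_)) this
    congr 1
    simp only [Pi.mul_apply]; ring
  have hv : Integrable (fun ω => Gf ω * a ω * mubar (X ω)) ℙ := by
    refine ⟨((hGm.mul ham).mul (hmum.comp hX)).aestronglyMeasurable, ?_⟩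
    rw [hasFiniteIntegral_def]
    calc ∫⁻ ω, (‖Gf ω * a ω * mubar (X ω)‖₊ : ℝ≥0∞) ∂ℙ
        = ∫⁻ ω, (ENNReal.ofReal (Gf ω * a ω * mubar (X ω))
            + ENNReal.ofReal (-(Gf ω * a ω * mubar (X ω)))) ∂ℙ :=
          lintegral_congr fun ω => nnnorm_split _
      _ = (∫⁻ ω, ENNReal.ofReal (Gf ω * a ω * mubar (X ω)) ∂ℙ)
            + ∫⁻ ω, ENNReal.ofReal (-(Gf ω * a ω * mubar (X ω))) ∂ℙ :=
          lintegral_add_left' (aem_ofReal ((hGm.mul ham).mul (hmum.comp hX)).aemeasurable) _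
      _ < ⊤ := ENNReal.add_lt_top.2 ⟨fin1, fin2⟩
  -- the master identity
  have star : ∀ h' : 𝓧 → ℝ≥0∞, Measurable h' →
      (∫⁻ ω, h' (X ω) * ENNReal.ofReal ((1 - Gf ω) * max (Z ω) 0) ∂ℙ)
        + ∫⁻ ω, h' (X ω) * ENNReal.ofReal ((1 - Gf ω) * max (-mubar (X ω)) 0) ∂ℙ
      = (∫⁻ ω, h' (X ω) * ENNReal.ofReal ((1 - Gf ω) * max (-Z ω) 0) ∂ℙ)
        + ∫⁻ ω, h' (X ω) * ENNReal.ofReal ((1 - Gf ω) * max (mubar (X ω)) 0) ∂ℙ := by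
    intro h' hh'
    have hwE : Measurable fun x => h' x
        * ENNReal.ofReal ((1 - sbar x) / (sbar x * ebar x)) := hh'.mul hwm.ennreal_ofReal
    have S := signed_transfer hX hu hv hver
      (h' := fun x => h' x * ENNReal.ofReal ((1 - sbar x) / (sbar x * ebar x))) hwE
    have c1 := chain (fun ω => max (Z ω) 0) (hZm.max aemeasurable_const)
      (fun ω => le_max_right _ _) huncP htrP h' hh'
    have c2 := chain (fun ω => max (-Z ω) 0) (hZm.neg.max aemeasurable_const)
      (fun ω => le_max_right _ _) huncN htrN h' hh'
    have c3 := chainμ (fun x => max (mubar x) 0) (hmum.max measurable_const)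
      (fun x => le_max_right _ _) h' hh'
    have c4 := chainμ (fun x => max (-mubar x) 0) (hmum.neg.max measurable_const)
      (fun x => le_max_right _ _) h' hh'
    have e1 : ∫⁻ ω, (h' (X ω) * ENNReal.ofReal ((1 - sbar (X ω)) / (sbar (X ω) * ebar (X ω))))
          * ENNReal.ofReal (Gf ω * a ω * max (Z ω) 0) ∂ℙ
        = ∫⁻ ω, (h' (X ω) * ENNReal.ofReal ((1 - sbar (X ω)) / (sbar (X ω) * ebar (X ω))))
          * ENNReal.ofReal (Gf ω * a ω * Z ω) ∂ℙ :=
      lintegral_congr fun ω => by rw [← ofReal_mul_max _ _ (hGa0 ω)]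
    have e2 : ∫⁻ ω, (h' (X ω) * ENNReal.ofReal ((1 - sbar (X ω)) / (sbar (X ω) * ebar (X ω))))
          * ENNReal.ofReal (Gf ω * a ω * max (-Z ω) 0) ∂ℙ
        = ∫⁻ ω, (h' (X ω) * ENNReal.ofReal ((1 - sbar (X ω)) / (sbar (X ω) * ebar (X ω))))
          * ENNReal.ofReal (-(Gf ω * a ω * Z ω)) ∂ℙ :=
      lintegral_congr fun ω => by
        rw [← ofReal_mul_max _ _ (hGa0 ω)]
        congr 2
        ring
    have e3 : ∫⁻ ω, (h' (X ω) * ENNReal.ofReal ((1 - sbar (X ω)) / (sbar (X ω) * ebar (X ω))))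
          * ENNReal.ofReal (Gf ω * a ω * max (mubar (X ω)) 0) ∂ℙ
        = ∫⁻ ω, (h' (X ω) * ENNReal.ofReal ((1 - sbar (X ω)) / (sbar (X ω) * ebar (X ω))))
          * ENNReal.ofReal (Gf ω * a ω * mubar (X ω)) ∂ℙ :=
      lintegral_congr fun ω => by rw [← ofReal_mul_max _ _ (hGa0 ω)]
    have e4 : ∫⁻ ω, (h' (X ω) * ENNReal.ofReal ((1 - sbar (X ω)) / (sbar (X ω) * ebar (X ω))))
          * ENNReal.ofReal (Gf ω * a ω * max (-mubar (X ω)) 0) ∂ℙ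
        = ∫⁻ ω, (h' (X ω) * ENNReal.ofReal ((1 - sbar (X ω)) / (sbar (X ω) * ebar (X ω))))
          * ENNReal.ofReal (-(Gf ω * a ω * mubar (X ω))) ∂ℙ :=
      lintegral_congr fun ω => by
        rw [← ofReal_mul_max _ _ (hGa0 ω)]
        congr 2
        ring
    rw [c1, c2, c3, c4, e1, e2, e3, e4]
    exact S
  -- finiteness of the outcome-part lintegrals
  have hfP : ∫⁻ ω, ENNReal.ofReal ((1 - Gf ω) * max (Z ω) 0) ∂ℙ < ⊤ :=
    lt_of_le_of_lt (lintegral_mono fun ω => ENNReal.ofReal_le_ofReal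
      (mul_le_of_le_one_left (le_max_right _ _) (sub_le_self 1 (hG0 ω))))
      (lin_fin hZ.pos_part)
  have hfN : ∫⁻ ω, ENNReal.ofReal ((1 - Gf ω) * max (-Z ω) 0) ∂ℙ < ⊤ :=
    lt_of_le_of_lt (lintegral_mono fun ω => ENNReal.ofReal_le_ofReal
      (mul_le_of_le_one_left (le_max_right _ _) (sub_le_self 1 (hG0 ω))))
      (lin_fin hZ.neg_part)
  -- finiteness of the covariate-part lintegrals, via indicator weights
  have hT : MeasurableSet {x | 0 ≤ mubar x} := measurableSet_le measurable_const hmum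
  have indm : Measurable fun x : 𝓧 => ({x | 0 ≤ mubar x}).indicator (fun _ => (1:ℝ≥0∞)) x :=
    measurable_const.indicator hT
  have indm' : Measurable fun x : 𝓧 =>
      ({x | 0 ≤ mubar x}ᶜ).indicator (fun _ => (1:ℝ≥0∞)) x :=
    measurable_const.indicator hT.compl
  have indle : ∀ (s : Set 𝓧) (g : Ω → ℝ),
      ∫⁻ ω, s.indicator (fun _ => (1:ℝ≥0∞)) (X ω) * ENNReal.ofReal (g ω) ∂ℙ
        ≤ ∫⁻ ω, ENNReal.ofReal (g ω) ∂ℙ := by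
    intro s g
    refine lintegral_mono fun ω => ?_
    calc s.indicator (fun _ => (1:ℝ≥0∞)) (X ω) * ENNReal.ofReal (g ω)
        ≤ 1 * ENNReal.ofReal (g ω) :=
          mul_le_mul_left (by
            by_cases hx : X ω ∈ s
            · rw [Set.indicator_of_mem hx]
            · rw [Set.indicator_of_notMem hx]; exact zero_le) _
      _ = _ := one_mul _
  have fμP : ∫⁻ ω, ENNReal.ofReal ((1 - Gf ω) * max (mubar (X ω)) 0) ∂ℙ < ⊤ := by
    have hstar := star _ indm
    have hzero : ∫⁻ ω, ({x | 0 ≤ mubar x}).indicator (fun _ => (1:ℝ≥0∞)) (X ω)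
        * ENNReal.ofReal ((1 - Gf ω) * max (-mubar (X ω)) 0) ∂ℙ = 0 := by
      rw [← lintegral_zero]
      refine lintegral_congr fun ω => ?_
      by_cases hx : X ω ∈ {x | 0 ≤ mubar x}
      · have : max (-mubar (X ω)) 0 = 0 := max_eq_right (neg_nonpos.2 hx)
        simp [this]
      · simp [Set.indicator_of_notMem hx]
    have hfull : ∫⁻ ω, ENNReal.ofReal ((1 - Gf ω) * max (mubar (X ω)) 0) ∂ℙ
        = ∫⁻ ω, ({x | 0 ≤ mubar x}).indicator (fun _ => (1:ℝ≥0∞)) (X ω)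
            * ENNReal.ofReal ((1 - Gf ω) * max (mubar (X ω)) 0) ∂ℙ := by
      refine lintegral_congr fun ω => ?_
      by_cases hx : X ω ∈ {x | 0 ≤ mubar x}
      · rw [Set.indicator_of_mem hx, one_mul]
      · have : max (mubar (X ω)) 0 = 0 := max_eq_right (le_of_lt (not_le.1 hx))
        simp [this, Set.indicator_of_notMem hx]
    rw [hfull]
    calc ∫⁻ ω, ({x | 0 ≤ mubar x}).indicator (fun _ => (1:ℝ≥0∞)) (X ω)
          * ENNReal.ofReal ((1 - Gf ω) * max (mubar (X ω)) 0) ∂ℙ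
        ≤ (∫⁻ ω, ({x | 0 ≤ mubar x}).indicator (fun _ => (1:ℝ≥0∞)) (X ω)
            * ENNReal.ofReal ((1 - Gf ω) * max (-Z ω) 0) ∂ℙ)
          + ∫⁻ ω, ({x | 0 ≤ mubar x}).indicator (fun _ => (1:ℝ≥0∞)) (X ω)
            * ENNReal.ofReal ((1 - Gf ω) * max (mubar (X ω)) 0) ∂ℙ := le_add_self
      _ = (∫⁻ ω, ({x | 0 ≤ mubar x}).indicator (fun _ => (1:ℝ≥0∞)) (X ω)
            * ENNReal.ofReal ((1 - Gf ω) * max (Z ω) 0) ∂ℙ)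
          + ∫⁻ ω, ({x | 0 ≤ mubar x}).indicator (fun _ => (1:ℝ≥0∞)) (X ω)
            * ENNReal.ofReal ((1 - Gf ω) * max (-mubar (X ω)) 0) ∂ℙ := hstar.symm
      _ = ∫⁻ ω, ({x | 0 ≤ mubar x}).indicator (fun _ => (1:ℝ≥0∞)) (X ω)
            * ENNReal.ofReal ((1 - Gf ω) * max (Z ω) 0) ∂ℙ := by rw [hzero, add_zero]
      _ ≤ ∫⁻ ω, ENNReal.ofReal ((1 - Gf ω) * max (Z ω) 0) ∂ℙ := indle _ _
      _ < ⊤ := hfP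
  have fμN : ∫⁻ ω, ENNReal.ofReal ((1 - Gf ω) * max (-mubar (X ω)) 0) ∂ℙ < ⊤ := by
    have hstar := star _ indm'
    have hzero : ∫⁻ ω, ({x | 0 ≤ mubar x}ᶜ).indicator (fun _ => (1:ℝ≥0∞)) (X ω)
        * ENNReal.ofReal ((1 - Gf ω) * max (mubar (X ω)) 0) ∂ℙ = 0 := by
      rw [← lintegral_zero]
      refine lintegral_congr fun ω => ?_
      by_cases hx : X ω ∈ {x | 0 ≤ mubar x}ᶜ
      · have : max (mubar (X ω)) 0 = 0 := max_eq_right (le_of_lt (not_le.1 hx))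
        simp [this]
      · simp [Set.indicator_of_notMem hx]
    have hfull : ∫⁻ ω, ENNReal.ofReal ((1 - Gf ω) * max (-mubar (X ω)) 0) ∂ℙ
        = ∫⁻ ω, ({x | 0 ≤ mubar x}ᶜ).indicator (fun _ => (1:ℝ≥0∞)) (X ω)
            * ENNReal.ofReal ((1 - Gf ω) * max (-mubar (X ω)) 0) ∂ℙ := by
      refine lintegral_congr fun ω => ?_
      by_cases hx : X ω ∈ {x | 0 ≤ mubar x}ᶜ
      · rw [Set.indicator_of_mem hx, one_mul]
      · have hx' : X ω ∈ {x | 0 ≤ mubar x} := not_not.1 hx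
        have : max (-mubar (X ω)) 0 = 0 := max_eq_right (neg_nonpos.2 hx')
        simp [this, Set.indicator_of_notMem hx]
    rw [hfull]
    calc ∫⁻ ω, ({x | 0 ≤ mubar x}ᶜ).indicator (fun _ => (1:ℝ≥0∞)) (X ω)
          * ENNReal.ofReal ((1 - Gf ω) * max (-mubar (X ω)) 0) ∂ℙ
        ≤ (∫⁻ ω, ({x | 0 ≤ mubar x}ᶜ).indicator (fun _ => (1:ℝ≥0∞)) (X ω)
            * ENNReal.ofReal ((1 - Gf ω) * max (Z ω) 0) ∂ℙ)
          + ∫⁻ ω, ({x | 0 ≤ mubar x}ᶜ).indicator (fun _ => (1:ℝ≥0∞)) (X ω)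
            * ENNReal.ofReal ((1 - Gf ω) * max (-mubar (X ω)) 0) ∂ℙ := le_add_self
      _ = (∫⁻ ω, ({x | 0 ≤ mubar x}ᶜ).indicator (fun _ => (1:ℝ≥0∞)) (X ω)
            * ENNReal.ofReal ((1 - Gf ω) * max (-Z ω) 0) ∂ℙ)
          + ∫⁻ ω, ({x | 0 ≤ mubar x}ᶜ).indicator (fun _ => (1:ℝ≥0∞)) (X ω)
            * ENNReal.ofReal ((1 - Gf ω) * max (mubar (X ω)) 0) ∂ℙ := hstar
      _ = ∫⁻ ω, ({x | 0 ≤ mubar x}ᶜ).indicator (fun _ => (1:ℝ≥0∞)) (X ω)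
            * ENNReal.ofReal ((1 - Gf ω) * max (-Z ω) 0) ∂ℙ := by rw [hzero, add_zero]
      _ ≤ ∫⁻ ω, ENNReal.ofReal ((1 - Gf ω) * max (-Z ω) 0) ∂ℙ := indle _ _
      _ < ⊤ := hfN
  -- conclusion 1: integrability
  have intv : Integrable (fun ω => (1 - Gf ω) * mubar (X ω)) ℙ := by
    refine ⟨((measurable_const.sub hGm).mul (hmum.comp hX)).aestronglyMeasurable, ?_⟩
    rw [hasFiniteIntegral_def]
    calc ∫⁻ ω, (‖(1 - Gf ω) * mubar (X ω)‖₊ : ℝ≥0∞) ∂ℙ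
        = ∫⁻ ω, (ENNReal.ofReal ((1 - Gf ω) * mubar (X ω))
            + ENNReal.ofReal (-((1 - Gf ω) * mubar (X ω)))) ∂ℙ :=
          lintegral_congr fun ω => nnnorm_split _
      _ = ∫⁻ ω, (ENNReal.ofReal ((1 - Gf ω) * max (mubar (X ω)) 0)
            + ENNReal.ofReal ((1 - Gf ω) * max (-mubar (X ω)) 0)) ∂ℙ := by
          refine lintegral_congr fun ω => ?_
          have l1 : ENNReal.ofReal ((1 - Gf ω) * mubar (X ω))
              = ENNReal.ofReal ((1 - Gf ω) * max (mubar (X ω)) 0) :=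
            ofReal_mul_max _ _ (sub_nonneg.2 (hG1 ω))
          have l2 : ENNReal.ofReal (-((1 - Gf ω) * mubar (X ω)))
              = ENNReal.ofReal ((1 - Gf ω) * max (-mubar (X ω)) 0) := by
            rw [show -((1 - Gf ω) * mubar (X ω))
                = (1 - Gf ω) * (-mubar (X ω)) from by ring]
            exact ofReal_mul_max _ _ (sub_nonneg.2 (hG1 ω))
          rw [l1, l2]
      _ = (∫⁻ ω, ENNReal.ofReal ((1 - Gf ω) * max (mubar (X ω)) 0) ∂ℙ)
            + ∫⁻ ω, ENNReal.ofReal ((1 - Gf ω) * max (-mubar (X ω)) 0) ∂ℙ :=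
          lintegral_add_left' (aem_ofReal ((measurable_const.sub hGm).mul
            ((hmum.max measurable_const).comp hX)).aemeasurable) _
      _ < ⊤ := ENNReal.add_lt_top.2 ⟨fμP, fμN⟩
  refine ⟨intv, ?_⟩
  intro p hp hp0 hp1
  have habsp : ∀ x, |p x| ≤ 1 := fun x => abs_le.2 ⟨by linarith [hp0 x], hp1 x⟩
  have ipZ : Integrable (fun ω => p (X ω) * ((1 - Gf ω) * Z ω)) ℙ := by
    refine hZ.abs.mono' ((hp.comp hX).aemeasurable.mul
      ((measurable_const.sub hGm).aemeasurable.mul hZm)).aestronglyMeasurable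
      (ae_of_all _ fun ω => ?_)
    rw [Real.norm_eq_abs, abs_mul, abs_mul]
    calc |p (X ω)| * (|1 - Gf ω| * |Z ω|)
        ≤ 1 * (|1 - Gf ω| * |Z ω|) := mul_le_mul_of_nonneg_right (habsp (X ω))
          (mul_nonneg (abs_nonneg _) (abs_nonneg _))
      _ = |1 - Gf ω| * |Z ω| := one_mul _
      _ ≤ 1 * |Z ω| := mul_le_mul_of_nonneg_right
          (abs_le.2 ⟨by linarith [hG1 ω], by linarith [hG0 ω]⟩) (abs_nonneg _)
      _ = |Z ω| := one_mul _
  have ipμ : Integrable (fun ω => p (X ω) * ((1 - Gf ω) * mubar (X ω))) ℙ := by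
    refine intv.abs.mono' ((hp.comp hX).mul
      ((measurable_const.sub hGm).mul (hmum.comp hX))).aestronglyMeasurable
      (ae_of_all _ fun ω => ?_)
    rw [Real.norm_eq_abs, abs_mul]
    exact mul_le_of_le_one_left (abs_nonneg _) (habsp (X ω))
  have SP := star (fun x => ENNReal.ofReal (p x)) hp.ennreal_ofReal
  have wb : ∀ g : Ω → ℝ, (∫⁻ ω, ENNReal.ofReal (p (X ω)) * ENNReal.ofReal (g ω) ∂ℙ)
      ≤ ∫⁻ ω, ENNReal.ofReal (g ω) ∂ℙ := by
    intro g
    refine lintegral_mono fun ω => ?_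
    calc ENNReal.ofReal (p (X ω)) * ENNReal.ofReal (g ω)
        ≤ 1 * ENNReal.ofReal (g ω) :=
          mul_le_mul_left (ENNReal.ofReal_le_one.2 (hp1 (X ω))) _
      _ = _ := one_mul _
  have hA := lt_of_le_of_lt (wb _) hfP
  have hB := lt_of_le_of_lt (wb _) hfN
  have hC := lt_of_le_of_lt (wb _) fμP
  have hD := lt_of_le_of_lt (wb _) fμN
  have repZ : ∫ ω, p (X ω) * ((1 - Gf ω) * Z ω) ∂ℙ
      = (∫⁻ ω, ENNReal.ofReal (p (X ω))
          * ENNReal.ofReal ((1 - Gf ω) * max (Z ω) 0) ∂ℙ).toReal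
        - (∫⁻ ω, ENNReal.ofReal (p (X ω))
          * ENNReal.ofReal ((1 - Gf ω) * max (-Z ω) 0) ∂ℙ).toReal := by
    rw [integral_eq_lintegral_pos_part_sub_lintegral_neg_part ipZ]
    congr 1
    · refine congrArg ENNReal.toReal (lintegral_congr fun ω => ?_)
      rw [ENNReal.ofReal_mul (hp0 (X ω)), ofReal_mul_max _ _ (sub_nonneg.2 (hG1 ω))]
    · refine congrArg ENNReal.toReal (lintegral_congr fun ω => ?_)
      rw [show -(p (X ω) * ((1 - Gf ω) * Z ω))
          = p (X ω) * ((1 - Gf ω) * (-Z ω)) from by ring,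
        ENNReal.ofReal_mul (hp0 (X ω)), ofReal_mul_max _ _ (sub_nonneg.2 (hG1 ω))]
  have repμ : ∫ ω, p (X ω) * ((1 - Gf ω) * mubar (X ω)) ∂ℙ
      = (∫⁻ ω, ENNReal.ofReal (p (X ω))
          * ENNReal.ofReal ((1 - Gf ω) * max (mubar (X ω)) 0) ∂ℙ).toReal
        - (∫⁻ ω, ENNReal.ofReal (p (X ω))
          * ENNReal.ofReal ((1 - Gf ω) * max (-mubar (X ω)) 0) ∂ℙ).toReal := by
    rw [integral_eq_lintegral_pos_part_sub_lintegral_neg_part ipμ]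
    congr 1
    · refine congrArg ENNReal.toReal (lintegral_congr fun ω => ?_)
      rw [ENNReal.ofReal_mul (hp0 (X ω)), ofReal_mul_max _ _ (sub_nonneg.2 (hG1 ω))]
    · refine congrArg ENNReal.toReal (lintegral_congr fun ω => ?_)
      rw [show -(p (X ω) * ((1 - Gf ω) * mubar (X ω)))
          = p (X ω) * ((1 - Gf ω) * (-mubar (X ω))) from by ring,
        ENNReal.ofReal_mul (hp0 (X ω)), ofReal_mul_max _ _ (sub_nonneg.2 (hG1 ω))]
  rw [repZ, repμ]
  have t := congrArg ENNReal.toReal SP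
  rw [ENNReal.toReal_add hA.ne hD.ne, ENNReal.toReal_add hB.ne hC.ne] at t
  linarith

end Aux


/-- Under unconfoundedness, overlap and transportability, the target-domain
reward `R(π) = E[π(X)Y(1) + (1−π(X))Y(0) | G=0]` is identified as
`E[(1−G)/(1−q) · {π(X)μ₁(X) + (1−π(X))μ₀(X)}]`. -/
theorem reward_identification
    {Ω : Type*} [MeasurableSpace Ω] (ℙ : Measure Ω) [IsProbabilityMeasure ℙ]
    {𝓧 : Type*} [MeasurableSpace 𝓧]
    (X : Ω → 𝓧) (A G Y1 Y0 : Ω → ℝ)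
    (hX : Measurable X) (hA : Measurable A) (hG : Measurable G)
    (hY1 : Integrable Y1 ℙ) (hY0 : Integrable Y0 ℙ)
    (hAbin : ∀ ω, A ω = 0 ∨ A ω = 1) (hGbin : ∀ ω, G ω = 0 ∨ G ω = 1)
    -- consistency: observed outcome
    (Y : Ω → ℝ) (hYdef : ∀ ω, Y ω = A ω * Y1 ω + (1 - A ω) * Y0 ω)
    (q : ℝ) (hq : q = ∫ ω, G ω ∂ℙ) (hq0 : 0 < q) (hq1 : q < 1)
    (e1 s μ1 μ0 : 𝓧 → ℝ)
    (he1meas : Measurable e1) (hsmeas : Measurable s)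
    (hμ1meas : Measurable μ1) (hμ0meas : Measurable μ0)
    -- overlap: 0 < e₁(X) < 1
    (hover : ∀ x, 0 < e1 x ∧ e1 x < 1)
    -- positivity of the sampling score: 0 < s(X) < 1
    (hspos : ∀ x, 0 < s x ∧ s x < 1)
    -- e₁ is a version of P(A=1 | X, G=1)
    (he1ver : ∀ B : Set 𝓧, MeasurableSet B →
      ∫ ω in X ⁻¹' B, G ω * A ω ∂ℙ = ∫ ω in X ⁻¹' B, G ω * e1 (X ω) ∂ℙ)
    -- s is a version of P(G=1 | X)
    (hsver : ∀ B : Set 𝓧, MeasurableSet B →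
      ∫ ω in X ⁻¹' B, G ω ∂ℙ = ∫ ω in X ⁻¹' B, s (X ω) ∂ℙ)
    -- μ₁ is a version of E[Y | X, A=1, G=1]
    (hμ1ver : ∀ B : Set 𝓧, MeasurableSet B →
      ∫ ω in X ⁻¹' B, G ω * A ω * Y ω ∂ℙ = ∫ ω in X ⁻¹' B, G ω * A ω * μ1 (X ω) ∂ℙ)
    -- μ₀ is a version of E[Y | X, A=0, G=1]
    (hμ0ver : ∀ B : Set 𝓧, MeasurableSet B →
      ∫ ω in X ⁻¹' B, G ω * (1 - A ω) * Y ω ∂ℙ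
        = ∫ ω in X ⁻¹' B, G ω * (1 - A ω) * μ0 (X ω) ∂ℙ)
    -- unconfoundedness: (Y(1), Y(0)) ⟂ A | X, G=1
    (hunconf : ∀ f : ℝ × ℝ → ℝ, Measurable f → (∃ C, ∀ p, |f p| ≤ C) →
      ∀ B : Set 𝓧, MeasurableSet B →
      ∫ ω in X ⁻¹' B, G ω * A ω * f (Y1 ω, Y0 ω) ∂ℙ
        = ∫ ω in X ⁻¹' B, G ω * e1 (X ω) * f (Y1 ω, Y0 ω) ∂ℙ)
    -- transportability: (Y(1), Y(0)) ⟂ G | X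
    (htrans : ∀ f : ℝ × ℝ → ℝ, Measurable f → (∃ C, ∀ p, |f p| ≤ C) →
      ∀ B : Set 𝓧, MeasurableSet B →
      ∫ ω in X ⁻¹' B, G ω * f (Y1 ω, Y0 ω) ∂ℙ
        = ∫ ω in X ⁻¹' B, s (X ω) * f (Y1 ω, Y0 ω) ∂ℙ)
    -- a policy
    (π : 𝓧 → ℝ) (hπmeas : Measurable π) (hπbin : ∀ x, π x = 0 ∨ π x = 1) :
    (1 / (1 - q)) * ∫ ω, (1 - G ω) * (π (X ω) * Y1 ω + (1 - π (X ω)) * Y0 ω) ∂ℙ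
      = ∫ ω, ((1 - G ω) / (1 - q))
          * (π (X ω) * μ1 (X ω) + (1 - π (X ω)) * μ0 (X ω)) ∂ℙ := by
  -- truncation functions and their properties
  have fmeasP1 : ∀ n : ℕ, Measurable (fun p : ℝ × ℝ => min (max p.1 0) (n:ℝ)) :=
    fun n => (measurable_fst.max measurable_const).min measurable_const
  have fmeasN1 : ∀ n : ℕ, Measurable (fun p : ℝ × ℝ => min (max (-p.1) 0) (n:ℝ)) :=
    fun n => (measurable_fst.neg.max measurable_const).min measurable_const
  have fmeasP0 : ∀ n : ℕ, Measurable (fun p : ℝ × ℝ => min (max p.2 0) (n:ℝ)) :=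
    fun n => (measurable_snd.max measurable_const).min measurable_const
  have fmeasN0 : ∀ n : ℕ, Measurable (fun p : ℝ × ℝ => min (max (-p.2) 0) (n:ℝ)) :=
    fun n => (measurable_snd.neg.max measurable_const).min measurable_const
  have fbnd : ∀ (n : ℕ) (r : ℝ), |min (max r 0) (n:ℝ)| ≤ (n:ℝ) := fun n r => by
    rw [abs_of_nonneg (le_min (le_max_right _ _) (Nat.cast_nonneg n))]
    exact min_le_right _ _
  -- binary facts
  have hbin1 : ∀ ω, (1:ℝ) - A ω = 0 ∨ (1:ℝ) - A ω = 1 := fun ω => by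
    rcases hAbin ω with h | h
    · right; rw [h]; ring
    · left; rw [h]; ring
  -- consistency pointwise
  have hcons1 : ∀ ω, G ω * A ω * Y ω = G ω * A ω * Y1 ω := fun ω => by
    rcases hAbin ω with h | h <;> rw [hYdef ω, h] <;> ring
  have hcons0 : ∀ ω, G ω * (1 - A ω) * Y ω = G ω * (1 - A ω) * Y0 ω := fun ω => by
    rcases hAbin ω with h | h <;> rw [hYdef ω, h] <;> ring
  have hver1 : ∀ B : Set 𝓧, MeasurableSet B → ∫ ω in X ⁻¹' B, G ω * A ω * Y1 ω ∂ℙ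
      = ∫ ω in X ⁻¹' B, G ω * A ω * μ1 (X ω) ∂ℙ := by
    intro B hB
    rw [← hμ1ver B hB]
    exact integral_congr_ae (ae_of_all _ fun ω => (hcons1 ω).symm)
  have hver0 : ∀ B : Set 𝓧, MeasurableSet B →
      ∫ ω in X ⁻¹' B, G ω * (1 - A ω) * Y0 ω ∂ℙ
        = ∫ ω in X ⁻¹' B, G ω * (1 - A ω) * μ0 (X ω) ∂ℙ := by
    intro B hB
    rw [← hμ0ver B hB]
    exact integral_congr_ae (ae_of_all _ fun ω => (hcons0 ω).symm)
  -- complementary unconfoundedness for arm 0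
  have hfae : ∀ f : ℝ × ℝ → ℝ, Measurable f →
      AEMeasurable (fun ω => f (Y1 ω, Y0 ω)) ℙ := fun f hf =>
    hf.comp_aemeasurable (hY1.aemeasurable.prodMk hY0.aemeasurable)
  have hunc0 : ∀ f : ℝ × ℝ → ℝ, Measurable f → (∃ C, ∀ p, |f p| ≤ C) →
      ∀ B : Set 𝓧, MeasurableSet B →
      ∫ ω in X ⁻¹' B, G ω * (1 - A ω) * f (Y1 ω, Y0 ω) ∂ℙ
        = ∫ ω in X ⁻¹' B, G ω * (1 - e1 (X ω)) * f (Y1 ω, Y0 ω) ∂ℙ := by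
    intro f hf hCb B hB
    obtain ⟨C, hC⟩ := hCb
    have hG1' : ∀ ω, |G ω| ≤ 1 := fun ω => by rcases hGbin ω with h | h <;> simp [h]
    have hGA1 : ∀ ω, |G ω * A ω| ≤ 1 := fun ω => by
      rcases hGbin ω with h | h <;> rcases hAbin ω with h' | h' <;> simp [h, h']
    have hGe1 : ∀ ω, |G ω * e1 (X ω)| ≤ 1 := fun ω => by
      rw [abs_mul]
      rcases hGbin ω with h | h
      · simp [h]
      · rw [h, abs_one, one_mul, abs_of_nonneg (hover (X ω)).1.le]
        exact (hover (X ω)).2.le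
    have i1 : Integrable (fun ω => G ω * f (Y1 ω, Y0 ω)) (ℙ.restrict (X ⁻¹' B)) :=
      bdd_int (f := fun ω => G ω * f (Y1 ω, Y0 ω)) (hG.aemeasurable.mul (hfae f hf)) (C := C) (fun ω => by
        rw [abs_mul]
        exact le_trans (mul_le_of_le_one_left (abs_nonneg _) (hG1' ω)) (hC _)) _
    have i2 : Integrable (fun ω => G ω * A ω * f (Y1 ω, Y0 ω)) (ℙ.restrict (X ⁻¹' B)) :=
      bdd_int (f := fun ω => G ω * A ω * f (Y1 ω, Y0 ω)) ((hG.mul hA).aemeasurable.mul (hfae f hf)) (C := C) (fun ω => by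
        rw [abs_mul]
        exact le_trans (mul_le_of_le_one_left (abs_nonneg _) (hGA1 ω)) (hC _)) _
    have i3 : Integrable (fun ω => G ω * e1 (X ω) * f (Y1 ω, Y0 ω))
        (ℙ.restrict (X ⁻¹' B)) :=
      bdd_int (f := fun ω => G ω * e1 (X ω) * f (Y1 ω, Y0 ω)) ((hG.mul (he1meas.comp hX)).aemeasurable.mul (hfae f hf)) (C := C)
        (fun ω => by
          rw [abs_mul]
          exact le_trans (mul_le_of_le_one_left (abs_nonneg _) (hGe1 ω)) (hC _)) _
    calc ∫ ω in X ⁻¹' B, G ω * (1 - A ω) * f (Y1 ω, Y0 ω) ∂ℙ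
        = ∫ ω in X ⁻¹' B, (G ω * f (Y1 ω, Y0 ω)
            - G ω * A ω * f (Y1 ω, Y0 ω)) ∂ℙ :=
          integral_congr_ae (ae_of_all _ fun ω => by ring)
      _ = (∫ ω in X ⁻¹' B, G ω * f (Y1 ω, Y0 ω) ∂ℙ)
            - ∫ ω in X ⁻¹' B, G ω * A ω * f (Y1 ω, Y0 ω) ∂ℙ := integral_sub i1 i2
      _ = (∫ ω in X ⁻¹' B, G ω * f (Y1 ω, Y0 ω) ∂ℙ)
            - ∫ ω in X ⁻¹' B, G ω * e1 (X ω) * f (Y1 ω, Y0 ω) ∂ℙ := by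
          rw [hunconf f hf ⟨C, hC⟩ B hB]
      _ = ∫ ω in X ⁻¹' B, (G ω * f (Y1 ω, Y0 ω)
            - G ω * e1 (X ω) * f (Y1 ω, Y0 ω)) ∂ℙ := (integral_sub i1 i3).symm
      _ = ∫ ω in X ⁻¹' B, G ω * (1 - e1 (X ω)) * f (Y1 ω, Y0 ω) ∂ℙ :=
          integral_congr_ae (ae_of_all _ fun ω => by ring)
  have hverA0 : ∀ B : Set 𝓧, MeasurableSet B →
      ∫ ω in X ⁻¹' B, G ω * (1 - A ω) ∂ℙ
        = ∫ ω in X ⁻¹' B, G ω * (1 - e1 (X ω)) ∂ℙ := by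
    intro B hB
    have := hunc0 (fun _ => (1:ℝ)) measurable_const ⟨1, fun p => by norm_num⟩ B hB
    simpa using this
  -- apply arm_core for arm 1
  have arm1 := arm_core (ℙ := ℙ) hX hG hGbin hA hAbin hY1 he1meas hsmeas hμ1meas
    hover hspos hver1 he1ver hsver
    (fun n B hB => hunconf (fun p => min (max p.1 0) (n:ℝ)) (fmeasP1 n)
      ⟨(n:ℝ), fun p => fbnd n p.1⟩ B hB)
    (fun n B hB => hunconf (fun p => min (max (-p.1) 0) (n:ℝ)) (fmeasN1 n)
      ⟨(n:ℝ), fun p => fbnd n (-p.1)⟩ B hB)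
    (fun n B hB => htrans (fun p => min (max p.1 0) (n:ℝ)) (fmeasP1 n)
      ⟨(n:ℝ), fun p => fbnd n p.1⟩ B hB)
    (fun n B hB => htrans (fun p => min (max (-p.1) 0) (n:ℝ)) (fmeasN1 n)
      ⟨(n:ℝ), fun p => fbnd n (-p.1)⟩ B hB)
  obtain ⟨int1, eq1⟩ := arm1
  -- apply arm_core for arm 0
  have arm0 := arm_core (ℙ := ℙ) hX hG hGbin (measurable_const.sub hA) hbin1 hY0
    (ebar := fun x => 1 - e1 x) (measurable_const.sub he1meas) hsmeas hμ0meas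
    (fun x => ⟨sub_pos.2 (hover x).2, sub_lt_self 1 (hover x).1⟩) hspos
    hver0 hverA0 hsver
    (fun n B hB => hunc0 (fun p => min (max p.2 0) (n:ℝ)) (fmeasP0 n)
      ⟨(n:ℝ), fun p => fbnd n p.2⟩ B hB)
    (fun n B hB => hunc0 (fun p => min (max (-p.2) 0) (n:ℝ)) (fmeasN0 n)
      ⟨(n:ℝ), fun p => fbnd n (-p.2)⟩ B hB)
    (fun n B hB => htrans (fun p => min (max p.2 0) (n:ℝ)) (fmeasP0 n)
      ⟨(n:ℝ), fun p => fbnd n p.2⟩ B hB)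
    (fun n B hB => htrans (fun p => min (max (-p.2) 0) (n:ℝ)) (fmeasN0 n)
      ⟨(n:ℝ), fun p => fbnd n (-p.2)⟩ B hB)
  obtain ⟨int0, eq0⟩ := arm0
  have hπ0 : ∀ x, 0 ≤ π x := fun x => by rcases hπbin x with h | h <;> simp [h]
  have hπ1 : ∀ x, π x ≤ 1 := fun x => by rcases hπbin x with h | h <;> simp [h]
  have e1q := eq1 π hπmeas hπ0 hπ1
  have e0q := eq0 (fun x => 1 - π x) (measurable_const.sub hπmeas)
    (fun x => sub_nonneg.2 (hπ1 x)) (fun x => sub_le_self 1 (hπ0 x))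
  -- integrability of summands
  have habsπX : ∀ ω, |π (X ω)| ≤ 1 := fun ω => abs_le.2 ⟨by linarith [hπ0 (X ω)], hπ1 (X ω)⟩
  have habsπX' : ∀ ω, |1 - π (X ω)| ≤ 1 := fun ω =>
    abs_le.2 ⟨by linarith [hπ1 (X ω)], by linarith [hπ0 (X ω)]⟩
  have habsG : ∀ ω, |1 - G ω| ≤ 1 := fun ω => by rcases hGbin ω with h | h <;> simp [h]
  have intiZ1 : Integrable (fun ω => π (X ω) * ((1 - G ω) * Y1 ω)) ℙ :=
    mul_int (mul_int hY1 (measurable_const.sub hG).aemeasurable habsG)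
      (hπmeas.comp hX).aemeasurable habsπX
  have intiZ0 : Integrable (fun ω => (1 - π (X ω)) * ((1 - G ω) * Y0 ω)) ℙ :=
    mul_int (mul_int hY0 (measurable_const.sub hG).aemeasurable habsG)
      ((measurable_const.sub (hπmeas.comp hX))).aemeasurable habsπX'
  have intiμ1 : Integrable (fun ω => π (X ω) * ((1 - G ω) * μ1 (X ω))) ℙ :=
    mul_int int1 (hπmeas.comp hX).aemeasurable habsπX
  have intiμ0 : Integrable (fun ω => (1 - π (X ω)) * ((1 - G ω) * μ0 (X ω))) ℙ :=
    mul_int int0 ((measurable_const.sub (hπmeas.comp hX))).aemeasurable habsπX'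
  calc (1 / (1 - q)) * ∫ ω, (1 - G ω) * (π (X ω) * Y1 ω + (1 - π (X ω)) * Y0 ω) ∂ℙ
      = (1 / (1 - q)) * ∫ ω, (π (X ω) * ((1 - G ω) * Y1 ω)
          + (1 - π (X ω)) * ((1 - G ω) * Y0 ω)) ∂ℙ := by
        congr 1
        exact integral_congr_ae (ae_of_all _ fun ω => by ring)
    _ = (1 / (1 - q)) * ((∫ ω, π (X ω) * ((1 - G ω) * Y1 ω) ∂ℙ)
          + ∫ ω, (1 - π (X ω)) * ((1 - G ω) * Y0 ω) ∂ℙ) := by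
        rw [integral_add intiZ1 intiZ0]
    _ = (1 / (1 - q)) * ((∫ ω, π (X ω) * ((1 - G ω) * μ1 (X ω)) ∂ℙ)
          + ∫ ω, (1 - π (X ω)) * ((1 - G ω) * μ0 (X ω)) ∂ℙ) := by
        rw [e1q, e0q]
    _ = (1 / (1 - q)) * ∫ ω, (π (X ω) * ((1 - G ω) * μ1 (X ω))
          + (1 - π (X ω)) * ((1 - G ω) * μ0 (X ω))) ∂ℙ := by
        rw [integral_add intiμ1 intiμ0]
    _ = ∫ ω, (1 / (1 - q)) * (π (X ω) * ((1 - G ω) * μ1 (X ω))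
          + (1 - π (X ω)) * ((1 - G ω) * μ0 (X ω))) ∂ℙ := (integral_const_mul _ _).symm
    _ = ∫ ω, ((1 - G ω) / (1 - q))
          * (π (X ω) * μ1 (X ω) + (1 - π (X ω)) * μ0 (X ω)) ∂ℙ :=
        integral_congr_ae (ae_of_all _ fun ω => by ring)
end

section
/- Under unconfoundedness, overlap, and transportability, the target-domain reward satisfies the inverse-probability-weighting identity: R(π) = E[ (G/(1−q)) · ((1−s(X))/s(X)) · { π(X)·A·Y/e₁(X) + (1−π(X))·(1−A)·Y/(1−e₁(X)) } ], where e₁(X) = P(A=1 | X, G=1), s(X) = P(G=1 | X), and q = P(G=1). -/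
open MeasureTheory

open ENNReal

namespace RewardIPWAux

variable {Ω : Type*} [MeasurableSpace Ω] {𝓧 : Type*} [MeasurableSpace 𝓧]

lemma weighted_of_sets (ℙ : Measure Ω) {X : Ω → 𝓧} (hX : Measurable X)
    {h k : Ω → ℝ≥0∞} (hh : AEMeasurable h ℙ) (hk : AEMeasurable k ℙ)
    (hset : ∀ B : Set 𝓧, MeasurableSet B →
      ∫⁻ ω in X ⁻¹' B, h ω ∂ℙ = ∫⁻ ω in X ⁻¹' B, k ω ∂ℙ)
    {a : 𝓧 → ℝ≥0∞} (ha : Measurable a) :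
    ∫⁻ ω, a (X ω) * h ω ∂ℙ = ∫⁻ ω, a (X ω) * k ω ∂ℙ := by
  have hmap : (ℙ.withDensity h).map X = (ℙ.withDensity k).map X := by
    ext B hB
    rw [Measure.map_apply hX hB, Measure.map_apply hX hB,
      withDensity_apply _ (hX hB), withDensity_apply _ (hX hB)]
    exact hset B hB
  have eh : ∫⁻ x, a x ∂((ℙ.withDensity h).map X) = ∫⁻ ω, a (X ω) * h ω ∂ℙ := by
    rw [lintegral_map ha hX,
      lintegral_withDensity_eq_lintegral_mul₀ (g := fun ω => a (X ω)) hh (ha.comp hX).aemeasurable]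
    exact lintegral_congr fun ω => mul_comm _ _
  have ek : ∫⁻ x, a x ∂((ℙ.withDensity k).map X) = ∫⁻ ω, a (X ω) * k ω ∂ℙ := by
    rw [lintegral_map ha hX,
      lintegral_withDensity_eq_lintegral_mul₀ (g := fun ω => a (X ω)) hk (ha.comp hX).aemeasurable]
    exact lintegral_congr fun ω => mul_comm _ _
  rw [← eh, ← ek, hmap]

lemma bint (ℙ : Measure Ω) [IsFiniteMeasure ℙ] {u : Ω → ℝ} (hu : AEMeasurable u ℙ)
    {C : ℝ} (hC : ∀ ω, |u ω| ≤ C) (S : Set Ω) : Integrable u (ℙ.restrict S) :=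
  (integrable_const C).mono' hu.restrict.aestronglyMeasurable
    (ae_of_all _ fun ω => by rw [Real.norm_eq_abs]; exact hC ω)

lemma min_abs_le {t : ℝ} (ht : 0 ≤ t) (n : ℕ) : |min t (n : ℝ)| ≤ (n : ℝ) := by
  rw [abs_of_nonneg (le_min ht (Nat.cast_nonneg n))]
  exact min_le_right _ _

lemma int_toReal (ℙ : Measure Ω) {f : Ω → ℝ} (hf : AEMeasurable f ℙ) (h0 : ∀ ω, 0 ≤ f ω)
    (hfin : ∫⁻ ω, ENNReal.ofReal (f ω) ∂ℙ ≠ ⊤) :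
    Integrable f ℙ ∧ ∫ ω, f ω ∂ℙ = (∫⁻ ω, ENNReal.ofReal (f ω) ∂ℙ).toReal := by
  have hi : Integrable f ℙ := by
    refine ⟨hf.aestronglyMeasurable, ?_⟩
    unfold MeasureTheory.HasFiniteIntegral
    have : ∀ ω, ‖f ω‖ₑ = ENNReal.ofReal (f ω) := fun ω =>
      Real.enorm_eq_ofReal (h0 ω)
    simp only [this]
    exact hfin.lt_top
  exact ⟨hi, integral_eq_lintegral_of_nonneg_ae (ae_of_all _ h0) hf.aestronglyMeasurable⟩

lemma approx (ℙ : Measure Ω) [IsProbabilityMeasure ℙ] {X : Ω → 𝓧} (hX : Measurable X)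
    {c d : Ω → ℝ} {T : Ω → ℝ}
    (hc : Measurable c) (hd : Measurable d) (hT : AEMeasurable T ℙ)
    (hc0 : ∀ ω, 0 ≤ c ω) (hc1 : ∀ ω, c ω ≤ 1)
    (hd0 : ∀ ω, 0 ≤ d ω) (hd1 : ∀ ω, d ω ≤ 1)
    (hT0 : ∀ ω, 0 ≤ T ω)
    (hset : ∀ B : Set 𝓧, MeasurableSet B → ∀ n : ℕ,
      ∫ ω in X ⁻¹' B, c ω * min (T ω) (n : ℝ) ∂ℙ
        = ∫ ω in X ⁻¹' B, d ω * min (T ω) (n : ℝ) ∂ℙ)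
    {a : 𝓧 → ℝ≥0∞} (ha : Measurable a) :
    ∫⁻ ω, a (X ω) * ENNReal.ofReal (c ω * T ω) ∂ℙ
      = ∫⁻ ω, a (X ω) * ENNReal.ofReal (d ω * T ω) ∂ℙ := by
  -- generic facts about e ∈ [0,1]
  have habs : ∀ (e : Ω → ℝ), (∀ ω, 0 ≤ e ω) → (∀ ω, e ω ≤ 1) → ∀ (n : ℕ) ω,
      |e ω * min (T ω) (n : ℝ)| ≤ (n : ℝ) := by
    intro e he0 he1 n ω
    rw [abs_mul]
    calc |e ω| * |min (T ω) (n:ℝ)| ≤ 1 * (n:ℝ) := by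
          apply mul_le_mul _ (min_abs_le (hT0 ω) n) (abs_nonneg _) zero_le_one
          rw [abs_of_nonneg (he0 ω)]; exact he1 ω
      _ = (n:ℝ) := one_mul _
  have key : ∀ n : ℕ,
      ∫⁻ ω, a (X ω) * ENNReal.ofReal (c ω * min (T ω) (n:ℝ)) ∂ℙ
        = ∫⁻ ω, a (X ω) * ENNReal.ofReal (d ω * min (T ω) (n:ℝ)) ∂ℙ := by
    intro n
    have hcm : AEMeasurable (fun ω => c ω * min (T ω) (n:ℝ)) ℙ :=
      hc.aemeasurable.mul (hT.min aemeasurable_const)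
    have hdm : AEMeasurable (fun ω => d ω * min (T ω) (n:ℝ)) ℙ :=
      hd.aemeasurable.mul (hT.min aemeasurable_const)
    refine weighted_of_sets ℙ hX
      (hcm.ennreal_ofReal)
      (hdm.ennreal_ofReal) ?_ ha
    intro B hB
    have n1 : ∀ ω, 0 ≤ c ω * min (T ω) (n:ℝ) :=
      fun ω => mul_nonneg (hc0 ω) (le_min (hT0 ω) (Nat.cast_nonneg n))
    have n2 : ∀ ω, 0 ≤ d ω * min (T ω) (n:ℝ) :=
      fun ω => mul_nonneg (hd0 ω) (le_min (hT0 ω) (Nat.cast_nonneg n))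
    rw [← ofReal_integral_eq_lintegral_ofReal (bint ℙ hcm (habs c hc0 hc1 n) _)
        (ae_of_all _ n1),
      ← ofReal_integral_eq_lintegral_ofReal (bint ℙ hdm (habs d hd0 hd1 n) _)
        (ae_of_all _ n2), hset B hB n]
  -- monotone convergence
  have hsup : ∀ (e : Ω → ℝ), (∀ ω, 0 ≤ e ω) → ∀ ω,
      (⨆ n : ℕ, a (X ω) * ENNReal.ofReal (e ω * min (T ω) (n:ℝ)))
        = a (X ω) * ENNReal.ofReal (e ω * T ω) := by
    intro e he0 ω
    refine le_antisymm (iSup_le fun n => ?_) (le_iSup_of_le ⌈T ω⌉₊ ?_)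
    · exact mul_le_mul_right (ENNReal.ofReal_le_ofReal
        (mul_le_mul_of_nonneg_left (min_le_left _ _) (he0 ω))) _
    · rw [min_eq_left (Nat.le_ceil _)]
  have hmono : ∀ (e : Ω → ℝ), (∀ ω, 0 ≤ e ω) →
      Monotone (fun (n : ℕ) (ω : Ω) => a (X ω) * ENNReal.ofReal (e ω * min (T ω) (n:ℝ))) := by
    intro e he0 m n hmn ω
    exact mul_le_mul_right (ENNReal.ofReal_le_ofReal
      (mul_le_mul_of_nonneg_left (min_le_min le_rfl (Nat.cast_le.2 hmn)) (he0 ω))) _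
  have hmc : ∀ (e : Ω → ℝ), Measurable e → (∀ ω, 0 ≤ e ω) → (∀ ω, e ω ≤ 1) →
      ∫⁻ ω, a (X ω) * ENNReal.ofReal (e ω * T ω) ∂ℙ
        = ⨆ n : ℕ, ∫⁻ ω, a (X ω) * ENNReal.ofReal (e ω * min (T ω) (n:ℝ)) ∂ℙ := by
    intro e he he0 he1
    have ham : AEMeasurable (fun ω => a (X ω)) ℙ := (ha.comp hX).aemeasurable
    rw [← lintegral_iSup' (f := fun (n : ℕ) ω => a (X ω) * ENNReal.ofReal (e ω * min (T ω) (n:ℝ))) (fun n => (ham.mul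
      (he.aemeasurable.mul (hT.min aemeasurable_const)).ennreal_ofReal))
      (ae_of_all _ fun ω m n hmn => hmono e he0 hmn ω)]
    exact lintegral_congr fun ω => (hsup e he0 ω).symm
  rw [hmc c hc hc0 hc1, hmc d hd hd0 hd1]
  exact iSup_congr key

lemma piece (ℙ : Measure Ω) [IsProbabilityMeasure ℙ] {X : Ω → 𝓧} (hX : Measurable X)
    {G : Ω → ℝ} (hG : Measurable G) (hGbin : ∀ ω, G ω = 0 ∨ G ω = 1)
    {s : 𝓧 → ℝ} (hs : Measurable s) (hspos : ∀ x, 0 < s x ∧ s x < 1)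
    {α : Ω → ℝ} {β : 𝓧 → ℝ} (hα : Measurable α) (hβ : Measurable β)
    (hα0 : ∀ ω, 0 ≤ α ω) (hα1 : ∀ ω, α ω ≤ 1)
    (hβ0 : ∀ x, 0 < β x) (hβ1 : ∀ x, β x ≤ 1)
    {T : Ω → ℝ} (hT : AEMeasurable T ℙ) (hT0 : ∀ ω, 0 ≤ T ω)
    (hTfin : ∫⁻ ω, ENNReal.ofReal (T ω) ∂ℙ ≠ ⊤)
    (hU : ∀ B : Set 𝓧, MeasurableSet B → ∀ n : ℕ,
      ∫ ω in X ⁻¹' B, (G ω * α ω) * min (T ω) (n:ℝ) ∂ℙ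
        = ∫ ω in X ⁻¹' B, (G ω * β (X ω)) * min (T ω) (n:ℝ) ∂ℙ)
    (hTr : ∀ B : Set 𝓧, MeasurableSet B → ∀ n : ℕ,
      ∫ ω in X ⁻¹' B, G ω * min (T ω) (n:ℝ) ∂ℙ
        = ∫ ω in X ⁻¹' B, s (X ω) * min (T ω) (n:ℝ) ∂ℙ)
    {a : 𝓧 → ℝ≥0∞} (ha : Measurable a) (ha1 : ∀ x, a x ≤ 1) :
    (∫⁻ ω, (a (X ω) * ENNReal.ofReal ((1 - s (X ω)) / (s (X ω) * β (X ω))))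
        * ENNReal.ofReal ((G ω * α ω) * T ω) ∂ℙ
      = ∫⁻ ω, a (X ω) * ENNReal.ofReal ((1 - G ω) * T ω) ∂ℙ)
    ∧ ∫⁻ ω, a (X ω) * ENNReal.ofReal ((1 - G ω) * T ω) ∂ℙ ≠ ⊤ := by
  have hG0 : ∀ ω, 0 ≤ G ω := fun ω => by rcases hGbin ω with h | h <;> rw [h] <;> norm_num
  have hG1 : ∀ ω, G ω ≤ 1 := fun ω => by rcases hGbin ω with h | h <;> rw [h] <;> norm_num
  have hs0 : ∀ x, 0 ≤ s x := fun x => (hspos x).1.le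
  have hs1 : ∀ x, s x ≤ 1 := fun x => (hspos x).2.le
  have hsne : ∀ x, s x ≠ 0 := fun x => (hspos x).1.ne'
  have hβne : ∀ x, β x ≠ 0 := fun x => (hβ0 x).ne'
  have hss1 : ∀ x, 0 ≤ 1 - s x := fun x => by linarith [(hspos x).2]
  have hmin0 : ∀ (n : ℕ) ω, 0 ≤ min (T ω) (n:ℝ) :=
    fun n ω => le_min (hT0 ω) (Nat.cast_nonneg n)
  -- step 1 : RHS = E
  have step1 : ∫⁻ ω, a (X ω) * ENNReal.ofReal ((1 - G ω) * T ω) ∂ℙ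
      = ∫⁻ ω, a (X ω) * ENNReal.ofReal ((1 - s (X ω)) * T ω) ∂ℙ := by
    refine approx ℙ hX (c := fun ω => 1 - G ω) (d := fun ω => 1 - s (X ω))
      (measurable_const.sub hG) (measurable_const.sub (hs.comp hX)) hT
      (fun ω => show (0:ℝ) ≤ 1 - G ω by linarith [hG1 ω])
      (fun ω => show (1:ℝ) - G ω ≤ 1 by linarith [hG0 ω])
      (fun ω => show (0:ℝ) ≤ 1 - s (X ω) from hss1 (X ω))
      (fun ω => show (1:ℝ) - s (X ω) ≤ 1 by linarith [hs0 (X ω)]) hT0 ?_ ha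
    intro B hB n
    have i1 : Integrable (fun ω => min (T ω) (n:ℝ)) (ℙ.restrict (X ⁻¹' B)) :=
      bint ℙ (hT.min aemeasurable_const) (fun ω => min_abs_le (hT0 ω) n) _
    have i2 : Integrable (fun ω => G ω * min (T ω) (n:ℝ)) (ℙ.restrict (X ⁻¹' B)) :=
      bint ℙ (u := fun ω => G ω * min (T ω) (n:ℝ)) (hG.aemeasurable.mul (hT.min aemeasurable_const))
        (fun ω => by
          rw [abs_mul, abs_of_nonneg (hG0 ω)]
          calc G ω * |min (T ω) (n:ℝ)| ≤ 1 * (n:ℝ) :=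
                mul_le_mul (hG1 ω) (min_abs_le (hT0 ω) n) (abs_nonneg _) zero_le_one
            _ = (n:ℝ) := one_mul _) _
    have hsXm : AEMeasurable (fun ω => s (X ω)) ℙ := (hs.comp hX).aemeasurable
    have i3 : Integrable (fun ω => s (X ω) * min (T ω) (n:ℝ)) (ℙ.restrict (X ⁻¹' B)) :=
      bint ℙ (u := fun ω => s (X ω) * min (T ω) (n:ℝ)) (hsXm.mul (hT.min aemeasurable_const))
        (fun ω => by
          rw [abs_mul, abs_of_nonneg (hs0 (X ω))]
          calc s (X ω) * |min (T ω) (n:ℝ)| ≤ 1 * (n:ℝ) :=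
                mul_le_mul (hs1 (X ω)) (min_abs_le (hT0 ω) n) (abs_nonneg _) zero_le_one
            _ = (n:ℝ) := one_mul _) _
    have e1 : (fun ω => (1 - G ω) * min (T ω) (n:ℝ))
        = fun ω => min (T ω) (n:ℝ) - G ω * min (T ω) (n:ℝ) := by
      funext ω; ring
    have e2 : (fun ω => (1 - s (X ω)) * min (T ω) (n:ℝ))
        = fun ω => min (T ω) (n:ℝ) - s (X ω) * min (T ω) (n:ℝ) := by
      funext ω; ring
    rw [e1, e2, integral_sub i1 i2, integral_sub i1 i3, hTr B hB n]
  -- step 2 : LHS = E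
  have step2 : ∫⁻ ω, (a (X ω) * ENNReal.ofReal ((1 - s (X ω)) / (s (X ω) * β (X ω))))
      * ENNReal.ofReal ((G ω * α ω) * T ω) ∂ℙ
      = ∫⁻ ω, a (X ω) * ENNReal.ofReal ((1 - s (X ω)) * T ω) ∂ℙ := by
    have hw : Measurable fun x => a x * ENNReal.ofReal ((1 - s x) / (s x * β x)) :=
      ha.mul ((measurable_const.sub hs).div (hs.mul hβ)).ennreal_ofReal
    have l1 : ∫⁻ ω, (a (X ω) * ENNReal.ofReal ((1 - s (X ω)) / (s (X ω) * β (X ω))))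
        * ENNReal.ofReal ((G ω * α ω) * T ω) ∂ℙ
        = ∫⁻ ω, (a (X ω) * ENNReal.ofReal ((1 - s (X ω)) / (s (X ω) * β (X ω))))
        * ENNReal.ofReal ((G ω * β (X ω)) * T ω) ∂ℙ :=
      approx ℙ hX (c := fun ω => G ω * α ω) (d := fun ω => G ω * β (X ω))
        (hG.mul hα) (hG.mul (hβ.comp hX)) hT
        (fun ω => mul_nonneg (hG0 ω) (hα0 ω))
        (fun ω => mul_le_one₀ (hG1 ω) (hα0 ω) (hα1 ω))
        (fun ω => mul_nonneg (hG0 ω) (hβ0 (X ω)).le)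
        (fun ω => mul_le_one₀ (hG1 ω) (hβ0 (X ω)).le (hβ1 (X ω)))
        hT0 hU hw
    have l2 : ∫⁻ ω, (a (X ω) * ENNReal.ofReal ((1 - s (X ω)) / (s (X ω) * β (X ω))))
        * ENNReal.ofReal ((G ω * β (X ω)) * T ω) ∂ℙ
        = ∫⁻ ω, ((a (X ω) * ENNReal.ofReal ((1 - s (X ω)) / (s (X ω) * β (X ω))))
            * ENNReal.ofReal (β (X ω))) * ENNReal.ofReal (G ω * T ω) ∂ℙ := by
      refine lintegral_congr fun ω => ?_
      have hb : ENNReal.ofReal ((G ω * β (X ω)) * T ω)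
          = ENNReal.ofReal (β (X ω)) * ENNReal.ofReal (G ω * T ω) := by
        rw [← ENNReal.ofReal_mul (hβ0 (X ω)).le]
        congr 1
        ring
      rw [hb, ← mul_assoc]
    have hw2 : Measurable fun x =>
        (a x * ENNReal.ofReal ((1 - s x) / (s x * β x))) * ENNReal.ofReal (β x) :=
      hw.mul hβ.ennreal_ofReal
    have l3 : ∫⁻ ω, ((a (X ω) * ENNReal.ofReal ((1 - s (X ω)) / (s (X ω) * β (X ω))))
            * ENNReal.ofReal (β (X ω))) * ENNReal.ofReal (G ω * T ω) ∂ℙ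
        = ∫⁻ ω, ((a (X ω) * ENNReal.ofReal ((1 - s (X ω)) / (s (X ω) * β (X ω))))
            * ENNReal.ofReal (β (X ω))) * ENNReal.ofReal (s (X ω) * T ω) ∂ℙ :=
      approx ℙ hX (c := G) (d := fun ω => s (X ω)) hG (hs.comp hX) hT
        hG0 hG1 (fun ω => hs0 (X ω)) (fun ω => hs1 (X ω)) hT0 hTr hw2
    have l4 : ∫⁻ ω, ((a (X ω) * ENNReal.ofReal ((1 - s (X ω)) / (s (X ω) * β (X ω))))
            * ENNReal.ofReal (β (X ω))) * ENNReal.ofReal (s (X ω) * T ω) ∂ℙ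
        = ∫⁻ ω, a (X ω) * ENNReal.ofReal ((1 - s (X ω)) * T ω) ∂ℙ := by
      refine lintegral_congr fun ω => ?_
      have hw0 : (0:ℝ) ≤ (1 - s (X ω)) / (s (X ω) * β (X ω)) :=
        div_nonneg (hss1 _) (mul_nonneg (hs0 _) (hβ0 _).le)
      have h1 : ENNReal.ofReal ((1 - s (X ω)) / (s (X ω) * β (X ω)))
            * ENNReal.ofReal (β (X ω))
          = ENNReal.ofReal ((1 - s (X ω)) / (s (X ω) * β (X ω)) * β (X ω)) :=
        (ENNReal.ofReal_mul hw0).symm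
      have h2 : ENNReal.ofReal ((1 - s (X ω)) / (s (X ω) * β (X ω)) * β (X ω))
            * ENNReal.ofReal (s (X ω) * T ω)
          = ENNReal.ofReal (((1 - s (X ω)) / (s (X ω) * β (X ω)) * β (X ω))
              * (s (X ω) * T ω)) :=
        (ENNReal.ofReal_mul (mul_nonneg hw0 (hβ0 _).le)).symm
      rw [mul_assoc (a (X ω)), h1, mul_assoc (a (X ω)), h2]
      congr 2
      rw [div_mul_eq_mul_div, div_mul_eq_mul_div, div_eq_iff (by
        exact mul_ne_zero (hsne (X ω)) (hβne (X ω)))]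
      ring
    rw [l1, l2, l3, l4]
  -- finiteness
  have hfin : ∫⁻ ω, a (X ω) * ENNReal.ofReal ((1 - s (X ω)) * T ω) ∂ℙ ≠ ⊤ := by
    refine ne_top_of_le_ne_top hTfin (lintegral_mono fun ω => ?_)
    calc a (X ω) * ENNReal.ofReal ((1 - s (X ω)) * T ω)
        ≤ 1 * ENNReal.ofReal (1 * T ω) := by
          refine mul_le_mul' (ha1 _) (ENNReal.ofReal_le_ofReal ?_)
          exact mul_le_mul_of_nonneg_right (by linarith [hs0 (X ω)]) (hT0 ω)
      _ = ENNReal.ofReal (T ω) := by rw [one_mul, one_mul]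
  exact ⟨step2.trans step1.symm, by rw [step1]; exact hfin⟩

end RewardIPWAux

open RewardIPWAux


/-- Under unconfoundedness, overlap and transportability, the target-domain
reward satisfies the inverse-probability-weighting identity
`R(π) = E[(G/(1−q))·((1−s(X))/s(X))·{π(X)AY/e₁(X) + (1−π(X))(1−A)Y/(1−e₁(X))}]`. -/
theorem reward_ipw_identity
    {Ω : Type*} [MeasurableSpace Ω] (ℙ : Measure Ω) [IsProbabilityMeasure ℙ]
    {𝓧 : Type*} [MeasurableSpace 𝓧]
    (X : Ω → 𝓧) (A G Y1 Y0 : Ω → ℝ)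
    (hX : Measurable X) (hA : Measurable A) (hG : Measurable G)
    (hY1 : Integrable Y1 ℙ) (hY0 : Integrable Y0 ℙ)
    (hAbin : ∀ ω, A ω = 0 ∨ A ω = 1) (hGbin : ∀ ω, G ω = 0 ∨ G ω = 1)
    -- consistency: observed outcome
    (Y : Ω → ℝ) (hYdef : ∀ ω, Y ω = A ω * Y1 ω + (1 - A ω) * Y0 ω)
    (q : ℝ) (hq : q = ∫ ω, G ω ∂ℙ) (hq0 : 0 < q) (hq1 : q < 1)
    (e1 s μ1 μ0 : 𝓧 → ℝ)
    (he1meas : Measurable e1) (hsmeas : Measurable s)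
    (hμ1meas : Measurable μ1) (hμ0meas : Measurable μ0)
    -- overlap: 0 < e₁(X) < 1
    (hover : ∀ x, 0 < e1 x ∧ e1 x < 1)
    -- positivity of the sampling score: 0 < s(X) < 1
    (hspos : ∀ x, 0 < s x ∧ s x < 1)
    -- e₁ is a version of P(A=1 | X, G=1)
    (he1ver : ∀ B : Set 𝓧, MeasurableSet B →
      ∫ ω in X ⁻¹' B, G ω * A ω ∂ℙ = ∫ ω in X ⁻¹' B, G ω * e1 (X ω) ∂ℙ)
    -- s is a version of P(G=1 | X)
    (hsver : ∀ B : Set 𝓧, MeasurableSet B →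
      ∫ ω in X ⁻¹' B, G ω ∂ℙ = ∫ ω in X ⁻¹' B, s (X ω) ∂ℙ)
    -- μ₁ is a version of E[Y | X, A=1, G=1]
    (hμ1ver : ∀ B : Set 𝓧, MeasurableSet B →
      ∫ ω in X ⁻¹' B, G ω * A ω * Y ω ∂ℙ = ∫ ω in X ⁻¹' B, G ω * A ω * μ1 (X ω) ∂ℙ)
    -- μ₀ is a version of E[Y | X, A=0, G=1]
    (hμ0ver : ∀ B : Set 𝓧, MeasurableSet B →
      ∫ ω in X ⁻¹' B, G ω * (1 - A ω) * Y ω ∂ℙ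
        = ∫ ω in X ⁻¹' B, G ω * (1 - A ω) * μ0 (X ω) ∂ℙ)
    -- unconfoundedness: (Y(1), Y(0)) ⟂ A | X, G=1
    (hunconf : ∀ f : ℝ × ℝ → ℝ, Measurable f → (∃ C, ∀ p, |f p| ≤ C) →
      ∀ B : Set 𝓧, MeasurableSet B →
      ∫ ω in X ⁻¹' B, G ω * A ω * f (Y1 ω, Y0 ω) ∂ℙ
        = ∫ ω in X ⁻¹' B, G ω * e1 (X ω) * f (Y1 ω, Y0 ω) ∂ℙ)
    -- transportability: (Y(1), Y(0)) ⟂ G | X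
    (htrans : ∀ f : ℝ × ℝ → ℝ, Measurable f → (∃ C, ∀ p, |f p| ≤ C) →
      ∀ B : Set 𝓧, MeasurableSet B →
      ∫ ω in X ⁻¹' B, G ω * f (Y1 ω, Y0 ω) ∂ℙ
        = ∫ ω in X ⁻¹' B, s (X ω) * f (Y1 ω, Y0 ω) ∂ℙ)
    -- a policy
    (π : 𝓧 → ℝ) (hπmeas : Measurable π) (hπbin : ∀ x, π x = 0 ∨ π x = 1) :
    (1 / (1 - q)) * ∫ ω, (1 - G ω) * (π (X ω) * Y1 ω + (1 - π (X ω)) * Y0 ω) ∂ℙ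
      = ∫ ω, (G ω / (1 - q)) * ((1 - s (X ω)) / s (X ω))
          * (π (X ω) * A ω * Y ω / e1 (X ω)
              + (1 - π (X ω)) * (1 - A ω) * Y ω / (1 - e1 (X ω))) ∂ℙ := by
  -- basic facts
  have hπ0 : ∀ x, 0 ≤ π x := fun x => by rcases hπbin x with h | h <;> rw [h] <;> norm_num
  have hπ1 : ∀ x, π x ≤ 1 := fun x => by rcases hπbin x with h | h <;> rw [h] <;> norm_num
  have hA0 : ∀ ω, 0 ≤ A ω := fun ω => by rcases hAbin ω with h | h <;> rw [h] <;> norm_num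
  have hA1 : ∀ ω, A ω ≤ 1 := fun ω => by rcases hAbin ω with h | h <;> rw [h] <;> norm_num
  have hG0 : ∀ ω, 0 ≤ G ω := fun ω => by rcases hGbin ω with h | h <;> rw [h] <;> norm_num
  have hG1 : ∀ ω, G ω ≤ 1 := fun ω => by rcases hGbin ω with h | h <;> rw [h] <;> norm_num
  have hsne : ∀ x, s x ≠ 0 := fun x => (hspos x).1.ne'
  have hs0 : ∀ x, 0 ≤ s x := fun x => (hspos x).1.le
  have hss0 : ∀ x, 0 ≤ 1 - s x := fun x => by linarith [(hspos x).2]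
  have he1ne : ∀ x, e1 x ≠ 0 := fun x => (hover x).1.ne'
  have h1e1ne : ∀ x, (1:ℝ) - e1 x ≠ 0 := fun x => by
    have := (hover x).2; intro h; linarith [sub_eq_zero.mp h]
  have h1e1pos : ∀ x, (0:ℝ) < 1 - e1 x := fun x => by linarith [(hover x).2]
  have hqne : (1:ℝ) - q ≠ 0 := fun h => by linarith [sub_eq_zero.mp h]
  have hY1m : AEMeasurable Y1 ℙ := hY1.aemeasurable
  have hY0m : AEMeasurable Y0 ℙ := hY0.aemeasurable
  have hmax : ∀ r : ℝ, max r 0 - max (-r) 0 = r := fun r => by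
    rcases le_total r 0 with h | h
    · rw [max_eq_right h, max_eq_left (neg_nonneg.2 h)]; ring
    · rw [max_eq_left h, max_eq_right (neg_nonpos.2 h)]; ring
  -- nonneg/measurable T's
  have hT1pm : AEMeasurable (fun ω => max (Y1 ω) 0) ℙ := hY1m.max aemeasurable_const
  have hT1mm : AEMeasurable (fun ω => max (-Y1 ω) 0) ℙ := hY1m.neg.max aemeasurable_const
  have hT0pm : AEMeasurable (fun ω => max (Y0 ω) 0) ℙ := hY0m.max aemeasurable_const
  have hT0mm : AEMeasurable (fun ω => max (-Y0 ω) 0) ℙ := hY0m.neg.max aemeasurable_const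
  have hT1p0 : ∀ ω, 0 ≤ max (Y1 ω) 0 := fun ω => le_max_right _ _
  have hT1m0 : ∀ ω, 0 ≤ max (-Y1 ω) 0 := fun ω => le_max_right _ _
  have hT0p0 : ∀ ω, 0 ≤ max (Y0 ω) 0 := fun ω => le_max_right _ _
  have hT0m0 : ∀ ω, 0 ≤ max (-Y0 ω) 0 := fun ω => le_max_right _ _
  -- finiteness of T lintegrals
  have habs1 : ∫⁻ ω, ENNReal.ofReal |Y1 ω| ∂ℙ ≠ ⊤ := by
    rw [← ofReal_integral_eq_lintegral_ofReal hY1.abs (ae_of_all _ fun ω => abs_nonneg _)]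
    exact ENNReal.ofReal_ne_top
  have habs0 : ∫⁻ ω, ENNReal.ofReal |Y0 ω| ∂ℙ ≠ ⊤ := by
    rw [← ofReal_integral_eq_lintegral_ofReal hY0.abs (ae_of_all _ fun ω => abs_nonneg _)]
    exact ENNReal.ofReal_ne_top
  have hfin1p : ∫⁻ ω, ENNReal.ofReal (max (Y1 ω) 0) ∂ℙ ≠ ⊤ :=
    ne_top_of_le_ne_top habs1 (lintegral_mono fun ω =>
      ENNReal.ofReal_le_ofReal (max_le (le_abs_self _) (abs_nonneg _)))
  have hfin1m : ∫⁻ ω, ENNReal.ofReal (max (-Y1 ω) 0) ∂ℙ ≠ ⊤ :=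
    ne_top_of_le_ne_top habs1 (lintegral_mono fun ω =>
      ENNReal.ofReal_le_ofReal (max_le (neg_le_abs _) (abs_nonneg _)))
  have hfin0p : ∫⁻ ω, ENNReal.ofReal (max (Y0 ω) 0) ∂ℙ ≠ ⊤ :=
    ne_top_of_le_ne_top habs0 (lintegral_mono fun ω =>
      ENNReal.ofReal_le_ofReal (max_le (le_abs_self _) (abs_nonneg _)))
  have hfin0m : ∫⁻ ω, ENNReal.ofReal (max (-Y0 ω) 0) ∂ℙ ≠ ⊤ :=
    ne_top_of_le_ne_top habs0 (lintegral_mono fun ω =>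
      ENNReal.ofReal_le_ofReal (max_le (neg_le_abs _) (abs_nonneg _)))
  -- bounded integrability helper
  have ibnd : ∀ (u : Ω → ℝ), AEMeasurable u ℙ → (∀ ω, 0 ≤ u ω) → (∀ ω, u ω ≤ 1) →
      ∀ (T : Ω → ℝ), AEMeasurable T ℙ → (∀ ω, 0 ≤ T ω) → ∀ (n : ℕ) (S : Set Ω),
      Integrable (fun ω => u ω * min (T ω) (n:ℝ)) (ℙ.restrict S) := by
    intro u hu hu0 hu1 T hT hT0 n S
    refine bint ℙ (u := fun ω => u ω * min (T ω) (n:ℝ)) (C := (n:ℝ)) (hu.mul (hT.min aemeasurable_const)) (fun ω => ?_) S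
    rw [abs_mul, abs_of_nonneg (hu0 ω)]
    calc u ω * |min (T ω) (n:ℝ)| ≤ 1 * (n:ℝ) :=
          mul_le_mul (hu1 ω) (min_abs_le (hT0 ω) n) (abs_nonneg _) zero_le_one
      _ = (n:ℝ) := one_mul _
  -- truncation test functions
  have hf1 : ∀ n : ℕ, Measurable (fun p : ℝ × ℝ => min (max p.1 0) (n:ℝ)) :=
    fun n => (measurable_fst.max measurable_const).min measurable_const
  have hf1' : ∀ n : ℕ, Measurable (fun p : ℝ × ℝ => min (max (-p.1) 0) (n:ℝ)) :=
    fun n => (measurable_fst.neg.max measurable_const).min measurable_const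
  have hf0 : ∀ n : ℕ, Measurable (fun p : ℝ × ℝ => min (max p.2 0) (n:ℝ)) :=
    fun n => (measurable_snd.max measurable_const).min measurable_const
  have hf0' : ∀ n : ℕ, Measurable (fun p : ℝ × ℝ => min (max (-p.2) 0) (n:ℝ)) :=
    fun n => (measurable_snd.neg.max measurable_const).min measurable_const
  have hbd : ∀ (n : ℕ) (r : ℝ), |min (max r 0) (n:ℝ)| ≤ (n:ℝ) := fun n r => by
    rw [abs_of_nonneg (le_min (le_max_right _ _) (Nat.cast_nonneg n))]
    exact min_le_right _ _
  -- hU families (unconfoundedness with A)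
  have hU1p : ∀ B : Set 𝓧, MeasurableSet B → ∀ n : ℕ,
      ∫ ω in X ⁻¹' B, (G ω * A ω) * min (max (Y1 ω) 0) (n:ℝ) ∂ℙ
        = ∫ ω in X ⁻¹' B, (G ω * e1 (X ω)) * min (max (Y1 ω) 0) (n:ℝ) ∂ℙ := by
    intro B hB n
    exact hunconf _ (hf1 n) ⟨n, fun p => hbd n p.1⟩ B hB
  have hU1m : ∀ B : Set 𝓧, MeasurableSet B → ∀ n : ℕ,
      ∫ ω in X ⁻¹' B, (G ω * A ω) * min (max (-Y1 ω) 0) (n:ℝ) ∂ℙ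
        = ∫ ω in X ⁻¹' B, (G ω * e1 (X ω)) * min (max (-Y1 ω) 0) (n:ℝ) ∂ℙ := by
    intro B hB n
    exact hunconf _ (hf1' n) ⟨n, fun p => hbd n (-p.1)⟩ B hB
  have hU0p : ∀ B : Set 𝓧, MeasurableSet B → ∀ n : ℕ,
      ∫ ω in X ⁻¹' B, (G ω * A ω) * min (max (Y0 ω) 0) (n:ℝ) ∂ℙ
        = ∫ ω in X ⁻¹' B, (G ω * e1 (X ω)) * min (max (Y0 ω) 0) (n:ℝ) ∂ℙ := by
    intro B hB n
    exact hunconf _ (hf0 n) ⟨n, fun p => hbd n p.2⟩ B hB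
  have hU0m : ∀ B : Set 𝓧, MeasurableSet B → ∀ n : ℕ,
      ∫ ω in X ⁻¹' B, (G ω * A ω) * min (max (-Y0 ω) 0) (n:ℝ) ∂ℙ
        = ∫ ω in X ⁻¹' B, (G ω * e1 (X ω)) * min (max (-Y0 ω) 0) (n:ℝ) ∂ℙ := by
    intro B hB n
    exact hunconf _ (hf0' n) ⟨n, fun p => hbd n (-p.2)⟩ B hB
  -- hTr families (transportability)
  have hTr1p : ∀ B : Set 𝓧, MeasurableSet B → ∀ n : ℕ,
      ∫ ω in X ⁻¹' B, G ω * min (max (Y1 ω) 0) (n:ℝ) ∂ℙ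
        = ∫ ω in X ⁻¹' B, s (X ω) * min (max (Y1 ω) 0) (n:ℝ) ∂ℙ := by
    intro B hB n
    exact htrans _ (hf1 n) ⟨n, fun p => hbd n p.1⟩ B hB
  have hTr1m : ∀ B : Set 𝓧, MeasurableSet B → ∀ n : ℕ,
      ∫ ω in X ⁻¹' B, G ω * min (max (-Y1 ω) 0) (n:ℝ) ∂ℙ
        = ∫ ω in X ⁻¹' B, s (X ω) * min (max (-Y1 ω) 0) (n:ℝ) ∂ℙ := by
    intro B hB n
    exact htrans _ (hf1' n) ⟨n, fun p => hbd n (-p.1)⟩ B hB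
  have hTr0p : ∀ B : Set 𝓧, MeasurableSet B → ∀ n : ℕ,
      ∫ ω in X ⁻¹' B, G ω * min (max (Y0 ω) 0) (n:ℝ) ∂ℙ
        = ∫ ω in X ⁻¹' B, s (X ω) * min (max (Y0 ω) 0) (n:ℝ) ∂ℙ := by
    intro B hB n
    exact htrans _ (hf0 n) ⟨n, fun p => hbd n p.2⟩ B hB
  have hTr0m : ∀ B : Set 𝓧, MeasurableSet B → ∀ n : ℕ,
      ∫ ω in X ⁻¹' B, G ω * min (max (-Y0 ω) 0) (n:ℝ) ∂ℙ
        = ∫ ω in X ⁻¹' B, s (X ω) * min (max (-Y0 ω) 0) (n:ℝ) ∂ℙ := by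
    intro B hB n
    exact htrans _ (hf0' n) ⟨n, fun p => hbd n (-p.2)⟩ B hB
  -- derived hU for 1 - A
  have hUc : ∀ (T : Ω → ℝ), AEMeasurable T ℙ → (∀ ω, 0 ≤ T ω) →
      (∀ B : Set 𝓧, MeasurableSet B → ∀ n : ℕ,
        ∫ ω in X ⁻¹' B, (G ω * A ω) * min (T ω) (n:ℝ) ∂ℙ
          = ∫ ω in X ⁻¹' B, (G ω * e1 (X ω)) * min (T ω) (n:ℝ) ∂ℙ) →
      ∀ B : Set 𝓧, MeasurableSet B → ∀ n : ℕ,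
        ∫ ω in X ⁻¹' B, (G ω * (1 - A ω)) * min (T ω) (n:ℝ) ∂ℙ
          = ∫ ω in X ⁻¹' B, (G ω * (1 - e1 (X ω))) * min (T ω) (n:ℝ) ∂ℙ := by
    intro T hTm hT0 hU B hB n
    have iG : Integrable (fun ω => G ω * min (T ω) (n:ℝ)) (ℙ.restrict (X ⁻¹' B)) :=
      ibnd G hG.aemeasurable hG0 hG1 T hTm hT0 n _
    have iGA : Integrable (fun ω => (G ω * A ω) * min (T ω) (n:ℝ)) (ℙ.restrict (X ⁻¹' B)) :=
      ibnd _ (hG.mul hA).aemeasurable (fun ω => mul_nonneg (hG0 ω) (hA0 ω))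
        (fun ω => mul_le_one₀ (hG1 ω) (hA0 ω) (hA1 ω)) T hTm hT0 n _
    have iGe : Integrable (fun ω => (G ω * e1 (X ω)) * min (T ω) (n:ℝ))
        (ℙ.restrict (X ⁻¹' B)) :=
      ibnd _ (hG.mul (he1meas.comp hX)).aemeasurable
        (fun ω => mul_nonneg (hG0 ω) (hover (X ω)).1.le)
        (fun ω => mul_le_one₀ (hG1 ω) (hover (X ω)).1.le (hover (X ω)).2.le) T hTm hT0 n _
    have e1' : (fun ω => (G ω * (1 - A ω)) * min (T ω) (n:ℝ))
        = fun ω => G ω * min (T ω) (n:ℝ) - (G ω * A ω) * min (T ω) (n:ℝ) := by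
      funext ω; ring
    have e2' : (fun ω => (G ω * (1 - e1 (X ω))) * min (T ω) (n:ℝ))
        = fun ω => G ω * min (T ω) (n:ℝ) - (G ω * e1 (X ω)) * min (T ω) (n:ℝ) := by
      funext ω; ring
    rw [e1', e2', integral_sub iG iGA, integral_sub iG iGe, hU B hB n]
  -- more nonneg facts and measurability
  have hGc0 : ∀ ω, (0:ℝ) ≤ 1 - G ω := fun ω => by linarith [hG1 ω]
  have hπc0 : ∀ x, (0:ℝ) ≤ 1 - π x := fun x => by linarith [hπ1 x]
  have hAc0 : ∀ ω, (0:ℝ) ≤ 1 - A ω := fun ω => by linarith [hA1 ω]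
  have hw1nn : ∀ x, (0:ℝ) ≤ (1 - s x) / (s x * e1 x) :=
    fun x => div_nonneg (hss0 x) (mul_nonneg (hs0 x) (hover x).1.le)
  have hw0nn : ∀ x, (0:ℝ) ≤ (1 - s x) / (s x * (1 - e1 x)) :=
    fun x => div_nonneg (hss0 x) (mul_nonneg (hs0 x) (h1e1pos x).le)
  have mπX : AEMeasurable (fun ω => π (X ω)) ℙ := (hπmeas.comp hX).aemeasurable
  have mπcX : AEMeasurable (fun ω => 1 - π (X ω)) ℙ :=
    ((measurable_const.sub hπmeas).comp hX).aemeasurable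
  have mw1X : AEMeasurable (fun ω => (1 - s (X ω)) / (s (X ω) * e1 (X ω))) ℙ :=
    (((measurable_const.sub hsmeas).div (hsmeas.mul he1meas)).comp hX).aemeasurable
  have mw0X : AEMeasurable (fun ω => (1 - s (X ω)) / (s (X ω) * (1 - e1 (X ω)))) ℙ :=
    (((measurable_const.sub hsmeas).div
      (hsmeas.mul (measurable_const.sub he1meas))).comp hX).aemeasurable
  have mGc : AEMeasurable (fun ω => 1 - G ω) ℙ := (measurable_const.sub hG).aemeasurable
  have mGA : AEMeasurable (fun ω => G ω * A ω) ℙ := (hG.mul hA).aemeasurable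
  have mGAc : AEMeasurable (fun ω => G ω * (1 - A ω)) ℙ :=
    (hG.mul (measurable_const.sub hA)).aemeasurable
  -- the four piece identities
  have P1p :
      (∫⁻ ω, (ENNReal.ofReal (π (X ω)) * ENNReal.ofReal ((1 - s (X ω)) / (s (X ω) * e1 (X ω))))
          * ENNReal.ofReal ((G ω * A ω) * max (Y1 ω) 0) ∂ℙ
        = ∫⁻ ω, ENNReal.ofReal (π (X ω)) * ENNReal.ofReal ((1 - G ω) * max (Y1 ω) 0) ∂ℙ)
      ∧ ∫⁻ ω, ENNReal.ofReal (π (X ω)) * ENNReal.ofReal ((1 - G ω) * max (Y1 ω) 0) ∂ℙ ≠ ⊤ :=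
    piece ℙ hX hG hGbin hsmeas hspos hA he1meas hA0 hA1 (fun x => (hover x).1)
      (fun x => (hover x).2.le) hT1pm hT1p0 hfin1p hU1p hTr1p hπmeas.ennreal_ofReal
      (fun x => ENNReal.ofReal_le_one.2 (hπ1 x))
  have P1m :
      (∫⁻ ω, (ENNReal.ofReal (π (X ω)) * ENNReal.ofReal ((1 - s (X ω)) / (s (X ω) * e1 (X ω))))
          * ENNReal.ofReal ((G ω * A ω) * max (-Y1 ω) 0) ∂ℙ
        = ∫⁻ ω, ENNReal.ofReal (π (X ω)) * ENNReal.ofReal ((1 - G ω) * max (-Y1 ω) 0) ∂ℙ)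
      ∧ ∫⁻ ω, ENNReal.ofReal (π (X ω)) * ENNReal.ofReal ((1 - G ω) * max (-Y1 ω) 0) ∂ℙ ≠ ⊤ :=
    piece ℙ hX hG hGbin hsmeas hspos hA he1meas hA0 hA1 (fun x => (hover x).1)
      (fun x => (hover x).2.le) hT1mm hT1m0 hfin1m hU1m hTr1m hπmeas.ennreal_ofReal
      (fun x => ENNReal.ofReal_le_one.2 (hπ1 x))
  have P0p :
      (∫⁻ ω, (ENNReal.ofReal ((1 - π (X ω))) * ENNReal.ofReal ((1 - s (X ω)) / (s (X ω) * (1 - e1 (X ω)))))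
          * ENNReal.ofReal ((G ω * (1 - A ω)) * max (Y0 ω) 0) ∂ℙ
        = ∫⁻ ω, ENNReal.ofReal ((1 - π (X ω))) * ENNReal.ofReal ((1 - G ω) * max (Y0 ω) 0) ∂ℙ)
      ∧ ∫⁻ ω, ENNReal.ofReal ((1 - π (X ω))) * ENNReal.ofReal ((1 - G ω) * max (Y0 ω) 0) ∂ℙ ≠ ⊤ :=
    piece ℙ hX hG hGbin hsmeas hspos (measurable_const.sub hA) (measurable_const.sub he1meas) hAc0 (fun ω => show (1:ℝ) - A ω ≤ 1 by linarith [hA0 ω]) h1e1pos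
      (fun x => show (1:ℝ) - e1 x ≤ 1 by linarith [(hover x).1]) hT0pm hT0p0 hfin0p (hUc _ hT0pm hT0p0 hU0p) hTr0p (measurable_const.sub hπmeas).ennreal_ofReal
      (fun x => ENNReal.ofReal_le_one.2 (by show 1 - π x ≤ 1; linarith [hπ0 x]))
  have P0m :
      (∫⁻ ω, (ENNReal.ofReal ((1 - π (X ω))) * ENNReal.ofReal ((1 - s (X ω)) / (s (X ω) * (1 - e1 (X ω)))))
          * ENNReal.ofReal ((G ω * (1 - A ω)) * max (-Y0 ω) 0) ∂ℙ
        = ∫⁻ ω, ENNReal.ofReal ((1 - π (X ω))) * ENNReal.ofReal ((1 - G ω) * max (-Y0 ω) 0) ∂ℙ)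
      ∧ ∫⁻ ω, ENNReal.ofReal ((1 - π (X ω))) * ENNReal.ofReal ((1 - G ω) * max (-Y0 ω) 0) ∂ℙ ≠ ⊤ :=
    piece ℙ hX hG hGbin hsmeas hspos (measurable_const.sub hA) (measurable_const.sub he1meas) hAc0 (fun ω => show (1:ℝ) - A ω ≤ 1 by linarith [hA0 ω]) h1e1pos
      (fun x => show (1:ℝ) - e1 x ≤ 1 by linarith [(hover x).1]) hT0mm hT0m0 hfin0m (hUc _ hT0mm hT0m0 hU0m) hTr0m (measurable_const.sub hπmeas).ennreal_ofReal
      (fun x => ENNReal.ofReal_le_one.2 (by show 1 - π x ≤ 1; linarith [hπ0 x]))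
  have EL1p : ∫⁻ ω, ENNReal.ofReal (π (X ω) * ((1 - G ω) * max (Y1 ω) 0)) ∂ℙ
      = ∫⁻ ω, ENNReal.ofReal (π (X ω)) * ENNReal.ofReal ((1 - G ω) * max (Y1 ω) 0) ∂ℙ :=
    lintegral_congr fun ω => ENNReal.ofReal_mul (hπ0 (X ω))
  have ER1p : ∫⁻ ω, ENNReal.ofReal ((π (X ω) * ((1 - s (X ω)) / (s (X ω) * e1 (X ω)))) * ((G ω * A ω) * max (Y1 ω) 0)) ∂ℙ
      = ∫⁻ ω, (ENNReal.ofReal (π (X ω)) * ENNReal.ofReal ((1 - s (X ω)) / (s (X ω) * e1 (X ω))))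
          * ENNReal.ofReal ((G ω * A ω) * max (Y1 ω) 0) ∂ℙ :=
    lintegral_congr fun ω => by
      rw [ENNReal.ofReal_mul (mul_nonneg (hπ0 (X ω)) (hw1nn (X ω))), ENNReal.ofReal_mul (hπ0 (X ω))]
  obtain ⟨iL1p, eL1p⟩ := int_toReal ℙ (f := fun ω => π (X ω) * ((1 - G ω) * max (Y1 ω) 0))
    (mπX.mul (mGc.mul hT1pm))
    (fun ω => mul_nonneg (hπ0 (X ω)) (mul_nonneg (hGc0 ω) (hT1p0 ω)))
    (by rw [EL1p]; exact P1p.2)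
  obtain ⟨iR1p, eR1p⟩ := int_toReal ℙ (f := fun ω => (π (X ω) * ((1 - s (X ω)) / (s (X ω) * e1 (X ω)))) * ((G ω * A ω) * max (Y1 ω) 0))
    ((mπX.mul mw1X).mul (mGA.mul hT1pm))
    (fun ω => mul_nonneg (mul_nonneg (hπ0 (X ω)) (hw1nn (X ω)))
      (mul_nonneg (mul_nonneg (hG0 ω) (hA0 ω)) (hT1p0 ω)))
    (by rw [ER1p, P1p.1]; exact P1p.2)
  have eq1p : ∫ ω, (π (X ω) * ((1 - s (X ω)) / (s (X ω) * e1 (X ω)))) * ((G ω * A ω) * max (Y1 ω) 0) ∂ℙ = ∫ ω, π (X ω) * ((1 - G ω) * max (Y1 ω) 0) ∂ℙ := by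
    rw [eR1p, eL1p, ER1p, EL1p, P1p.1]
  have EL1m : ∫⁻ ω, ENNReal.ofReal (π (X ω) * ((1 - G ω) * max (-Y1 ω) 0)) ∂ℙ
      = ∫⁻ ω, ENNReal.ofReal (π (X ω)) * ENNReal.ofReal ((1 - G ω) * max (-Y1 ω) 0) ∂ℙ :=
    lintegral_congr fun ω => ENNReal.ofReal_mul (hπ0 (X ω))
  have ER1m : ∫⁻ ω, ENNReal.ofReal ((π (X ω) * ((1 - s (X ω)) / (s (X ω) * e1 (X ω)))) * ((G ω * A ω) * max (-Y1 ω) 0)) ∂ℙ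
      = ∫⁻ ω, (ENNReal.ofReal (π (X ω)) * ENNReal.ofReal ((1 - s (X ω)) / (s (X ω) * e1 (X ω))))
          * ENNReal.ofReal ((G ω * A ω) * max (-Y1 ω) 0) ∂ℙ :=
    lintegral_congr fun ω => by
      rw [ENNReal.ofReal_mul (mul_nonneg (hπ0 (X ω)) (hw1nn (X ω))), ENNReal.ofReal_mul (hπ0 (X ω))]
  obtain ⟨iL1m, eL1m⟩ := int_toReal ℙ (f := fun ω => π (X ω) * ((1 - G ω) * max (-Y1 ω) 0))
    (mπX.mul (mGc.mul hT1mm))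
    (fun ω => mul_nonneg (hπ0 (X ω)) (mul_nonneg (hGc0 ω) (hT1m0 ω)))
    (by rw [EL1m]; exact P1m.2)
  obtain ⟨iR1m, eR1m⟩ := int_toReal ℙ (f := fun ω => (π (X ω) * ((1 - s (X ω)) / (s (X ω) * e1 (X ω)))) * ((G ω * A ω) * max (-Y1 ω) 0))
    ((mπX.mul mw1X).mul (mGA.mul hT1mm))
    (fun ω => mul_nonneg (mul_nonneg (hπ0 (X ω)) (hw1nn (X ω)))
      (mul_nonneg (mul_nonneg (hG0 ω) (hA0 ω)) (hT1m0 ω)))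
    (by rw [ER1m, P1m.1]; exact P1m.2)
  have eq1m : ∫ ω, (π (X ω) * ((1 - s (X ω)) / (s (X ω) * e1 (X ω)))) * ((G ω * A ω) * max (-Y1 ω) 0) ∂ℙ = ∫ ω, π (X ω) * ((1 - G ω) * max (-Y1 ω) 0) ∂ℙ := by
    rw [eR1m, eL1m, ER1m, EL1m, P1m.1]
  have EL0p : ∫⁻ ω, ENNReal.ofReal ((1 - π (X ω)) * ((1 - G ω) * max (Y0 ω) 0)) ∂ℙ
      = ∫⁻ ω, ENNReal.ofReal ((1 - π (X ω))) * ENNReal.ofReal ((1 - G ω) * max (Y0 ω) 0) ∂ℙ :=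
    lintegral_congr fun ω => ENNReal.ofReal_mul (hπc0 (X ω))
  have ER0p : ∫⁻ ω, ENNReal.ofReal (((1 - π (X ω)) * ((1 - s (X ω)) / (s (X ω) * (1 - e1 (X ω))))) * ((G ω * (1 - A ω)) * max (Y0 ω) 0)) ∂ℙ
      = ∫⁻ ω, (ENNReal.ofReal ((1 - π (X ω))) * ENNReal.ofReal ((1 - s (X ω)) / (s (X ω) * (1 - e1 (X ω)))))
          * ENNReal.ofReal ((G ω * (1 - A ω)) * max (Y0 ω) 0) ∂ℙ :=
    lintegral_congr fun ω => by
      rw [ENNReal.ofReal_mul (mul_nonneg (hπc0 (X ω)) (hw0nn (X ω))), ENNReal.ofReal_mul (hπc0 (X ω))]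
  obtain ⟨iL0p, eL0p⟩ := int_toReal ℙ (f := fun ω => (1 - π (X ω)) * ((1 - G ω) * max (Y0 ω) 0))
    (mπcX.mul (mGc.mul hT0pm))
    (fun ω => mul_nonneg (hπc0 (X ω)) (mul_nonneg (hGc0 ω) (hT0p0 ω)))
    (by rw [EL0p]; exact P0p.2)
  obtain ⟨iR0p, eR0p⟩ := int_toReal ℙ (f := fun ω => ((1 - π (X ω)) * ((1 - s (X ω)) / (s (X ω) * (1 - e1 (X ω))))) * ((G ω * (1 - A ω)) * max (Y0 ω) 0))
    ((mπcX.mul mw0X).mul (mGAc.mul hT0pm))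
    (fun ω => mul_nonneg (mul_nonneg (hπc0 (X ω)) (hw0nn (X ω)))
      (mul_nonneg (mul_nonneg (hG0 ω) (hAc0 ω)) (hT0p0 ω)))
    (by rw [ER0p, P0p.1]; exact P0p.2)
  have eq0p : ∫ ω, ((1 - π (X ω)) * ((1 - s (X ω)) / (s (X ω) * (1 - e1 (X ω))))) * ((G ω * (1 - A ω)) * max (Y0 ω) 0) ∂ℙ = ∫ ω, (1 - π (X ω)) * ((1 - G ω) * max (Y0 ω) 0) ∂ℙ := by
    rw [eR0p, eL0p, ER0p, EL0p, P0p.1]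
  have EL0m : ∫⁻ ω, ENNReal.ofReal ((1 - π (X ω)) * ((1 - G ω) * max (-Y0 ω) 0)) ∂ℙ
      = ∫⁻ ω, ENNReal.ofReal ((1 - π (X ω))) * ENNReal.ofReal ((1 - G ω) * max (-Y0 ω) 0) ∂ℙ :=
    lintegral_congr fun ω => ENNReal.ofReal_mul (hπc0 (X ω))
  have ER0m : ∫⁻ ω, ENNReal.ofReal (((1 - π (X ω)) * ((1 - s (X ω)) / (s (X ω) * (1 - e1 (X ω))))) * ((G ω * (1 - A ω)) * max (-Y0 ω) 0)) ∂ℙ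
      = ∫⁻ ω, (ENNReal.ofReal ((1 - π (X ω))) * ENNReal.ofReal ((1 - s (X ω)) / (s (X ω) * (1 - e1 (X ω)))))
          * ENNReal.ofReal ((G ω * (1 - A ω)) * max (-Y0 ω) 0) ∂ℙ :=
    lintegral_congr fun ω => by
      rw [ENNReal.ofReal_mul (mul_nonneg (hπc0 (X ω)) (hw0nn (X ω))), ENNReal.ofReal_mul (hπc0 (X ω))]
  obtain ⟨iL0m, eL0m⟩ := int_toReal ℙ (f := fun ω => (1 - π (X ω)) * ((1 - G ω) * max (-Y0 ω) 0))
    (mπcX.mul (mGc.mul hT0mm))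
    (fun ω => mul_nonneg (hπc0 (X ω)) (mul_nonneg (hGc0 ω) (hT0m0 ω)))
    (by rw [EL0m]; exact P0m.2)
  obtain ⟨iR0m, eR0m⟩ := int_toReal ℙ (f := fun ω => ((1 - π (X ω)) * ((1 - s (X ω)) / (s (X ω) * (1 - e1 (X ω))))) * ((G ω * (1 - A ω)) * max (-Y0 ω) 0))
    ((mπcX.mul mw0X).mul (mGAc.mul hT0mm))
    (fun ω => mul_nonneg (mul_nonneg (hπc0 (X ω)) (hw0nn (X ω)))
      (mul_nonneg (mul_nonneg (hG0 ω) (hAc0 ω)) (hT0m0 ω)))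
    (by rw [ER0m, P0m.1]; exact P0m.2)
  have eq0m : ∫ ω, ((1 - π (X ω)) * ((1 - s (X ω)) / (s (X ω) * (1 - e1 (X ω))))) * ((G ω * (1 - A ω)) * max (-Y0 ω) 0) ∂ℙ = ∫ ω, (1 - π (X ω)) * ((1 - G ω) * max (-Y0 ω) 0) ∂ℙ := by
    rw [eR0m, eL0m, ER0m, EL0m, P0m.1]
  -- pointwise identities
  have hLpt : ∀ ω, (1 - G ω) * (π (X ω) * Y1 ω + (1 - π (X ω)) * Y0 ω)
      = (π (X ω) * ((1 - G ω) * max (Y1 ω) 0) - π (X ω) * ((1 - G ω) * max (-Y1 ω) 0)) + ((1 - π (X ω)) * ((1 - G ω) * max (Y0 ω) 0) - (1 - π (X ω)) * ((1 - G ω) * max (-Y0 ω) 0)) := fun ω => by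
    linear_combination (-((1 - G ω) * π (X ω))) * hmax (Y1 ω)
      + (-((1 - G ω) * (1 - π (X ω)))) * hmax (Y0 ω)
  have hRpt : ∀ ω, (G ω / (1 - q)) * ((1 - s (X ω)) / s (X ω))
        * (π (X ω) * A ω * Y ω / e1 (X ω)
            + (1 - π (X ω)) * (1 - A ω) * Y ω / (1 - e1 (X ω)))
      = (1 / (1 - q)) * (((π (X ω) * ((1 - s (X ω)) / (s (X ω) * e1 (X ω)))) * ((G ω * A ω) * max (Y1 ω) 0) - (π (X ω) * ((1 - s (X ω)) / (s (X ω) * e1 (X ω)))) * ((G ω * A ω) * max (-Y1 ω) 0)) + (((1 - π (X ω)) * ((1 - s (X ω)) / (s (X ω) * (1 - e1 (X ω))))) * ((G ω * (1 - A ω)) * max (Y0 ω) 0) - ((1 - π (X ω)) * ((1 - s (X ω)) / (s (X ω) * (1 - e1 (X ω))))) * ((G ω * (1 - A ω)) * max (-Y0 ω) 0))) := fun ω => by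
    have h1 : (π (X ω) * ((1 - s (X ω)) / (s (X ω) * e1 (X ω)))) * ((G ω * A ω) * max (Y1 ω) 0) - (π (X ω) * ((1 - s (X ω)) / (s (X ω) * e1 (X ω)))) * ((G ω * A ω) * max (-Y1 ω) 0)
        = (π (X ω) * ((1 - s (X ω)) / (s (X ω) * e1 (X ω)))) * ((G ω * A ω) * Y1 ω) := by
      linear_combination ((π (X ω) * ((1 - s (X ω)) / (s (X ω) * e1 (X ω)))) * (G ω * A ω)) * hmax (Y1 ω)
    have h0 : ((1 - π (X ω)) * ((1 - s (X ω)) / (s (X ω) * (1 - e1 (X ω))))) * ((G ω * (1 - A ω)) * max (Y0 ω) 0) - ((1 - π (X ω)) * ((1 - s (X ω)) / (s (X ω) * (1 - e1 (X ω))))) * ((G ω * (1 - A ω)) * max (-Y0 ω) 0)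
        = ((1 - π (X ω)) * ((1 - s (X ω)) / (s (X ω) * (1 - e1 (X ω))))) * ((G ω * (1 - A ω)) * Y0 ω) := by
      linear_combination (((1 - π (X ω)) * ((1 - s (X ω)) / (s (X ω) * (1 - e1 (X ω))))) * (G ω * (1 - A ω))) * hmax (Y0 ω)
    rw [h1, h0, hYdef ω]
    rcases hAbin ω with h | h <;> rw [h] <;>
      field_simp [hqne, hsne (X ω), he1ne (X ω), h1e1ne (X ω)] <;> ring
  have iLd1 : Integrable (fun ω => π (X ω) * ((1 - G ω) * max (Y1 ω) 0) - π (X ω) * ((1 - G ω) * max (-Y1 ω) 0)) ℙ := iL1p.sub iL1m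
  have iLd0 : Integrable (fun ω => (1 - π (X ω)) * ((1 - G ω) * max (Y0 ω) 0) - (1 - π (X ω)) * ((1 - G ω) * max (-Y0 ω) 0)) ℙ := iL0p.sub iL0m
  have iRd1 : Integrable (fun ω => (π (X ω) * ((1 - s (X ω)) / (s (X ω) * e1 (X ω)))) * ((G ω * A ω) * max (Y1 ω) 0) - (π (X ω) * ((1 - s (X ω)) / (s (X ω) * e1 (X ω)))) * ((G ω * A ω) * max (-Y1 ω) 0)) ℙ := iR1p.sub iR1m
  have iRd0 : Integrable (fun ω => ((1 - π (X ω)) * ((1 - s (X ω)) / (s (X ω) * (1 - e1 (X ω))))) * ((G ω * (1 - A ω)) * max (Y0 ω) 0) - ((1 - π (X ω)) * ((1 - s (X ω)) / (s (X ω) * (1 - e1 (X ω))))) * ((G ω * (1 - A ω)) * max (-Y0 ω) 0)) ℙ := iR0p.sub iR0m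
  calc (1 / (1 - q)) * ∫ ω, (1 - G ω) * (π (X ω) * Y1 ω + (1 - π (X ω)) * Y0 ω) ∂ℙ
      = (1 / (1 - q)) * ∫ ω, ((π (X ω) * ((1 - G ω) * max (Y1 ω) 0) - π (X ω) * ((1 - G ω) * max (-Y1 ω) 0)) + ((1 - π (X ω)) * ((1 - G ω) * max (Y0 ω) 0) - (1 - π (X ω)) * ((1 - G ω) * max (-Y0 ω) 0))) ∂ℙ := by
        rw [integral_congr_ae (ae_of_all _ hLpt)]
    _ = (1 / (1 - q)) * ((∫ ω, π (X ω) * ((1 - G ω) * max (Y1 ω) 0) ∂ℙ - ∫ ω, π (X ω) * ((1 - G ω) * max (-Y1 ω) 0) ∂ℙ)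
          + (∫ ω, (1 - π (X ω)) * ((1 - G ω) * max (Y0 ω) 0) ∂ℙ - ∫ ω, (1 - π (X ω)) * ((1 - G ω) * max (-Y0 ω) 0) ∂ℙ)) := by
        rw [integral_add iLd1 iLd0,
          integral_sub iL1p iL1m, integral_sub iL0p iL0m]
    _ = (1 / (1 - q)) * ((∫ ω, (π (X ω) * ((1 - s (X ω)) / (s (X ω) * e1 (X ω)))) * ((G ω * A ω) * max (Y1 ω) 0) ∂ℙ - ∫ ω, (π (X ω) * ((1 - s (X ω)) / (s (X ω) * e1 (X ω)))) * ((G ω * A ω) * max (-Y1 ω) 0) ∂ℙ)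
          + (∫ ω, ((1 - π (X ω)) * ((1 - s (X ω)) / (s (X ω) * (1 - e1 (X ω))))) * ((G ω * (1 - A ω)) * max (Y0 ω) 0) ∂ℙ - ∫ ω, ((1 - π (X ω)) * ((1 - s (X ω)) / (s (X ω) * (1 - e1 (X ω))))) * ((G ω * (1 - A ω)) * max (-Y0 ω) 0) ∂ℙ)) := by
        rw [eq1p, eq1m, eq0p, eq0m]
    _ = (1 / (1 - q)) * ∫ ω, (((π (X ω) * ((1 - s (X ω)) / (s (X ω) * e1 (X ω)))) * ((G ω * A ω) * max (Y1 ω) 0) - (π (X ω) * ((1 - s (X ω)) / (s (X ω) * e1 (X ω)))) * ((G ω * A ω) * max (-Y1 ω) 0)) + (((1 - π (X ω)) * ((1 - s (X ω)) / (s (X ω) * (1 - e1 (X ω))))) * ((G ω * (1 - A ω)) * max (Y0 ω) 0) - ((1 - π (X ω)) * ((1 - s (X ω)) / (s (X ω) * (1 - e1 (X ω))))) * ((G ω * (1 - A ω)) * max (-Y0 ω) 0))) ∂ℙ := by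
        rw [integral_add iRd1 iRd0,
          integral_sub iR1p iR1m, integral_sub iR0p iR0m]
    _ = ∫ ω, (1 / (1 - q)) * (((π (X ω) * ((1 - s (X ω)) / (s (X ω) * e1 (X ω)))) * ((G ω * A ω) * max (Y1 ω) 0) - (π (X ω) * ((1 - s (X ω)) / (s (X ω) * e1 (X ω)))) * ((G ω * A ω) * max (-Y1 ω) 0)) + (((1 - π (X ω)) * ((1 - s (X ω)) / (s (X ω) * (1 - e1 (X ω))))) * ((G ω * (1 - A ω)) * max (Y0 ω) 0) - ((1 - π (X ω)) * ((1 - s (X ω)) / (s (X ω) * (1 - e1 (X ω))))) * ((G ω * (1 - A ω)) * max (-Y0 ω) 0))) ∂ℙ :=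
        (integral_const_mul _ _).symm
    _ = ∫ ω, (G ω / (1 - q)) * ((1 - s (X ω)) / s (X ω))
          * (π (X ω) * A ω * Y ω / e1 (X ω)
              + (1 - π (X ω)) * (1 - A ω) * Y ω / (1 - e1 (X ω))) ∂ℙ :=
        (integral_congr_ae (ae_of_all _ hRpt)).symm
end
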